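/- arXiv:2204.13144 — 6 statements merged into one kernel-verified Lean document; each statement's English description precedes it below -/
import Mathlib

section
/- Suppose q satisfies the latent-level treatment bridge equation E[q(Z,A,X) | σ(A,U,X)] = 1/P(A|σ(U,X)) a.s. and proxy independence holds. Then for every a ∈ {0,1} and every t ∈ ℝ, P(T(a) > t) = E[ 1{A=a} · q(Z,a,X) · 1{T>t} ]. -/
open MeasureTheory ProbabilityTheory

/-- Conditional independence of `F` and `G` given the σ-algebra `m`: all conditional
covariances of bounded measurable functionals of the two groups vanish. -/
def CondIndepGiven {Ω α β : Type*} [MeasurableSpace Ω] [MeasurableSpace α] [MeasurableSpace β]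
    (P : Measure Ω) (m : MeasurableSpace Ω) (F : Ω → α) (G : Ω → β) : Prop :=
  ∀ (f : α → ℝ) (g : β → ℝ), Measurable f → Measurable g →
    (∃ C, ∀ x, |f x| ≤ C) → (∃ C, ∀ x, |g x| ≤ C) →
    (P[fun ω => f (F ω) * g (G ω)|m]) =ᵐ[P]
      fun ω => (P[fun ω' => f (F ω')|m]) ω * (P[fun ω' => g (G ω')|m]) ω

section PipwAuxSection
open scoped NNReal ENNReal Classical

namespace PipwAux

lemma integrable_of_ae_bdd {Ω : Type*} [MeasurableSpace Ω] {P : Measure Ω}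
    [IsFiniteMeasure P] {f : Ω → ℝ} (hf : AEStronglyMeasurable f P)
    {C : ℝ} (hC : ∀ᵐ ω ∂P, |f ω| ≤ C) : Integrable f P :=
  Integrable.mono' (integrable_const C) hf
    (hC.mono fun ω h => by simpa [Real.norm_eq_abs] using h)

lemma pullout_key {Ω α β γ : Type*} {m m0 : MeasurableSpace Ω}
    [MeasurableSpace α] [MeasurableSpace β] [MeasurableSpace γ]
    (hm : m ≤ m0) (P : Measure Ω) [IsProbabilityMeasure P]
    {F : Ω → α} {G : Ω → β} {X : Ω → γ}
    (hF : Measurable F) (hG : Measurable G) (hXm : Measurable[m] X)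
    (hCI : CondIndepGiven P m F G)
    (f : α × γ → ℝ) (hf : Measurable f) (Cf : ℝ) (hfC : ∀ x, |f x| ≤ Cf)
    (g : β → ℝ) (hg : Measurable g) (hg0 : ∀ x, 0 ≤ g x) (hg1 : ∀ x, g x ≤ 1) :
    ∫ ω, f (F ω, X ω) * g (G ω) ∂P
      = ∫ ω, f (F ω, X ω) * (P[fun ω' => g (G ω')|m]) ω ∂P := by
  haveI : SigmaFinite (P.trim hm) := inferInstance
  set h : Ω → ℝ := P[fun ω' => g (G ω')|m] with hh_def
  have hX : Measurable X := hXm.mono hm le_rfl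
  have hφ : Measurable (fun ω => (F ω, X ω)) := hF.prodMk hX
  have hgG : Measurable (fun ω => g (G ω)) := hg.comp hG
  have hh_sm : StronglyMeasurable[m] h := stronglyMeasurable_condExp
  have hh_meas : Measurable h := (hh_sm.mono hm).measurable
  have hgG01 : ∀ᵐ ω ∂P, 0 ≤ g (G ω) ∧ g (G ω) ≤ 1 :=
    Filter.Eventually.of_forall fun ω => ⟨hg0 _, hg1 _⟩
  have hh01 : ∀ᵐ ω ∂P, 0 ≤ h ω ∧ h ω ≤ 1 := by
    have h0 : 0 ≤ᵐ[P] h := condExp_nonneg (Filter.Eventually.of_forall fun ω => hg0 _)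
    have h1 : ∀ᵐ ω ∂P, |h ω| ≤ ((1 : ℝ≥0) : ℝ) := by
      refine ae_bdd_condExp_of_ae_bdd (Filter.Eventually.of_forall fun ω => ?_)
      refine abs_le.2 ⟨?_, ?_⟩ <;> push_cast <;> linarith [hg0 (G ω), hg1 (G ω)]
    filter_upwards [h0, h1] with ω h0 h1
    exact ⟨h0, le_trans (abs_le.1 h1).2 (by norm_num)⟩
  -- measure computation
  have meascalc : ∀ (w : Ω → ℝ), Measurable w → (∀ᵐ ω ∂P, 0 ≤ w ω ∧ w ω ≤ 1) →
      ∀ B : Set (α × γ), MeasurableSet B →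
      (Measure.map (fun ω => (F ω, X ω)) (P.withDensity fun ω => ((w ω).toNNReal : ℝ≥0∞))) B
        = ENNReal.ofReal (∫ ω, ((fun ω => (F ω, X ω)) ⁻¹' B).indicator w ω ∂P) := by
    intro w hw hw01 B hB
    rw [Measure.map_apply hφ hB, withDensity_apply _ (hφ hB),
      ← lintegral_indicator (hφ hB) _]
    rw [ofReal_integral_eq_lintegral_ofReal]
    · congr 1
      funext ω
      rw [Set.indicator_apply, Set.indicator_apply]
      split_ifs <;> simp [ENNReal.ofReal]
    · refine integrable_of_ae_bdd ((hw.indicator (hφ hB)).aestronglyMeasurable) (C := 1) ?_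
      filter_upwards [hw01] with ω hw
      rw [Set.indicator_apply]
      split_ifs
      · exact abs_le.2 ⟨by linarith [hw.1], hw.2⟩
      · simp
    · filter_upwards [hw01] with ω hw
      rw [Pi.zero_apply, Set.indicator_apply]
      split_ifs
      · exact hw.1
      · exact le_rfl

  -- rectangle integral identity
  have hrect : ∀ (s : Set α) (u : Set γ), MeasurableSet s → MeasurableSet u →
      ∫ ω, ((fun ω => (F ω, X ω)) ⁻¹' (s ×ˢ u)).indicator (fun ω => g (G ω)) ω ∂P
        = ∫ ω, ((fun ω => (F ω, X ω)) ⁻¹' (s ×ˢ u)).indicator h ω ∂P := by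
    intro s u hs hu
    have hind : ∀ (w : Ω → ℝ) (ω : Ω), ((fun ω => (F ω, X ω)) ⁻¹' (s ×ˢ u)).indicator w ω
        = s.indicator (fun _ => (1:ℝ)) (F ω) * (u.indicator (fun _ => (1:ℝ)) (X ω) * w ω) := by
      intro w ω
      rw [Set.indicator_apply, Set.indicator_apply, Set.indicator_apply]
      by_cases h1 : F ω ∈ s <;> by_cases h2 : X ω ∈ u <;>
        simp [Set.mem_prod, h1, h2]
    have hfs : Measurable (fun ω => s.indicator (fun _ => (1:ℝ)) (F ω)) :=
      (measurable_const.indicator hs).comp hF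
    have hcm : Measurable[m] (fun ω => u.indicator (fun _ => (1:ℝ)) (X ω)) :=
      (measurable_const.indicator hu).comp hXm
    have hc_sm : StronglyMeasurable[m] (fun ω => u.indicator (fun _ => (1:ℝ)) (X ω)) :=
      hcm.stronglyMeasurable
    have hc : Measurable (fun ω => u.indicator (fun _ => (1:ℝ)) (X ω)) := hcm.mono hm le_rfl
    have indbF : ∀ x : α, |s.indicator (fun _ => (1:ℝ)) x| ≤ 1 := by
      intro x; rw [Set.indicator_apply]; split_ifs <;> simp
    have indbX : ∀ x : γ, |u.indicator (fun _ => (1:ℝ)) x| ≤ 1 := by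
      intro x; rw [Set.indicator_apply]; split_ifs <;> simp
    -- integrabilities
    have hInt_fs : Integrable (fun ω => s.indicator (fun _ => (1:ℝ)) (F ω)) P :=
      integrable_of_ae_bdd hfs.aestronglyMeasurable
        (Filter.Eventually.of_forall fun ω => indbF _)
    have hInt_fsgG : Integrable (fun ω => s.indicator (fun _ => (1:ℝ)) (F ω) * g (G ω)) P := by
      refine integrable_of_ae_bdd (hfs.mul hgG).aestronglyMeasurable (C := 1)
        (Filter.Eventually.of_forall fun ω => ?_)
      rw [abs_mul]
      calc |s.indicator (fun _ => (1:ℝ)) (F ω)| * |g (G ω)| ≤ 1 * 1 := by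
            refine mul_le_mul (indbF _) (abs_le.2 ⟨by linarith [hg0 (G ω)], hg1 _⟩)
              (abs_nonneg _) zero_le_one
        _ = 1 := by norm_num
    have hInt_c_fsgG : Integrable ((fun ω => u.indicator (fun _ => (1:ℝ)) (X ω)) *
        fun ω => s.indicator (fun _ => (1:ℝ)) (F ω) * g (G ω)) P := by
      refine integrable_of_ae_bdd (hc.mul (hfs.mul hgG)).aestronglyMeasurable (C := 1)
        (Filter.Eventually.of_forall fun ω => ?_)
      rw [Pi.mul_apply, abs_mul]
      calc _ ≤ 1 * 1 := by
            refine mul_le_mul (indbX _) ?_ (abs_nonneg _) zero_le_one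
            rw [abs_mul]
            calc |s.indicator (fun _ => (1:ℝ)) (F ω)| * |g (G ω)| ≤ 1 * 1 := by
                  refine mul_le_mul (indbF _) (abs_le.2 ⟨by linarith [hg0 (G ω)], hg1 _⟩)
                    (abs_nonneg _) zero_le_one
              _ = 1 := by norm_num
        _ = (1:ℝ) := by norm_num
    have hInt_ch_fs : Integrable (((fun ω => u.indicator (fun _ => (1:ℝ)) (X ω)) * h) *
        fun ω => s.indicator (fun _ => (1:ℝ)) (F ω)) P := by
      refine integrable_of_ae_bdd ((hc.mul hh_meas).mul hfs).aestronglyMeasurable (C := 1) ?_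
      filter_upwards [hh01] with ω hh01
      rw [Pi.mul_apply, Pi.mul_apply, abs_mul, abs_mul]
      calc _ ≤ 1 * 1 * 1 := by
            refine mul_le_mul (mul_le_mul (indbX _)
              (abs_le.2 ⟨by linarith [hh01.1], hh01.2⟩) (abs_nonneg _) zero_le_one)
              (indbF _) (abs_nonneg _) (by positivity)
        _ = (1:ℝ) := by norm_num
    -- the chain
    calc ∫ ω, ((fun ω => (F ω, X ω)) ⁻¹' (s ×ˢ u)).indicator (fun ω => g (G ω)) ω ∂P
        = ∫ ω, ((fun ω => u.indicator (fun _ => (1:ℝ)) (X ω)) *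
            fun ω => s.indicator (fun _ => (1:ℝ)) (F ω) * g (G ω)) ω ∂P := by
          refine integral_congr_ae (Filter.Eventually.of_forall fun ω => ?_)
          rw [hind]; simp [mul_comm, mul_assoc, mul_left_comm]
      _ = ∫ ω, (P[(fun ω => u.indicator (fun _ => (1:ℝ)) (X ω)) *
            fun ω => s.indicator (fun _ => (1:ℝ)) (F ω) * g (G ω)|m]) ω ∂P :=
          (integral_condExp hm).symm
      _ = ∫ ω, ((fun ω => u.indicator (fun _ => (1:ℝ)) (X ω)) *
            P[fun ω => s.indicator (fun _ => (1:ℝ)) (F ω) * g (G ω)|m]) ω ∂P :=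
          integral_congr_ae (condExp_mul_of_stronglyMeasurable_left hc_sm hInt_c_fsgG hInt_fsgG)
      _ = ∫ ω, u.indicator (fun _ => (1:ℝ)) (X ω) *
            ((P[fun ω' => s.indicator (fun _ => (1:ℝ)) (F ω')|m]) ω * h ω) ∂P := by
          refine integral_congr_ae ?_
          have := hCI (s.indicator (fun _ => (1:ℝ))) g (measurable_const.indicator hs) hg
            ⟨1, fun x => indbF _⟩
            ⟨1, fun x => abs_le.2 ⟨by linarith [hg0 x], hg1 x⟩⟩
          filter_upwards [this] with ω hω
          rw [Pi.mul_apply, hω]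
      _ = ∫ ω, (((fun ω => u.indicator (fun _ => (1:ℝ)) (X ω)) * h) *
            P[fun ω' => s.indicator (fun _ => (1:ℝ)) (F ω')|m]) ω ∂P := by
          refine integral_congr_ae (Filter.Eventually.of_forall fun ω => ?_)
          simp only [Pi.mul_apply]; ring
      _ = ∫ ω, (P[((fun ω => u.indicator (fun _ => (1:ℝ)) (X ω)) * h) *
            fun ω' => s.indicator (fun _ => (1:ℝ)) (F ω')|m]) ω ∂P :=
          (integral_congr_ae
            (condExp_mul_of_stronglyMeasurable_left (hc_sm.mul hh_sm) hInt_ch_fs hInt_fs)).symm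
      _ = ∫ ω, (((fun ω => u.indicator (fun _ => (1:ℝ)) (X ω)) * h) *
            fun ω' => s.indicator (fun _ => (1:ℝ)) (F ω')) ω ∂P := integral_condExp hm
      _ = ∫ ω, ((fun ω => (F ω, X ω)) ⁻¹' (s ×ˢ u)).indicator h ω ∂P := by
          refine integral_congr_ae (Filter.Eventually.of_forall fun ω => ?_)
          rw [hind]; simp only [Pi.mul_apply]; ring
  -- the two pushforward measures agree
  haveI iw1 : IsFiniteMeasure (P.withDensity fun ω => (((g (G ω)).toNNReal : ℝ≥0) : ℝ≥0∞)) := by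
    refine isFiniteMeasure_withDensity ?_
    have h1 : ∫⁻ ω, (((g (G ω)).toNNReal : ℝ≥0) : ℝ≥0∞) ∂P ≤ ∫⁻ _, 1 ∂P :=
      lintegral_mono (fun ω => ENNReal.ofReal_le_one.2 (hg1 _))
    refine ne_top_of_le_ne_top ?_ h1
    simp [lintegral_one]
  haveI iw2 : IsFiniteMeasure (P.withDensity fun ω => (((h ω).toNNReal : ℝ≥0) : ℝ≥0∞)) := by
    refine isFiniteMeasure_withDensity ?_
    have h1 : ∫⁻ ω, (((h ω).toNNReal : ℝ≥0) : ℝ≥0∞) ∂P ≤ ∫⁻ _, 1 ∂P := by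
      refine lintegral_mono_ae ?_
      filter_upwards [hh01] with ω hh01
      exact ENNReal.ofReal_le_one.2 hh01.2
    refine ne_top_of_le_ne_top ?_ h1
    simp [lintegral_one]
  haveI im1 : IsFiniteMeasure (Measure.map (fun ω => (F ω, X ω))
      (P.withDensity fun ω => (((g (G ω)).toNNReal : ℝ≥0) : ℝ≥0∞))) :=
    Measure.isFiniteMeasure_map _ _
  have hνeq : Measure.map (fun ω => (F ω, X ω))
        (P.withDensity fun ω => (((g (G ω)).toNNReal : ℝ≥0) : ℝ≥0∞))
      = Measure.map (fun ω => (F ω, X ω))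
        (P.withDensity fun ω => (((h ω).toNNReal : ℝ≥0) : ℝ≥0∞)) := by
    refine ext_of_generate_finite _ generateFrom_prod.symm isPiSystem_prod ?_ ?_
    · rintro B ⟨s, hs, u, hu, rfl⟩
      rw [meascalc _ hgG hgG01 _ ((hs : MeasurableSet s).prod hu),
        meascalc _ hh_meas hh01 _ ((hs : MeasurableSet s).prod hu)]
      exact congrArg _ (hrect s u hs hu)
    · rw [← Set.univ_prod_univ,
        meascalc _ hgG hgG01 _ (MeasurableSet.univ.prod MeasurableSet.univ),
        meascalc _ hh_meas hh01 _ (MeasurableSet.univ.prod MeasurableSet.univ)]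
      exact congrArg _ (hrect _ _ MeasurableSet.univ MeasurableSet.univ)
  -- convert back to integrals
  have conv : ∀ (w : Ω → ℝ), Measurable w → (∀ᵐ ω ∂P, 0 ≤ w ω ∧ w ω ≤ 1) →
      ∫ p, f p ∂(Measure.map (fun ω => (F ω, X ω))
          (P.withDensity fun ω => (((w ω).toNNReal : ℝ≥0) : ℝ≥0∞)))
        = ∫ ω, f (F ω, X ω) * w ω ∂P := by
    intro w hw hw01
    rw [integral_map hφ.aemeasurable hf.aestronglyMeasurable,
      integral_withDensity_eq_integral_smul hw.real_toNNReal (fun ω => f (F ω, X ω))]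
    refine integral_congr_ae ?_
    filter_upwards [hw01] with ω hw01
    rw [NNReal.smul_def, smul_eq_mul, Real.coe_toNNReal _ hw01.1, mul_comm]
  calc ∫ ω, f (F ω, X ω) * g (G ω) ∂P
      = ∫ p, f p ∂(Measure.map (fun ω => (F ω, X ω))
          (P.withDensity fun ω => (((g (G ω)).toNNReal : ℝ≥0) : ℝ≥0∞))) :=
        (conv _ hgG hgG01).symm
    _ = ∫ p, f p ∂(Measure.map (fun ω => (F ω, X ω))
          (P.withDensity fun ω => (((h ω).toNNReal : ℝ≥0) : ℝ≥0∞))) := by rw [hνeq]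
    _ = ∫ ω, f (F ω, X ω) * h ω ∂P := conv _ hh_meas hh01

end PipwAux


lemma final_step {Ω : Type*} {m n m0 : MeasurableSpace Ω} (hm : m ≤ m0) (hn : n ≤ m0)
    (hmn : m ≤ n) (P : Measure Ω) [IsProbabilityMeasure P]
    (A : Ω → ℝ) (hA : Measurable A) (hAn : Measurable[n] A) (hA01 : ∀ ω, A ω = 0 ∨ A ω = 1)
    (a : ℝ) (ha : a = 0 ∨ a = 1)
    (π : Ω → ℝ) (hπver : π =ᵐ[P] P[A|m]) (hπpos : ∀ᵐ ω ∂P, 0 < π ω ∧ π ω < 1)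
    (Q : Ω → ℝ) (hQ : Measurable Q) (C : ℝ) (hC0 : 0 ≤ C) (hQC : ∀ ω, |Q ω| ≤ C)
    (hbridge : (P[Q|n]) =ᵐ[P] fun ω => (A ω * π ω + (1 - A ω) * (1 - π ω))⁻¹)
    (G : Ω → ℝ) (hGm : Measurable G) (hG0 : ∀ ω, 0 ≤ G ω) (hG1 : ∀ ω, G ω ≤ 1)
    (qa : Ω → ℝ) (hqa : Measurable qa) (hqaC : ∀ ω, |qa ω| ≤ C)
    (hqaQ : ∀ ω, A ω = a → qa ω = Q ω) :
    ∫ ω, ((if A ω = a then (1:ℝ) else 0) * qa ω) * (P[G|m]) ω ∂P = ∫ ω, G ω ∂P := by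
  haveI : SigmaFinite (P.trim hm) := inferInstance
  haveI : SigmaFinite (P.trim hn) := inferInstance
  set h : Ω → ℝ := P[G|m] with hh_def
  have hh_sm : StronglyMeasurable[m] h := stronglyMeasurable_condExp
  have hh_meas : Measurable[m0] h := (hh_sm.mono hm).measurable
  have hh01 : ∀ᵐ ω ∂P, 0 ≤ h ω ∧ h ω ≤ 1 := by
    have h0 : 0 ≤ᵐ[P] h := condExp_nonneg (Filter.Eventually.of_forall hG0)
    have h1 : ∀ᵐ ω ∂P, |h ω| ≤ ((1 : ℝ≥0) : ℝ) := by
      refine ae_bdd_condExp_of_ae_bdd (Filter.Eventually.of_forall fun ω => ?_)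
      refine abs_le.2 ⟨?_, ?_⟩ <;> push_cast <;> linarith [hG0 ω, hG1 ω]
    filter_upwards [h0, h1] with ω h0 h1
    exact ⟨h0, le_trans (abs_le.1 h1).2 (by norm_num)⟩
  have hInt_G : Integrable G P := PipwAux.integrable_of_ae_bdd hGm.aestronglyMeasurable
    (Filter.Eventually.of_forall fun ω => abs_le.2 ⟨by linarith [hG0 ω], hG1 ω⟩)
  have hInt_A : Integrable A P := by
    refine PipwAux.integrable_of_ae_bdd hA.aestronglyMeasurable (C := 1)
      (Filter.Eventually.of_forall fun ω => ?_)
    rcases hA01 ω with hω | hω <;> rw [hω] <;> norm_num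
  have hρC : ∀ᵐ ω ∂P, |(A ω * π ω + (1 - A ω) * (1 - π ω))⁻¹| ≤ C := by
    have h1 : ∀ᵐ ω ∂P, |(P[Q|n]) ω| ≤ ((C.toNNReal : ℝ≥0) : ℝ) :=
      ae_bdd_condExp_of_ae_bdd (Filter.Eventually.of_forall fun ω => by
        rw [Real.coe_toNNReal _ hC0]; exact hQC ω)
    filter_upwards [h1, hbridge] with ω h1 h2
    rw [Real.coe_toNNReal _ hC0] at h1
    calc |(A ω * π ω + (1 - A ω) * (1 - π ω))⁻¹| = |(P[Q|n]) ω| := by rw [h2]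
      _ ≤ C := h1
  have hind_n : Measurable[n] (fun ω => if A ω = a then (1:ℝ) else 0) :=
    Measurable.ite (hAn (measurableSet_singleton a)) measurable_const measurable_const
  have hind : Measurable[m0] (fun ω => if A ω = a then (1:ℝ) else 0) := hind_n.mono hn le_rfl
  have hindb : ∀ ω, |if A ω = a then (1:ℝ) else 0| ≤ 1 := fun ω => by split_ifs <;> norm_num
  have hInt_ind : Integrable (fun ω => if A ω = a then (1:ℝ) else 0) P :=
    PipwAux.integrable_of_ae_bdd hind.aestronglyMeasurable
      (Filter.Eventually.of_forall hindb)
  have hInt_Q : Integrable Q P :=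
    PipwAux.integrable_of_ae_bdd hQ.aestronglyMeasurable (Filter.Eventually.of_forall hQC)
  have hk_sm : StronglyMeasurable[n] ((fun ω => if A ω = a then (1:ℝ) else 0) * h) :=
    (hind_n.stronglyMeasurable).mul (hh_sm.mono hmn)
  have hInt_kQ : Integrable (((fun ω => if A ω = a then (1:ℝ) else 0) * h) * Q) P := by
    refine PipwAux.integrable_of_ae_bdd
      (((hind.mul hh_meas).mul hQ).aestronglyMeasurable) (C := C) ?_
    filter_upwards [hh01] with ω hh
    rw [Pi.mul_apply, Pi.mul_apply, abs_mul, abs_mul]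
    calc |if A ω = a then (1:ℝ) else 0| * |h ω| * |Q ω| ≤ 1 * 1 * C := by
          refine mul_le_mul (mul_le_mul (hindb ω)
            (abs_le.2 ⟨by linarith [hh.1], hh.2⟩) (abs_nonneg _) zero_le_one)
            (hQC ω) (abs_nonneg _) (by norm_num)
      _ = C := by norm_num
  -- r = h * ρ'⁻¹ with ρ' built from the condexp version of π and the fixed a
  have hπ'm : Measurable[m] (P[A|m]) := stronglyMeasurable_condExp.measurable
  have hρ'm : Measurable[m] (fun ω => a * (P[A|m]) ω + (1 - a) * (1 - (P[A|m]) ω)) :=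
    (measurable_const.mul hπ'm).add (measurable_const.mul (measurable_const.sub hπ'm))
  have hr_m : Measurable[m]
      (fun ω => h ω * (a * (P[A|m]) ω + (1 - a) * (1 - (P[A|m]) ω))⁻¹) :=
    hh_sm.measurable.mul hρ'm.inv
  have hr_sm : StronglyMeasurable[m]
      (fun ω => h ω * (a * (P[A|m]) ω + (1 - a) * (1 - (P[A|m]) ω))⁻¹) :=
    hr_m.stronglyMeasurable
  have hr_meas : Measurable[m0]
      (fun ω => h ω * (a * (P[A|m]) ω + (1 - a) * (1 - (P[A|m]) ω))⁻¹) :=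
    hr_m.mono hm le_rfl
  have hρ'pos : ∀ᵐ ω ∂P, 0 < a * (P[A|m]) ω + (1 - a) * (1 - (P[A|m]) ω) := by
    filter_upwards [hπver, hπpos] with ω h1 h2
    rw [← h1]
    rcases ha with rfl | rfl
    · linarith [h2.1, h2.2]
    · linarith [h2.1, h2.2]
  have hbnd_r_ind : ∀ᵐ ω ∂P,
      |((fun ω => h ω * (a * (P[A|m]) ω + (1 - a) * (1 - (P[A|m]) ω))⁻¹) *
        fun ω => if A ω = a then (1:ℝ) else 0) ω| ≤ C := by
    filter_upwards [hπver, hρC, hh01] with ω h1 h2 h3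
    rw [Pi.mul_apply]
    by_cases hAa : A ω = a
    · have hEq : a * (P[A|m]) ω + (1 - a) * (1 - (P[A|m]) ω)
          = A ω * π ω + (1 - A ω) * (1 - π ω) := by rw [hAa, h1]
      rw [if_pos hAa, mul_one, hEq, abs_mul]
      calc |h ω| * |(A ω * π ω + (1 - A ω) * (1 - π ω))⁻¹| ≤ 1 * C :=
            mul_le_mul (abs_le.2 ⟨by linarith [h3.1], h3.2⟩) h2 (abs_nonneg _) zero_le_one
        _ = C := one_mul C
    · rw [if_neg hAa, mul_zero, abs_zero]; exact hC0
  have hInt_r_ind : Integrable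
      ((fun ω => h ω * (a * (P[A|m]) ω + (1 - a) * (1 - (P[A|m]) ω))⁻¹) *
        fun ω => if A ω = a then (1:ℝ) else 0) P :=
    PipwAux.integrable_of_ae_bdd (hr_meas.mul hind).aestronglyMeasurable hbnd_r_ind
  have hcondind : P[(fun ω => if A ω = a then (1:ℝ) else 0)|m]
      =ᵐ[P] fun ω => a * (P[A|m]) ω + (1 - a) * (1 - (P[A|m]) ω) := by
    rcases ha with rfl | rfl
    · have hfun : (fun ω => if A ω = (0:ℝ) then (1:ℝ) else 0) = (fun _ => (1:ℝ)) - A := by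
        funext ω; rcases hA01 ω with hω | hω <;> simp [hω, Pi.sub_apply]
      rw [hfun]
      have h1 : P[(fun _ => (1:ℝ)) - A|m] =ᵐ[P] P[fun _ => (1:ℝ)|m] - P[A|m] :=
        condExp_sub (integrable_const 1) hInt_A m
      have h2 : P[(fun _ => (1:ℝ))|m] = fun _ => (1:ℝ) := condExp_const hm 1
      filter_upwards [h1] with ω h1
      rw [h1, Pi.sub_apply, h2]
      ring
    · have hfun : (fun ω => if A ω = (1:ℝ) then (1:ℝ) else 0) = A := by
        funext ω; rcases hA01 ω with hω | hω <;> simp [hω]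
      rw [hfun]
      refine Filter.Eventually.of_forall fun ω => ?_
      ring
  -- main chain
  calc ∫ ω, ((if A ω = a then (1:ℝ) else 0) * qa ω) * h ω ∂P
      = ∫ ω, (((fun ω => if A ω = a then (1:ℝ) else 0) * h) * Q) ω ∂P := by
        refine integral_congr_ae (Filter.Eventually.of_forall fun ω => ?_)
        simp only [Pi.mul_apply]
        by_cases hAa : A ω = a
        · rw [hqaQ ω hAa]; ring
        · simp [hAa]
    _ = ∫ ω, (P[((fun ω => if A ω = a then (1:ℝ) else 0) * h) * Q|n]) ω ∂P :=
        (integral_condExp hn).symm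
    _ = ∫ ω, (((fun ω => if A ω = a then (1:ℝ) else 0) * h) * P[Q|n]) ω ∂P :=
        integral_congr_ae (condExp_mul_of_stronglyMeasurable_left hk_sm hInt_kQ hInt_Q)
    _ = ∫ ω, ((fun ω => h ω * (a * (P[A|m]) ω + (1 - a) * (1 - (P[A|m]) ω))⁻¹) *
          fun ω => if A ω = a then (1:ℝ) else 0) ω ∂P := by
        refine integral_congr_ae ?_
        filter_upwards [hbridge, hπver] with ω h1 h2
        simp only [Pi.mul_apply]
        rw [h1]
        by_cases hAa : A ω = a
        · have hEq : a * (P[A|m]) ω + (1 - a) * (1 - (P[A|m]) ω)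
              = A ω * π ω + (1 - A ω) * (1 - π ω) := by rw [hAa, h2]
          rw [hEq, if_pos hAa]
          ring
        · rw [if_neg hAa]
          ring
    _ = ∫ ω, (P[(fun ω => h ω * (a * (P[A|m]) ω + (1 - a) * (1 - (P[A|m]) ω))⁻¹) *
          fun ω => if A ω = a then (1:ℝ) else 0|m]) ω ∂P := (integral_condExp hm).symm
    _ = ∫ ω, (fun ω => h ω * (a * (P[A|m]) ω + (1 - a) * (1 - (P[A|m]) ω))⁻¹) ω *
          (P[(fun ω => if A ω = a then (1:ℝ) else 0)|m]) ω ∂P :=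
        integral_congr_ae (condExp_mul_of_stronglyMeasurable_left hr_sm hInt_r_ind hInt_ind)
    _ = ∫ ω, h ω ∂P := by
        refine integral_congr_ae ?_
        filter_upwards [hcondind, hρ'pos] with ω h1 h2
        rw [h1]
        show h ω * (a * (P[A|m]) ω + (1 - a) * (1 - (P[A|m]) ω))⁻¹ *
          (a * (P[A|m]) ω + (1 - a) * (1 - (P[A|m]) ω)) = h ω
        rw [mul_assoc, inv_mul_cancel₀ (ne_of_gt h2), mul_one]
    _ = ∫ ω, G ω ∂P := integral_condExp hm


end PipwAuxSection

/-- If `q` solves the latent-level treatment bridge equation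
`E[q(Z,A,X) | σ(A,U,X)] = 1/P(A|σ(U,X))` a.s. and proxy independence holds, then for every
`a ∈ {0,1}` and `t ∈ ℝ`, `P(T(a) > t) = E[ 1{A = a} ⬝ q(Z, a, X) ⬝ 1{T > t} ]`. -/
theorem pipw_identification_latent_bridge
    {Ω 𝓤 𝓧 𝓩 𝓦 : Type*} [MeasurableSpace Ω]
    [MeasurableSpace 𝓤] [StandardBorelSpace 𝓤] [MeasurableSpace 𝓧] [StandardBorelSpace 𝓧]
    [MeasurableSpace 𝓩] [StandardBorelSpace 𝓩] [MeasurableSpace 𝓦] [StandardBorelSpace 𝓦]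
    (P : Measure Ω) [IsProbabilityMeasure P]
    -- the random variables
    (A : Ω → ℝ) (T1 T0 : Ω → ℝ) (U : Ω → 𝓤) (X : Ω → 𝓧) (Z : Ω → 𝓩) (W : Ω → 𝓦)
    (hA : Measurable A) (hT1 : Measurable T1) (hT0 : Measurable T0)
    (hU : Measurable U) (hX : Measurable X) (hZ : Measurable Z) (hW : Measurable W)
    (hA01 : ∀ ω, A ω = 0 ∨ A ω = 1)
    -- observed outcome (consistency)
    (T : Ω → ℝ) (hT : ∀ ω, T ω = A ω * T1 ω + (1 - A ω) * T0 ω)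
    -- positivity for a version `π` of `P(A = 1 | σ(U, X))`
    (π : Ω → ℝ)
    (hπver : π =ᵐ[P] P[A|MeasurableSpace.comap (fun ω => (U ω, X ω)) inferInstance])
    (hπpos : ∀ᵐ ω ∂P, 0 < π ω ∧ π ω < 1)
    -- `q` is a bounded measurable function of `(Z, A, X)`
    (q : 𝓩 × ℝ × 𝓧 → ℝ) (hq : Measurable q) (hqbdd : ∃ C, ∀ x, |q x| ≤ C)
    -- latent-level treatment bridge equation: `E[q(Z,A,X) | σ(A,U,X)] = 1/P(A|σ(U,X))` a.s.
    (hbridge : (P[(fun ω => q (Z ω, A ω, X ω))|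
        MeasurableSpace.comap (fun ω => (A ω, U ω, X ω)) inferInstance])
      =ᵐ[P] fun ω => (A ω * π ω + (1 - A ω) * (1 - π ω))⁻¹)
    -- proxy independence: `(Z, A) ⟂ (W, T(a)) | σ(U, X)` for `a = 1, 0`
    (hproxy1 : CondIndepGiven P (MeasurableSpace.comap (fun ω => (U ω, X ω)) inferInstance)
      (fun ω => (Z ω, A ω)) (fun ω => (W ω, T1 ω)))
    (hproxy0 : CondIndepGiven P (MeasurableSpace.comap (fun ω => (U ω, X ω)) inferInstance)
      (fun ω => (Z ω, A ω)) (fun ω => (W ω, T0 ω))) :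
    ∀ a : ℝ, (a = 0 ∨ a = 1) → ∀ t : ℝ,
      (P {ω | t < (if a = 1 then T1 ω else T0 ω)}).toReal
        = ∫ ω, (if A ω = a then (1 : ℝ) else 0) * q (Z ω, a, X ω) *
            (if t < T ω then (1 : ℝ) else 0) ∂P := by
  intro a ha t
  obtain ⟨C₀, hC₀⟩ := hqbdd
  set C := max C₀ 0 with hCdef
  have hC : ∀ x, |q x| ≤ C := fun x => (hC₀ x).trans (le_max_left _ _)
  have hC0 : (0:ℝ) ≤ C := le_max_right _ _
  have hm : MeasurableSpace.comap (fun ω => (U ω, X ω)) inferInstance ≤ ‹MeasurableSpace Ω› :=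
    (hU.prodMk hX).comap_le
  have hn : MeasurableSpace.comap (fun ω => (A ω, U ω, X ω)) inferInstance
      ≤ ‹MeasurableSpace Ω› := (hA.prodMk (hU.prodMk hX)).comap_le
  have hmn : MeasurableSpace.comap (fun ω => (U ω, X ω)) inferInstance
      ≤ MeasurableSpace.comap (fun ω => (A ω, U ω, X ω)) inferInstance := by
    have h1 : (fun ω => (U ω, X ω))
        = (fun p : ℝ × 𝓤 × 𝓧 => p.2) ∘ (fun ω => (A ω, U ω, X ω)) := rfl
    calc MeasurableSpace.comap (fun ω => (U ω, X ω)) inferInstance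
        = MeasurableSpace.comap (fun ω => (A ω, U ω, X ω))
            (MeasurableSpace.comap (fun p : ℝ × 𝓤 × 𝓧 => p.2) inferInstance) := by
          rw [h1, MeasurableSpace.comap_comp]
      _ ≤ _ := MeasurableSpace.comap_mono measurable_snd.comap_le
  have hXm : Measurable[MeasurableSpace.comap (fun ω => (U ω, X ω)) inferInstance] X :=
    measurable_snd.comp (comap_measurable _)
  have hAn : Measurable[MeasurableSpace.comap (fun ω => (A ω, U ω, X ω)) inferInstance] A :=
    measurable_fst.comp (comap_measurable _)
  have hAbd : ∀ ω, |A ω| ≤ 1 := fun ω => by rcases hA01 ω with h | h <;> simp [h]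
  have hInt_A : Integrable A P :=
    PipwAux.integrable_of_ae_bdd hA.aestronglyMeasurable (Filter.Eventually.of_forall hAbd)
  have key : ∀ (Ta : Ω → ℝ), Measurable Ta →
      CondIndepGiven P (MeasurableSpace.comap (fun ω => (U ω, X ω)) inferInstance)
        (fun ω => (Z ω, A ω)) (fun ω => (W ω, Ta ω)) →
      (∀ ω, A ω = a → T ω = Ta ω) →
      (P {ω | t < Ta ω}).toReal
        = ∫ ω, (if A ω = a then (1:ℝ) else 0) * q (Z ω, a, X ω) *
            (if t < T ω then (1:ℝ) else 0) ∂P := by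
    intro Ta hTa hCI hTT
    set g : 𝓦 × ℝ → ℝ := fun p => if t < p.2 then 1 else 0 with hgdef
    have hg : Measurable g :=
      Measurable.ite (measurableSet_lt measurable_const measurable_snd)
        measurable_const measurable_const
    have hg0 : ∀ x, 0 ≤ g x := fun x => by rw [hgdef]; dsimp only; split_ifs <;> norm_num
    have hg1 : ∀ x, g x ≤ 1 := fun x => by rw [hgdef]; dsimp only; split_ifs <;> norm_num
    set f : (𝓩 × ℝ) × 𝓧 → ℝ :=
      fun p => (if p.1.2 = a then 1 else 0) * q (p.1.1, a, p.2) with hfdef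
    have hfmeas : Measurable f := by
      refine Measurable.mul ?_ (hq.comp (((measurable_fst.comp measurable_fst)).prodMk
        (measurable_const.prodMk measurable_snd)))
      exact Measurable.ite ((measurable_snd.comp measurable_fst) (measurableSet_singleton a))
        measurable_const measurable_const
    have hfbdd : ∀ x, |f x| ≤ C := by
      intro x; rw [hfdef]; dsimp only; split_ifs
      · simpa using hC _
      · simpa using hC0
    have step1 : ∫ ω, (if A ω = a then (1:ℝ) else 0) * q (Z ω, a, X ω) *
          (if t < T ω then (1:ℝ) else 0) ∂P
        = ∫ ω, f ((fun ω => (Z ω, A ω)) ω, X ω) * g ((fun ω => (W ω, Ta ω)) ω) ∂P := by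
      refine integral_congr_ae (Filter.Eventually.of_forall fun ω => ?_)
      rw [hfdef, hgdef]; dsimp only
      by_cases hAa : A ω = a
      · rw [hTT ω hAa]
      · simp [hAa]
    have step2 := PipwAux.pullout_key hm P (hZ.prodMk hA) (hW.prodMk hTa) hXm hCI
      f hfmeas C hfbdd g hg hg0 hg1
    rw [step1, step2]
    have hfin := final_step hm hn hmn P A hA hAn hA01 a ha π hπver hπpos
      (fun ω => q (Z ω, A ω, X ω)) (hq.comp (hZ.prodMk (hA.prodMk hX))) C hC0
      (fun ω => hC _) hbridge
      (fun ω => g (W ω, Ta ω)) (hg.comp (hW.prodMk hTa)) (fun ω => hg0 _) (fun ω => hg1 _)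
      (fun ω => q (Z ω, a, X ω)) (hq.comp (hZ.prodMk (measurable_const.prodMk hX)))
      (fun ω => hC _) (fun ω hω => by show q (Z ω, a, X ω) = q (Z ω, A ω, X ω); rw [hω])
    have hset : MeasurableSet {ω | t < Ta ω} := measurableSet_lt measurable_const hTa
    have hind_eq : (P {ω | t < Ta ω}).toReal = ∫ ω, g (W ω, Ta ω) ∂P := by
      rw [← measureReal_def, ← integral_indicator_one hset]
      refine integral_congr_ae (Filter.Eventually.of_forall fun ω => ?_)
      rw [hgdef]
      by_cases hlt : t < Ta ω <;>
        simp [Set.indicator_apply, Set.mem_setOf_eq, hlt]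
    exact hind_eq.trans hfin.symm
  rcases ha with rfl | rfl
  · have h01 : ¬ ((0:ℝ) = 1) := by norm_num
    simp only [if_neg h01]
    exact key T0 hT0 hproxy0 (fun ω hω => by rw [hT ω, hω]; ring)
  · simp only [if_pos rfl]
    exact key T1 hT1 hproxy1 (fun ω hω => by rw [hT ω, hω]; ring)
end

section
/- Suppose q satisfies the latent-level treatment bridge equation E[q(Z,A,X) | σ(A,U,X)] = 1/P(A|σ(U,X)) a.s. Then for every a ∈ {0,1} and every bounded σ(U,X)-measurable random variable F, E[ 1{A=a} · q(Z,a,X) · F ] = E[F]. (Inverse-weighting identity used repeatedly in the identification proofs.) -/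
open MeasureTheory ProbabilityTheory

/-- **Inverse-weighting identity used repeatedly in the identification proofs.**
If `q` solves the latent-level treatment bridge equation
`E[q(Z,A,X) | σ(A,U,X)] = 1/P(A|σ(U,X))` a.s., then for every `a ∈ {0,1}` and every bounded
`σ(U,X)`-measurable random variable `F`, `E[ 1{A = a} ⬝ q(Z, a, X) ⬝ F ] = E[F]`. -/
theorem proximal_inverse_weighting_identity
    {Ω 𝓤 𝓧 𝓩 : Type*} [MeasurableSpace Ω]
    [MeasurableSpace 𝓤] [StandardBorelSpace 𝓤] [MeasurableSpace 𝓧] [StandardBorelSpace 𝓧]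
    [MeasurableSpace 𝓩] [StandardBorelSpace 𝓩]
    (P : Measure Ω) [IsProbabilityMeasure P]
    -- the random variables
    (A : Ω → ℝ) (U : Ω → 𝓤) (X : Ω → 𝓧) (Z : Ω → 𝓩)
    (hA : Measurable A) (hU : Measurable U) (hX : Measurable X) (hZ : Measurable Z)
    (hA01 : ∀ ω, A ω = 0 ∨ A ω = 1)
    -- positivity for a version `π` of `P(A = 1 | σ(U, X))`
    (π : Ω → ℝ)
    (hπver : π =ᵐ[P] P[A|MeasurableSpace.comap (fun ω => (U ω, X ω)) inferInstance])
    (hπpos : ∀ᵐ ω ∂P, 0 < π ω ∧ π ω < 1)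
    -- `q` is a bounded measurable function of `(Z, A, X)`
    (q : 𝓩 × ℝ × 𝓧 → ℝ) (hq : Measurable q) (hqbdd : ∃ C, ∀ x, |q x| ≤ C)
    -- latent-level treatment bridge equation: `E[q(Z,A,X) | σ(A,U,X)] = 1/P(A|σ(U,X))` a.s.
    (hbridge : (P[(fun ω => q (Z ω, A ω, X ω))|
        MeasurableSpace.comap (fun ω => (A ω, U ω, X ω)) inferInstance])
      =ᵐ[P] fun ω => (A ω * π ω + (1 - A ω) * (1 - π ω))⁻¹) :
    ∀ a : ℝ, (a = 0 ∨ a = 1) →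
      ∀ F : Ω → ℝ,
        Measurable[MeasurableSpace.comap (fun ω => (U ω, X ω)) inferInstance] F →
        (∃ C, ∀ ω, |F ω| ≤ C) →
        ∫ ω, (if A ω = a then (1 : ℝ) else 0) * q (Z ω, a, X ω) * F ω ∂P = ∫ ω, F ω ∂P := by
  intro a ha F hFmeas hFbdd
  have hG_le := (hA.prodMk (hU.prodMk hX)).comap_le
  have hH_le := (hU.prodMk hX).comap_le
  have hH_le_G : MeasurableSpace.comap (fun ω => (U ω, X ω)) inferInstance ≤
      MeasurableSpace.comap (fun ω => (A ω, U ω, X ω)) inferInstance := by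
    have h1 : (fun ω => (U ω, X ω))
        = (fun p : ℝ × 𝓤 × 𝓧 => p.2) ∘ (fun ω => (A ω, U ω, X ω)) := rfl
    rw [h1, ← MeasurableSpace.comap_comp]
    exact MeasurableSpace.comap_mono measurable_snd.comap_le
  haveI hSFG : SigmaFinite (P.trim hG_le) := inferInstance
  haveI hSFH : SigmaFinite (P.trim hH_le) := inferInstance
  -- basic measurability facts
  have hA_G : Measurable[(MeasurableSpace.comap (fun ω => (A ω, U ω, X ω)) inferInstance)] A := by
    have h : Measurable[(MeasurableSpace.comap (fun ω => (A ω, U ω, X ω)) inferInstance)] (fun ω => (A ω, U ω, X ω)) := Measurable.of_comap_le le_rfl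
    exact measurable_fst.comp h
  have hF_G : Measurable[(MeasurableSpace.comap (fun ω => (A ω, U ω, X ω)) inferInstance)] F := hFmeas.mono hH_le_G le_rfl
  have hFm : Measurable F := hFmeas.mono hH_le le_rfl
  set φ : Ω → ℝ := fun ω => if A ω = a then 1 else 0 with hφdef
  have hφG : Measurable[(MeasurableSpace.comap (fun ω => (A ω, U ω, X ω)) inferInstance)] φ := by
    refine Measurable.ite ?_ measurable_const measurable_const
    exact hA_G (measurableSet_singleton a)
  have hφm : Measurable φ := hφG.mono hG_le le_rfl
  have hφb : ∀ ω, |φ ω| ≤ 1 := by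
    intro ω; simp only [hφdef]; split <;> norm_num
  set Q : Ω → ℝ := fun ω => q (Z ω, A ω, X ω) with hQdef
  have hQmeas : Measurable Q := hq.comp (hZ.prodMk (hA.prodMk hX))
  -- normalized bounds
  obtain ⟨Cq₀, hCq₀⟩ := hqbdd
  obtain ⟨CF₀, hCF₀⟩ := hFbdd
  set Cq := |Cq₀| with hCqdef
  set CF := |CF₀| with hCFdef
  have hCq : ∀ x, |q x| ≤ Cq := fun x => (hCq₀ x).trans (le_abs_self _)
  have hCF : ∀ ω, |F ω| ≤ CF := fun ω => (hCF₀ ω).trans (le_abs_self _)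
  have hQb : ∀ ω, |Q ω| ≤ Cq := fun ω => hCq _
  -- integrability of bounded measurable functions
  have intbdd : ∀ (f : Ω → ℝ) (C : ℝ), Measurable f → (∀ ω, |f ω| ≤ C) → Integrable f P :=
    fun f C hfm hfb => (integrable_const C).mono' hfm.aestronglyMeasurable
      (ae_of_all _ fun ω => by simpa [Real.norm_eq_abs] using hfb ω)
  have intF : Integrable F P := intbdd F CF hFm hCF
  have intQ : Integrable Q P := intbdd Q Cq hQmeas hQb
  have intφ : Integrable φ P := intbdd φ 1 hφm hφb
  have intA : Integrable A P := by
    refine intbdd A 1 hA fun ω => ?_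
    rcases hA01 ω with h | h <;> rw [h] <;> norm_num
  have intφFQ : Integrable ((φ * F) * Q) P := by
    refine intbdd _ (CF * Cq) ((hφm.mul hFm).mul hQmeas) fun ω => ?_
    have h1 : |((φ * F) * Q) ω| = |φ ω| * |F ω| * |Q ω| := by
      simp [Pi.mul_apply, abs_mul]
    rw [h1]
    calc |φ ω| * |F ω| * |Q ω| ≤ 1 * CF * Cq := by
          gcongr
          · exact hφb ω
          · exact hCF ω
          · exact hQb ω
      _ = CF * Cq := by ring
  -- positivity for the conditional-expectation version of π
  have hπ'pos : ∀ᵐ ω ∂P, 0 < (P[A|(MeasurableSpace.comap (fun ω => (U ω, X ω)) inferInstance)]) ω ∧ (P[A|(MeasurableSpace.comap (fun ω => (U ω, X ω)) inferInstance)]) ω < 1 := by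
    filter_upwards [hπpos, hπver] with ω h1 h2
    rw [← h2]; exact h1
  -- the inverse weight, written with the (MeasurableSpace.comap (fun ω => (U ω, X ω)) inferInstance)-measurable version of π
  set W : Ω → ℝ := fun ω => (a * (P[A|(MeasurableSpace.comap (fun ω => (U ω, X ω)) inferInstance)]) ω + (1 - a) * (1 - (P[A|(MeasurableSpace.comap (fun ω => (U ω, X ω)) inferInstance)]) ω))⁻¹ with hWdef
  have hπ'sm : StronglyMeasurable[(MeasurableSpace.comap (fun ω => (U ω, X ω)) inferInstance)] (P[A|(MeasurableSpace.comap (fun ω => (U ω, X ω)) inferInstance)]) := stronglyMeasurable_condExp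
  have hWmH : Measurable[(MeasurableSpace.comap (fun ω => (U ω, X ω)) inferInstance)] W := by
    exact ((measurable_const.mul hπ'sm.measurable).add
      (measurable_const.mul (measurable_const.sub hπ'sm.measurable))).inv
  have hsmWF : StronglyMeasurable[(MeasurableSpace.comap (fun ω => (U ω, X ω)) inferInstance)] (W * F) := (hWmH.mul hFmeas).stronglyMeasurable
  -- key a.e. identity relating the two integrands
  have heq3 : ((φ * F) * P[Q|(MeasurableSpace.comap (fun ω => (A ω, U ω, X ω)) inferInstance)]) =ᵐ[P] ((W * F) * φ) := by
    filter_upwards [hbridge, hπver] with ω h1 h2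
    simp only [Pi.mul_apply, hφdef, hWdef]
    by_cases h : A ω = a
    · rw [if_pos h, h1, h, h2]; ring
    · rw [if_neg h]; ring
  have intFPQ : Integrable ((φ * F) * P[Q|(MeasurableSpace.comap (fun ω => (A ω, U ω, X ω)) inferInstance)]) P := by
    have := (integrable_condExp (m := (MeasurableSpace.comap (fun ω => (A ω, U ω, X ω)) inferInstance)) (f := Q) (μ := P)).bdd_mul (c := CF)
      ((hφm.mul hFm).aestronglyMeasurable)
      (ae_of_all _ fun ω => by
        show ‖φ ω * F ω‖ ≤ CF
        rw [Real.norm_eq_abs, abs_mul]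
        calc |φ ω| * |F ω| ≤ 1 * CF := by
              gcongr
              · exact hφb ω
              · exact hCF ω
          _ = CF := one_mul _)
    exact this
  have intWFφ : Integrable ((W * F) * φ) P := intFPQ.congr heq3
  -- Step 1: replace q(Z, a, X) by q(Z, A, X) on the event {A = a}
  have e1 : ∫ ω, (if A ω = a then (1 : ℝ) else 0) * q (Z ω, a, X ω) * F ω ∂P
      = ∫ ω, ((φ * F) * Q) ω ∂P := by
    refine integral_congr_ae (ae_of_all _ fun ω => ?_)
    simp only [Pi.mul_apply, hφdef, hQdef]
    by_cases h : A ω = a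
    · rw [h]; ring
    · simp [h]
  -- Step 2: condition on σ(A, U, X) and pull out the σ(A,U,X)-measurable factor
  have hsmφF : StronglyMeasurable[(MeasurableSpace.comap (fun ω => (A ω, U ω, X ω)) inferInstance)] (φ * F) := (hφG.mul hF_G).stronglyMeasurable
  have e2 : ∫ ω, ((φ * F) * Q) ω ∂P = ∫ ω, ((φ * F) * P[Q|(MeasurableSpace.comap (fun ω => (A ω, U ω, X ω)) inferInstance)]) ω ∂P := by
    calc ∫ ω, ((φ * F) * Q) ω ∂P = ∫ ω, (P[(φ * F) * Q|(MeasurableSpace.comap (fun ω => (A ω, U ω, X ω)) inferInstance)]) ω ∂P :=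
          (integral_condExp hG_le).symm
      _ = ∫ ω, ((φ * F) * P[Q|(MeasurableSpace.comap (fun ω => (A ω, U ω, X ω)) inferInstance)]) ω ∂P :=
          integral_congr_ae (condExp_mul_of_stronglyMeasurable_left hsmφF intφFQ intQ)
  -- Step 3: use the bridge equation
  have e3 : ∫ ω, ((φ * F) * P[Q|(MeasurableSpace.comap (fun ω => (A ω, U ω, X ω)) inferInstance)]) ω ∂P = ∫ ω, ((W * F) * φ) ω ∂P :=
    integral_congr_ae heq3
  -- Step 4: condition on σ(U, X) and pull out the σ(U,X)-measurable factor
  have e4 : ∫ ω, ((W * F) * φ) ω ∂P = ∫ ω, ((W * F) * P[φ|(MeasurableSpace.comap (fun ω => (U ω, X ω)) inferInstance)]) ω ∂P := by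
    calc ∫ ω, ((W * F) * φ) ω ∂P = ∫ ω, (P[(W * F) * φ|(MeasurableSpace.comap (fun ω => (U ω, X ω)) inferInstance)]) ω ∂P :=
          (integral_condExp hH_le).symm
      _ = ∫ ω, ((W * F) * P[φ|(MeasurableSpace.comap (fun ω => (U ω, X ω)) inferInstance)]) ω ∂P :=
          integral_congr_ae (condExp_mul_of_stronglyMeasurable_left hsmWF intWFφ intφ)
  -- Step 5: compute E[1{A=a} | σ(U,X)] = a π + (1-a)(1-π)
  have hφeq : φ = (a • A) + ((fun _ => (1 - a)) - ((1 - a) • A)) := by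
    funext ω
    simp only [hφdef, Pi.add_apply, Pi.sub_apply, Pi.smul_apply, smul_eq_mul]
    rcases hA01 ω with h | h <;> rcases ha with h' | h' <;> subst h' <;> rw [h] <;> norm_num
  have hPφ : P[φ|(MeasurableSpace.comap (fun ω => (U ω, X ω)) inferInstance)] =ᵐ[P] fun ω => a * (P[A|(MeasurableSpace.comap (fun ω => (U ω, X ω)) inferInstance)]) ω + (1 - a) * (1 - (P[A|(MeasurableSpace.comap (fun ω => (U ω, X ω)) inferInstance)]) ω) := by
    have hi1 : Integrable (a • A) P := intA.smul a
    have hi2 : Integrable ((fun _ : Ω => (1 - a)) - ((1 - a) • A)) P :=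
      (integrable_const _).sub (intA.smul _)
    have h1 : P[φ|(MeasurableSpace.comap (fun ω => (U ω, X ω)) inferInstance)] =ᵐ[P] P[a • A|(MeasurableSpace.comap (fun ω => (U ω, X ω)) inferInstance)] + P[(fun _ => (1 - a)) - ((1 - a) • A)|(MeasurableSpace.comap (fun ω => (U ω, X ω)) inferInstance)] := by
      rw [hφeq]; exact condExp_add hi1 hi2 _
    have h2 : P[a • A|(MeasurableSpace.comap (fun ω => (U ω, X ω)) inferInstance)] =ᵐ[P] a • P[A|(MeasurableSpace.comap (fun ω => (U ω, X ω)) inferInstance)] := condExp_smul a A _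
    have h3 : P[(fun _ => (1 - a)) - ((1 - a) • A)|(MeasurableSpace.comap (fun ω => (U ω, X ω)) inferInstance)]
        =ᵐ[P] P[(fun _ => (1 - a))|(MeasurableSpace.comap (fun ω => (U ω, X ω)) inferInstance)] - P[(1 - a) • A|(MeasurableSpace.comap (fun ω => (U ω, X ω)) inferInstance)] :=
      condExp_sub (integrable_const _) (intA.smul _) _
    have h4 : P[(1 - a) • A|(MeasurableSpace.comap (fun ω => (U ω, X ω)) inferInstance)] =ᵐ[P] (1 - a) • P[A|(MeasurableSpace.comap (fun ω => (U ω, X ω)) inferInstance)] := condExp_smul (1 - a) A _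
    filter_upwards [h1, h2, h3, h4] with ω k1 k2 k3 k4
    simp only [Pi.add_apply, Pi.sub_apply, Pi.smul_apply, smul_eq_mul] at k1 k2 k3 k4 ⊢
    rw [k1, k2, k3, k4, condExp_const hH_le]
    ring
  -- Step 6: the weight cancels
  have e5 : ∫ ω, ((W * F) * P[φ|(MeasurableSpace.comap (fun ω => (U ω, X ω)) inferInstance)]) ω ∂P = ∫ ω, F ω ∂P := by
    refine integral_congr_ae ?_
    filter_upwards [hPφ, hπ'pos] with ω h1 h2
    simp only [Pi.mul_apply, hWdef]
    rw [h1]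
    have hDne : a * (P[A|(MeasurableSpace.comap (fun ω => (U ω, X ω)) inferInstance)]) ω + (1 - a) * (1 - (P[A|(MeasurableSpace.comap (fun ω => (U ω, X ω)) inferInstance)]) ω) ≠ 0 := by
      rcases ha with h' | h' <;> subst h' <;> apply ne_of_gt <;> nlinarith [h2.1, h2.2]
    field_simp
  rw [e1, e2, e3, e4, e5]
end

section
/- Suppose h satisfies the observed-level outcome bridge equation (for every t ∈ ℝ, E[h(t,W,A,X) | σ(A,Z,X)] = E[1{T>t} | σ(A,Z,X)] a.s.), the outcome completeness condition holds, and Z is conditionally independent of the pair (W,T) given σ(A,U,X). Then h also satisfies the latent-level outcome bridge equation: for every t ∈ ℝ, E[h(t,W,A,X) | σ(A,U,X)] = E[1{T>t} | σ(A,U,X)] a.s. (Key transfer step in the proof of Proposition 1, part 2.) -/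
open MeasureTheory ProbabilityTheory

section Helpers

variable {Ω : Type*} [MeasurableSpace Ω] {P : Measure Ω}

lemma aux_integrable_of_ae_bdd [IsFiniteMeasure P] {f : Ω → ℝ} (hf : AEStronglyMeasurable f P)
    {C : ℝ} (h : ∀ᵐ ω ∂P, |f ω| ≤ C) : Integrable f P :=
  Integrable.mono' (integrable_const C) hf
    (h.mono fun ω hω => by simpa [Real.norm_eq_abs] using hω)

lemma aux_integrable_of_bdd [IsFiniteMeasure P] {f : Ω → ℝ} (hf : AEStronglyMeasurable f P)
    {C : ℝ} (h : ∀ ω, |f ω| ≤ C) : Integrable f P :=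
  aux_integrable_of_ae_bdd hf (Filter.Eventually.of_forall h)

lemma aux_comap_le {α β : Type*} [MeasurableSpace α] [MeasurableSpace β]
    (F : Ω → α) (G : Ω → β) (φ : α → β) (hφ : Measurable φ) (hcomp : ∀ ω, G ω = φ (F ω)) :
    MeasurableSpace.comap G inferInstance ≤ MeasurableSpace.comap F inferInstance := by
  rintro s ⟨B, hB, rfl⟩
  exact ⟨φ ⁻¹' B, hφ hB, by ext ω; simp [hcomp ω]⟩

lemma aux_measurable_comap {α : Type*} [MeasurableSpace α] (F : Ω → α) :
    Measurable[MeasurableSpace.comap F inferInstance] F :=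
  fun _s hs => ⟨_s, hs, rfl⟩

/-- Pull-out property of conditional expectation, in lambda form. -/
lemma condexp_pullout {m : MeasurableSpace Ω}
    {f g : Ω → ℝ} (hf : StronglyMeasurable[m] f)
    (hfg : Integrable (fun ω => f ω * g ω) P) (hg : Integrable g P) :
    P[(fun ω => f ω * g ω)|m] =ᵐ[P] fun ω => f ω * (P[g|m]) ω :=
  condExp_mul_of_stronglyMeasurable_left hf hfg hg

lemma aux_abs_indicator_le {α : Type*} (s : Set α) (x : α) :
    |s.indicator (fun _ => (1 : ℝ)) x| ≤ 1 := by
  by_cases hx : x ∈ s <;> simp [Set.indicator_apply, hx]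

end Helpers

set_option maxHeartbeats 1000000 in
theorem aux_outcome_bridge_transfer
    {Ω 𝓤 𝓧 𝓩 𝓦 : Type*}
    [MeasurableSpace 𝓤] [MeasurableSpace 𝓧] [MeasurableSpace 𝓩] [MeasurableSpace 𝓦]
    (A T : Ω → ℝ) (U : Ω → 𝓤) (X : Ω → 𝓧) (Z : Ω → 𝓩) (W : Ω → 𝓦)
    (t : ℝ) (h : ℝ → 𝓦 × ℝ × 𝓧 → ℝ)
    (m mzx nV : MeasurableSpace Ω)
    (hm_def : m = MeasurableSpace.comap (fun ω => (A ω, U ω, X ω)) inferInstance)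
    (hmzx_def : mzx = MeasurableSpace.comap (fun ω => (Z ω, A ω, X ω)) inferInstance)
    (hnV_def : nV = MeasurableSpace.comap (fun ω => ((W ω, T ω), (A ω, X ω))) inferInstance)
    [MeasurableSpace Ω] (P : Measure Ω) [IsProbabilityMeasure P]
    (hA : Measurable A) (hT : Measurable T) (hU : Measurable U) (hX : Measurable X)
    (hZ : Measurable Z) (hW : Measurable W)
    (hht : Measurable (h t))
    (hhbddt : ∃ C, ∀ x, |h t x| ≤ C)
    (hbridge :
      (P[(fun ω => h t (W ω, A ω, X ω))|
          MeasurableSpace.comap (fun ω => (A ω, Z ω, X ω)) inferInstance])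
        =ᵐ[P]
      (P[(fun ω => if t < T ω then (1 : ℝ) else 0)|
          MeasurableSpace.comap (fun ω => (A ω, Z ω, X ω)) inferInstance]))
    (hcomplete : ∀ Y : Ω → ℝ,
      Measurable[MeasurableSpace.comap (fun ω => (U ω, A ω, X ω)) inferInstance] Y →
      (∃ C, ∀ ω, |Y ω| ≤ C) →
      (P[Y|MeasurableSpace.comap (fun ω => (Z ω, A ω, X ω)) inferInstance]) =ᵐ[P] 0 →
      Y =ᵐ[P] 0)
    (hproxy : CondIndepGiven P m Z (fun ω => (W ω, T ω))) :
      (P[(fun ω => h t (W ω, A ω, X ω))|m])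
        =ᵐ[P]
      (P[(fun ω => if t < T ω then (1 : ℝ) else 0)|m]) := by
  classical
  have hmazx_eq : MeasurableSpace.comap (fun ω => (A ω, Z ω, X ω)) inferInstance = mzx := by
    rw [hmzx_def]
    refine le_antisymm ?_ ?_
    · exact aux_comap_le _ _ (fun p : 𝓩 × ℝ × 𝓧 => (p.2.1, p.1, p.2.2))
        (by fun_prop) (fun ω => rfl)
    · exact aux_comap_le _ _ (fun p : ℝ × 𝓩 × 𝓧 => (p.2.1, p.1, p.2.2))
        (by fun_prop) (fun ω => rfl)
  have huax_eq : MeasurableSpace.comap (fun ω => (U ω, A ω, X ω)) inferInstance = m := by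
    rw [hm_def]
    refine le_antisymm ?_ ?_
    · exact aux_comap_le _ _ (fun p : ℝ × 𝓤 × 𝓧 => (p.2.1, p.1, p.2.2))
        (by fun_prop) (fun ω => rfl)
    · exact aux_comap_le _ _ (fun p : 𝓤 × ℝ × 𝓧 => (p.2.1, p.1, p.2.2))
        (by fun_prop) (fun ω => rfl)
  have hmle : m ≤ (inferInstance : MeasurableSpace Ω) := by
    rw [hm_def]; exact Measurable.comap_le (hA.prodMk (hU.prodMk hX))
  have hmzxle : mzx ≤ (inferInstance : MeasurableSpace Ω) := by
    rw [hmzx_def]; exact Measurable.comap_le (hZ.prodMk (hA.prodMk hX))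
  haveI : SigmaFinite (P.trim hmle) := by infer_instance
  haveI : SigmaFinite (P.trim hmzxle) := by infer_instance
  -- the joint map for the conditional-independence Dynkin argument
  set V : Ω → (𝓦 × ℝ) × (ℝ × 𝓧) := fun ω => ((W ω, T ω), (A ω, X ω)) with hV_def
  have hVmeas : Measurable V := (hW.prodMk hT).prodMk (hA.prodMk hX)
  have hnVle : nV ≤ (inferInstance : MeasurableSpace Ω) := by
    rw [hnV_def]; exact Measurable.comap_le hVmeas
  haveI : SigmaFinite (P.trim hnVle) := by infer_instance
  -- the functions
  set hfun : Ω → ℝ := fun ω => h t (W ω, A ω, X ω) with hhfun_def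
  set indf : Ω → ℝ := fun ω => if t < T ω then (1 : ℝ) else 0 with hindf_def
  set g : Ω → ℝ := fun ω => hfun ω - indf ω with hg_def
  have hfunmeas : Measurable hfun := hht.comp (hW.prodMk (hA.prodMk hX))
  have hindmeas : Measurable indf :=
    Measurable.ite (measurableSet_lt measurable_const hT) measurable_const measurable_const
  have hgmeas : Measurable g := hfunmeas.sub hindmeas
  obtain ⟨Ch, hCh⟩ := hhbddt
  set Cg : ℝ := |Ch| + 1 with hCg_def
  have hCg_pos : 0 < Cg := by positivity
  have hindbd : ∀ ω, |indf ω| ≤ 1 := by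
    intro ω; rw [hindf_def]; dsimp only; split <;> simp
  have hgbd : ∀ ω, |g ω| ≤ Cg := by
    intro ω
    rw [hg_def]
    have h1 : |hfun ω| ≤ |Ch| := (hCh _).trans (le_abs_self Ch)
    have h2 : |indf ω| ≤ 1 := hindbd ω
    calc |hfun ω - indf ω| ≤ |hfun ω| + |indf ω| := abs_sub _ _
      _ ≤ |Ch| + 1 := add_le_add h1 h2
  have int_hfun : Integrable hfun P :=
    aux_integrable_of_bdd hfunmeas.aestronglyMeasurable (fun ω => (hCh _).trans (le_abs_self Ch))
  have int_indf : Integrable indf P :=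
    aux_integrable_of_bdd hindmeas.aestronglyMeasurable hindbd
  have int_g : Integrable g P := aux_integrable_of_bdd hgmeas.aestronglyMeasurable hgbd
  -- measurability of A, X with respect to m
  have hAUXm : Measurable[m] (fun ω => (A ω, U ω, X ω)) := by
    rw [hm_def]; exact aux_measurable_comap _
  have hAm : Measurable[m] A := hAUXm.fst
  have hXm : Measurable[m] X := hAUXm.snd.snd
  have hAXm : Measurable[m] (fun ω => (A ω, X ω)) := hAm.prodMk hXm
  -- conditional expectation of g
  set Y : Ω → ℝ := P[g|m] with hY_def
  have hYsm : StronglyMeasurable[m] Y := stronglyMeasurable_condExp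
  have hYaesm : AEStronglyMeasurable Y P := (hYsm.mono hmle).aestronglyMeasurable
  have int_Y : Integrable Y P := integrable_condExp
  have hYbd : ∀ᵐ ω ∂P, |Y ω| ≤ Cg := by
    have hb := ae_bdd_condExp_of_ae_bdd (μ := P) (m := m) (R := Cg.toNNReal) (f := g)
      (Filter.Eventually.of_forall fun ω => by
        rw [Real.coe_toNNReal Cg hCg_pos.le]; exact hgbd ω)
    rw [hY_def]
    filter_upwards [hb] with ω hω
    rwa [Real.coe_toNNReal Cg hCg_pos.le] at hω
  -- Key step A : conditional independence transfers to `nV`-conditional expectations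
  have keyA : ∀ f : 𝓩 → ℝ, Measurable f → (∀ z, |f z| ≤ 1) →
      P[(fun ω => f (Z ω) - (P[(fun ω' => f (Z ω'))|m]) ω)|nV] =ᵐ[P] 0 := by
    intro f hfmeas hfbd
    set F : Ω → ℝ := P[(fun ω' => f (Z ω'))|m] with hF_def
    have hFsm : StronglyMeasurable[m] F := stronglyMeasurable_condExp
    have hFaesm : AEStronglyMeasurable F P := (hFsm.mono hmle).aestronglyMeasurable
    have hFbd : ∀ᵐ ω ∂P, |F ω| ≤ 1 := by
      have hb := ae_bdd_condExp_of_ae_bdd (μ := P) (m := m) (R := 1)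
        (f := fun ω' => f (Z ω'))
        (Filter.Eventually.of_forall fun ω => by simpa using hfbd (Z ω))
      rw [hF_def]
      filter_upwards [hb] with ω hω
      simpa using hω
    have int_fZ : Integrable (fun ω => f (Z ω)) P :=
      aux_integrable_of_bdd (hfmeas.comp hZ).aestronglyMeasurable (fun ω => hfbd (Z ω))
    have int_F : Integrable F P := integrable_condExp
    set G : Ω → ℝ := fun ω => f (Z ω) - F ω with hG_def
    have int_G : Integrable G P := int_fZ.sub int_F
    have hGtot : ∫ ω, G ω ∂P = 0 := by
      rw [hG_def]
      rw [integral_sub int_fZ int_F, hF_def, integral_condExp hmle, sub_self]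
    -- set-integral claim via π-λ
    have hsets : ∀ D : Set ((𝓦 × ℝ) × (ℝ × 𝓧)), MeasurableSet D →
        ∫ ω in V ⁻¹' D, G ω ∂P = 0 := by
      have hind := MeasurableSpace.induction_on_inter
        (C := fun D : Set ((𝓦 × ℝ) × (ℝ × 𝓧)) => fun _ => ∫ ω in V ⁻¹' D, G ω ∂P = 0)
        generateFrom_prod.symm isPiSystem_prod
      refine fun D hD => hind ?_ ?_ ?_ ?_ D hD
      · simp
      · rintro D' ⟨s₁, hs₁, s₂, hs₂, rfl⟩
        have hs₁m : MeasurableSet s₁ := hs₁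
        have hs₂m : MeasurableSet s₂ := hs₂
        set g₀ : 𝓦 × ℝ → ℝ := s₁.indicator (fun _ => (1 : ℝ)) with hg₀_def
        set ψ₀ : ℝ × 𝓧 → ℝ := s₂.indicator (fun _ => (1 : ℝ)) with hψ₀_def
        have hg₀meas : Measurable g₀ := measurable_const.indicator hs₁m
        have hψ₀meas : Measurable ψ₀ := measurable_const.indicator hs₂m
        have hg₀bd : ∀ x, |g₀ x| ≤ 1 := fun x => aux_abs_indicator_le s₁ x
        have hψ₀bd : ∀ x, |ψ₀ x| ≤ 1 := fun x => aux_abs_indicator_le s₂ x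
        have hψ₀sm : StronglyMeasurable[m] (fun ω => ψ₀ (A ω, X ω)) :=
          (hψ₀meas.comp hAXm).stronglyMeasurable
        have hS : MeasurableSet (V ⁻¹' (s₁ ×ˢ s₂)) := hVmeas (hs₁m.prod hs₂m)
        have hrw : (V ⁻¹' (s₁ ×ˢ s₂)).indicator G =
            fun ω => ψ₀ (A ω, X ω) * (f (Z ω) * g₀ (W ω, T ω)) -
              (ψ₀ (A ω, X ω) * F ω) * g₀ (W ω, T ω) := by
          funext ω
          by_cases h₁ : (W ω, T ω) ∈ s₁ <;> by_cases h₂ : (A ω, X ω) ∈ s₂ <;>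
            simp [Set.indicator_apply, hV_def, hG_def, hg₀_def, hψ₀_def, h₁, h₂,
              Set.mem_prod] <;> ring
        -- integrability of the two pieces
        have int_fg : Integrable (fun ω => f (Z ω) * g₀ (W ω, T ω)) P := by
          refine aux_integrable_of_bdd
            (((hfmeas.comp hZ).mul (hg₀meas.comp (hW.prodMk hT))).aestronglyMeasurable)
            (C := 1) (fun ω => ?_)
          rw [abs_mul]
          exact mul_le_one₀ (hfbd _) (abs_nonneg _) (hg₀bd _)
        have int_p1 : Integrable (fun ω => ψ₀ (A ω, X ω) * (f (Z ω) * g₀ (W ω, T ω))) P := by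
          refine aux_integrable_of_bdd
            (((hψ₀meas.comp (hA.prodMk hX)).mul
              ((hfmeas.comp hZ).mul (hg₀meas.comp (hW.prodMk hT)))).aestronglyMeasurable)
            (C := 1) (fun ω => ?_)
          rw [abs_mul, abs_mul]
          exact mul_le_one₀ (hψ₀bd _) (by positivity)
            (mul_le_one₀ (hfbd _) (abs_nonneg _) (hg₀bd _))
        have int_g₀WT : Integrable (fun ω => g₀ (W ω, T ω)) P :=
          aux_integrable_of_bdd ((hg₀meas.comp (hW.prodMk hT)).aestronglyMeasurable)
            (fun ω => hg₀bd _)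
        have int_p2 : Integrable (fun ω => (ψ₀ (A ω, X ω) * F ω) * g₀ (W ω, T ω)) P := by
          refine aux_integrable_of_ae_bdd
            ((((hψ₀meas.comp (hA.prodMk hX)).aestronglyMeasurable.mul hFaesm).mul
              ((hg₀meas.comp (hW.prodMk hT)).aestronglyMeasurable)))
            (C := 1) ?_
          filter_upwards [hFbd] with ω hF
          rw [abs_mul, abs_mul]
          exact mul_le_one₀ (mul_le_one₀ (hψ₀bd _) (abs_nonneg _) hF) (by positivity) (hg₀bd _)
        -- the two conditional expectations agree
        have e1 : P[(fun ω => ψ₀ (A ω, X ω) * (f (Z ω) * g₀ (W ω, T ω)))|m] =ᵐ[P]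
            fun ω => ψ₀ (A ω, X ω) * (F ω * (P[(fun ω' => g₀ (W ω', T ω'))|m]) ω) := by
          refine (condexp_pullout hψ₀sm int_p1 int_fg).trans ?_
          have hp := hproxy f g₀ hfmeas hg₀meas ⟨1, hfbd⟩ ⟨1, hg₀bd⟩
          filter_upwards [hp] with ω hω
          rw [hω, hF_def]
        have e2 : P[(fun ω => (ψ₀ (A ω, X ω) * F ω) * g₀ (W ω, T ω))|m] =ᵐ[P]
            fun ω => (ψ₀ (A ω, X ω) * F ω) * (P[(fun ω' => g₀ (W ω', T ω'))|m]) ω :=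
          condexp_pullout (hψ₀sm.mul hFsm) int_p2 int_g₀WT
        rw [← integral_indicator hS, hrw, integral_sub int_p1 int_p2, sub_eq_zero]
        calc ∫ ω, ψ₀ (A ω, X ω) * (f (Z ω) * g₀ (W ω, T ω)) ∂P
            = ∫ ω, (P[(fun ω' => ψ₀ (A ω', X ω') * (f (Z ω') * g₀ (W ω', T ω')))|m]) ω ∂P :=
              (integral_condExp hmle).symm
          _ = ∫ ω, (P[(fun ω' => (ψ₀ (A ω', X ω') * F ω') * g₀ (W ω', T ω'))|m]) ω ∂P := by
              refine integral_congr_ae (e1.trans ?_)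
              refine (e2.symm).mono fun ω hω => ?_
              rw [← hω]; ring_nf
          _ = ∫ ω, (ψ₀ (A ω, X ω) * F ω) * g₀ (W ω, T ω) ∂P := integral_condExp hmle
      · intro D' hD' hID
        rw [Set.preimage_compl]
        have hadd := integral_add_compl (hVmeas hD') int_G
        rw [hID] at hadd
        linarith [hGtot, hadd]
      · intro s hdisj hsmeas hIs
        rw [Set.preimage_iUnion,
          integral_iUnion (fun i => hVmeas (hsmeas i))
            (fun i j hij => Disjoint.preimage V (hdisj hij)) int_G.integrableOn]
        simp [hIs]
    -- conclude via uniqueness of conditional expectation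
    have h0 : (0 : Ω → ℝ) =ᵐ[P] P[G|nV] := by
      refine ae_eq_condExp_of_forall_setIntegral_eq hnVle int_G ?_ ?_ ?_
      · intro s _ _; exact (integrable_zero _ _ _).integrableOn
      · intro s hs _
        rw [hnV_def] at hs
        obtain ⟨D, hD, rfl⟩ := hs
        rw [hsets D hD]; simp
      · exact stronglyMeasurable_const.aestronglyMeasurable
    exact h0.symm
  -- Key step B : set integrals of g - Y over mzx-sets vanish
  have keyB : ∀ s : Set Ω, MeasurableSet[mzx] s → ∫ ω in s, (g ω - Y ω) ∂P = 0 := by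
    have int_gY : Integrable (fun ω => g ω - Y ω) P := int_g.sub int_Y
    have hgYtot : ∫ ω, (g ω - Y ω) ∂P = 0 := by
      rw [integral_sub int_g int_Y, hY_def, integral_condExp hmle, sub_self]
    rintro s hs
    rw [hmzx_def] at hs
    obtain ⟨B, hB, rfl⟩ := hs
    have hind := MeasurableSpace.induction_on_inter
      (C := fun B : Set (𝓩 × ℝ × 𝓧) => fun _ =>
        ∫ ω in (fun ω => (Z ω, A ω, X ω)) ⁻¹' B, (g ω - Y ω) ∂P = 0)
      generateFrom_prod.symm isPiSystem_prod
    refine hind ?_ ?_ ?_ ?_ _ hB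
    · simp
    · rintro B' ⟨B₁, hB₁, B₂, hB₂, rfl⟩
      have hB₁m : MeasurableSet B₁ := hB₁
      have hB₂m : MeasurableSet B₂ := hB₂
      set f : 𝓩 → ℝ := B₁.indicator (fun _ => (1 : ℝ)) with hf_def
      set ψ : ℝ × 𝓧 → ℝ := B₂.indicator (fun _ => (1 : ℝ)) with hψ_def
      have hfmeas : Measurable f := measurable_const.indicator hB₁m
      have hψmeas : Measurable ψ := measurable_const.indicator hB₂m
      have hfbd : ∀ x, |f x| ≤ 1 := fun x => aux_abs_indicator_le B₁ x
      have hψbd : ∀ x, |ψ x| ≤ 1 := fun x => aux_abs_indicator_le B₂ x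
      set F : Ω → ℝ := P[(fun ω' => f (Z ω'))|m] with hF_def
      have hFsm : StronglyMeasurable[m] F := stronglyMeasurable_condExp
      have hFaesm : AEStronglyMeasurable F P := (hFsm.mono hmle).aestronglyMeasurable
      have hFbd : ∀ᵐ ω ∂P, |F ω| ≤ 1 := by
        have hb := ae_bdd_condExp_of_ae_bdd (μ := P) (m := m) (R := 1)
          (f := fun ω' => f (Z ω'))
          (Filter.Eventually.of_forall fun ω => by simpa using hfbd (Z ω))
        rw [hF_def]
        filter_upwards [hb] with ω hω
        simpa using hω
      have int_fZ : Integrable (fun ω => f (Z ω)) P :=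
        aux_integrable_of_bdd (hfmeas.comp hZ).aestronglyMeasurable (fun ω => hfbd (Z ω))
      have int_F : Integrable F P := integrable_condExp
      have hGnV := keyA f hfmeas hfbd
      rw [← hF_def] at hGnV
      -- the nV-measurable factor
      have hψm : Measurable[m] (fun ω => ψ (A ω, X ω)) := hψmeas.comp hAXm
      have hknV : Measurable[nV] (fun ω => ψ (A ω, X ω) * g ω) := by
        have hρ : Measurable (fun p : (𝓦 × ℝ) × (ℝ × 𝓧) =>
            ψ p.2 * (h t (p.1.1, p.2.1, p.2.2) - if t < p.1.2 then (1 : ℝ) else 0)) := by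
          refine (hψmeas.comp measurable_snd).mul ?_
          refine Measurable.sub ?_ ?_
          · exact hht.comp
              ((measurable_fst.comp measurable_fst).prodMk
                ((measurable_fst.comp measurable_snd).prodMk
                  (measurable_snd.comp measurable_snd)))
          · exact Measurable.ite
              (measurableSet_lt measurable_const (measurable_snd.comp measurable_fst))
              measurable_const measurable_const
        have hc : Measurable[nV] V := by rw [hnV_def]; exact aux_measurable_comap V
        exact hρ.comp hc
      -- integrabilities
      have hψAX_aesm : AEStronglyMeasurable (fun ω => ψ (A ω, X ω)) P :=
        (hψmeas.comp (hA.prodMk hX)).aestronglyMeasurable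
      have hfZ_aesm : AEStronglyMeasurable (fun ω => f (Z ω)) P :=
        (hfmeas.comp hZ).aestronglyMeasurable
      have int_a : Integrable (fun ω => (ψ (A ω, X ω) * g ω) * (f (Z ω) - F ω)) P := by
        refine aux_integrable_of_ae_bdd
          (((hψAX_aesm.mul hgmeas.aestronglyMeasurable)).mul
            (hfZ_aesm.sub hFaesm)) (C := Cg * 2) ?_
        filter_upwards [hFbd] with ω hF
        rw [abs_mul]
        have h1 : |ψ (A ω, X ω) * g ω| ≤ Cg := by
          rw [abs_mul]
          calc |ψ (A ω, X ω)| * |g ω| ≤ 1 * Cg :=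
            mul_le_mul (hψbd _) (hgbd _) (abs_nonneg _) zero_le_one
          _ = Cg := one_mul _
        have h2 : |f (Z ω) - F ω| ≤ 2 := by
          calc |f (Z ω) - F ω| ≤ |f (Z ω)| + |F ω| := abs_sub _ _
            _ ≤ 1 + 1 := add_le_add (hfbd _) hF
            _ = 2 := by norm_num
        exact mul_le_mul h1 h2 (abs_nonneg _) hCg_pos.le
      have int_b : Integrable (fun ω => (ψ (A ω, X ω) * F ω) * g ω) P := by
        refine aux_integrable_of_ae_bdd
          ((hψAX_aesm.mul hFaesm).mul hgmeas.aestronglyMeasurable) (C := Cg) ?_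
        filter_upwards [hFbd] with ω hF
        rw [abs_mul]
        calc |ψ (A ω, X ω) * F ω| * |g ω| ≤ 1 * Cg := by
              refine mul_le_mul ?_ (hgbd _) (abs_nonneg _) zero_le_one
              rw [abs_mul]
              exact mul_le_one₀ (hψbd _) (abs_nonneg _) hF
          _ = Cg := one_mul _
      have int_c : Integrable (fun ω => (ψ (A ω, X ω) * Y ω) * f (Z ω)) P := by
        refine aux_integrable_of_ae_bdd
          ((hψAX_aesm.mul hYaesm).mul hfZ_aesm) (C := Cg) ?_
        filter_upwards [hYbd] with ω hY
        rw [abs_mul]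
        calc |ψ (A ω, X ω) * Y ω| * |f (Z ω)| ≤ Cg * 1 := by
              refine mul_le_mul ?_ (hfbd _) (abs_nonneg _) hCg_pos.le
              rw [abs_mul]
              calc |ψ (A ω, X ω)| * |Y ω| ≤ 1 * Cg :=
                mul_le_mul (hψbd _) hY (abs_nonneg _) zero_le_one
              _ = Cg := one_mul _
          _ = Cg := mul_one _
      have int_Gf : Integrable (fun ω => f (Z ω) - F ω) P := int_fZ.sub int_F
      -- term a integrates to zero
      have ea : ∫ ω, (ψ (A ω, X ω) * g ω) * (f (Z ω) - F ω) ∂P = 0 := by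
        rw [← integral_condExp hnVle
          (f := fun ω => (ψ (A ω, X ω) * g ω) * (f (Z ω) - F ω))]
        have epull := condexp_pullout (P := P) hknV.stronglyMeasurable int_a int_Gf
        have hzero : P[(fun ω => (ψ (A ω, X ω) * g ω) * (f (Z ω) - F ω))|nV] =ᵐ[P]
            fun _ => (0 : ℝ) := by
          refine epull.trans ?_
          filter_upwards [hGnV] with ω hω
          rw [hω]
          simp
        rw [integral_congr_ae hzero, integral_zero]
      -- terms b and c have equal integrals
      have eb : ∫ ω, (ψ (A ω, X ω) * F ω) * g ω ∂P = ∫ ω, (ψ (A ω, X ω) * F ω) * Y ω ∂P := by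
        rw [← integral_condExp hmle (f := fun ω => (ψ (A ω, X ω) * F ω) * g ω)]
        refine integral_congr_ae ?_
        exact (condexp_pullout ((hψm.stronglyMeasurable).mul hFsm) int_b int_g)
      have ec : ∫ ω, (ψ (A ω, X ω) * Y ω) * f (Z ω) ∂P
          = ∫ ω, (ψ (A ω, X ω) * Y ω) * F ω ∂P := by
        rw [← integral_condExp hmle (f := fun ω => (ψ (A ω, X ω) * Y ω) * f (Z ω))]
        refine integral_congr_ae ?_
        exact (condexp_pullout ((hψm.stronglyMeasurable).mul hYsm) int_c int_fZ)
      -- assemble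
      have hS : MeasurableSet ((fun ω => (Z ω, A ω, X ω)) ⁻¹' (B₁ ×ˢ B₂)) :=
        (hZ.prodMk (hA.prodMk hX)) (hB₁m.prod hB₂m)
      have hrw : ((fun ω => (Z ω, A ω, X ω)) ⁻¹' (B₁ ×ˢ B₂)).indicator (fun ω => g ω - Y ω) =
          fun ω => ((ψ (A ω, X ω) * g ω) * (f (Z ω) - F ω) + (ψ (A ω, X ω) * F ω) * g ω)
            - (ψ (A ω, X ω) * Y ω) * f (Z ω) := by
        funext ω
        by_cases h₁ : Z ω ∈ B₁ <;> by_cases h₂ : (A ω, X ω) ∈ B₂ <;>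
          simp [Set.indicator_apply, hf_def, hψ_def, h₁, h₂, Set.mem_prod] <;> ring
      have int_ab : Integrable (fun ω => (ψ (A ω, X ω) * g ω) * (f (Z ω) - F ω)
          + (ψ (A ω, X ω) * F ω) * g ω) P := int_a.add int_b
      rw [← integral_indicator hS, hrw, integral_sub int_ab int_c,
        integral_add int_a int_b, ea, eb, zero_add, sub_eq_zero, ec]
      exact integral_congr_ae (Filter.Eventually.of_forall fun ω => by ring)
    · intro B' hB' hIB
      rw [Set.preimage_compl]
      have hadd := integral_add_compl ((hZ.prodMk (hA.prodMk hX)) hB') int_gY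
      rw [hIB] at hadd
      linarith [hgYtot, hadd]
    · intro s hdisj hsmeas hIs
      rw [Set.preimage_iUnion,
        integral_iUnion (fun i => (hZ.prodMk (hA.prodMk hX)) (hsmeas i))
          (fun i j hij => Disjoint.preimage _ (hdisj hij)) int_gY.integrableOn]
      simp [hIs]
  -- conclude : P[Y | mzx] = P[g | mzx] = 0
  have hcond0 : (0 : Ω → ℝ) =ᵐ[P] P[(fun ω => g ω - Y ω)|mzx] := by
    refine ae_eq_condExp_of_forall_setIntegral_eq hmzxle (int_g.sub int_Y) ?_ ?_ ?_
    · intro s _ _; exact (integrable_zero _ _ _).integrableOn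
    · intro s hs _
      rw [keyB s hs]; simp
    · exact stronglyMeasurable_const.aestronglyMeasurable
  have hgzx : P[g|mzx] =ᵐ[P] 0 := by
    have hsub2 := condExp_sub (μ := P) (m := mzx) int_hfun int_indf
    have hb := hbridge
    rw [hmazx_eq] at hb
    have hgsub : P[g|mzx] =ᵐ[P] P[hfun|mzx] - P[indf|mzx] := hsub2
    refine hgsub.trans ?_
    filter_upwards [hb] with ω hω
    simp only [Pi.sub_apply, Pi.zero_apply]
    rw [hω]; ring
  have hYmzx : P[Y|mzx] =ᵐ[P] 0 := by
    have hsub := condExp_sub (μ := P) (m := mzx) int_g int_Y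
    have h1 : P[g|mzx] - P[Y|mzx] =ᵐ[P] 0 := hsub.symm.trans hcond0.symm
    filter_upwards [h1, hgzx] with ω h1ω h2ω
    simp only [Pi.sub_apply, Pi.zero_apply] at h1ω h2ω ⊢
    linarith
  -- clip Y and apply completeness
  have hY0 : Y =ᵐ[P] 0 := by
    set Y' : Ω → ℝ := fun ω => max (-Cg) (min Cg (Y ω)) with hY'_def
    have hY'm : Measurable[m] Y' :=
      measurable_const.max (measurable_const.min hYsm.measurable)
    have hY'bd : ∀ ω, |Y' ω| ≤ Cg := by
      intro ω
      rw [abs_le, hY'_def]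
      constructor
      · exact le_max_left _ _
      · exact max_le (by linarith) (min_le_left _ _)
    have hY'ae : Y' =ᵐ[P] Y := by
      filter_upwards [hYbd] with ω hω
      obtain ⟨hl, hr⟩ := abs_le.mp hω
      rw [hY'_def]
      simp only
      rw [min_eq_right hr, max_eq_right hl]
    have h0 : Y' =ᵐ[P] 0 := by
      refine hcomplete Y' ?_ ⟨Cg, hY'bd⟩ ?_
      · rw [huax_eq]; exact hY'm
      · rw [← hmzx_def]
        exact (condExp_congr_ae hY'ae).trans hYmzx
    exact hY'ae.symm.trans h0
  -- final conversion
  have hfinal := condExp_sub (μ := P) (m := m) int_hfun int_indf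
  have hzero : P[hfun|m] - P[indf|m] =ᵐ[P] 0 := by
    have hfeq : P[hfun - indf|m] =ᵐ[P] 0 := hY0
    exact hfinal.symm.trans hfeq
  filter_upwards [hzero] with ω hω
  simp only [Pi.sub_apply, Pi.zero_apply] at hω
  linarith

/-- **Key transfer step in the proof of Proposition 1, part 2.** If `h` solves the
observed-level outcome bridge equation (for every `t`,
`E[h(t,W,A,X) | σ(A,Z,X)] = E[1{T > t} | σ(A,Z,X)]` a.s.), the outcome completeness
condition holds, and `Z` is conditionally independent of `(W, T)` given `σ(A,U,X)`, then `h`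
also solves the latent-level outcome bridge equation: for every `t`,
`E[h(t,W,A,X) | σ(A,U,X)] = E[1{T > t} | σ(A,U,X)]` a.s. -/
theorem outcome_bridge_transfer
    {Ω 𝓤 𝓧 𝓩 𝓦 : Type*} [MeasurableSpace Ω]
    [MeasurableSpace 𝓤] [StandardBorelSpace 𝓤] [MeasurableSpace 𝓧] [StandardBorelSpace 𝓧]
    [MeasurableSpace 𝓩] [StandardBorelSpace 𝓩] [MeasurableSpace 𝓦] [StandardBorelSpace 𝓦]
    (P : Measure Ω) [IsProbabilityMeasure P]
    -- the random variables
    (A : Ω → ℝ) (T : Ω → ℝ) (U : Ω → 𝓤) (X : Ω → 𝓧) (Z : Ω → 𝓩) (W : Ω → 𝓦)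
    (hA : Measurable A) (hT : Measurable T) (hU : Measurable U) (hX : Measurable X)
    (hZ : Measurable Z) (hW : Measurable W)
    (hA01 : ∀ ω, A ω = 0 ∨ A ω = 1)
    -- `h t` is, for each `t`, a bounded measurable function of `(W, A, X)`
    (h : ℝ → 𝓦 × ℝ × 𝓧 → ℝ) (hh : ∀ t, Measurable (h t))
    (hhbdd : ∀ t, ∃ C, ∀ x, |h t x| ≤ C)
    -- observed-level outcome bridge equation
    (hbridge : ∀ t : ℝ,
      (P[(fun ω => h t (W ω, A ω, X ω))|
          MeasurableSpace.comap (fun ω => (A ω, Z ω, X ω)) inferInstance])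
        =ᵐ[P]
      (P[(fun ω => if t < T ω then (1 : ℝ) else 0)|
          MeasurableSpace.comap (fun ω => (A ω, Z ω, X ω)) inferInstance]))
    -- outcome completeness
    (hcomplete : ∀ Y : Ω → ℝ,
      Measurable[MeasurableSpace.comap (fun ω => (U ω, A ω, X ω)) inferInstance] Y →
      (∃ C, ∀ ω, |Y ω| ≤ C) →
      (P[Y|MeasurableSpace.comap (fun ω => (Z ω, A ω, X ω)) inferInstance]) =ᵐ[P] 0 →
      Y =ᵐ[P] 0)
    -- `Z` is conditionally independent of `(W, T)` given `σ(A, U, X)`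
    (hproxy : CondIndepGiven P
      (MeasurableSpace.comap (fun ω => (A ω, U ω, X ω)) inferInstance)
      Z (fun ω => (W ω, T ω))) :
    ∀ t : ℝ,
      (P[(fun ω => h t (W ω, A ω, X ω))|
          MeasurableSpace.comap (fun ω => (A ω, U ω, X ω)) inferInstance])
        =ᵐ[P]
      (P[(fun ω => if t < T ω then (1 : ℝ) else 0)|
          MeasurableSpace.comap (fun ω => (A ω, U ω, X ω)) inferInstance]) := by
  intro t
  exact aux_outcome_bridge_transfer A T U X Z W t h _ _ _ rfl rfl rfl P
    hA hT hU hX hZ hW (hh t) (hhbdd t) (hbridge t) hcomplete hproxy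
end

section
/- Suppose h satisfies the latent-level outcome bridge equation (for every t ∈ ℝ, E[h(t,W,A,X) | σ(A,U,X)] = E[1{T>t} | σ(A,U,X)] a.s.) and proxy independence holds. Then for every a ∈ {0,1} and every t ∈ ℝ, P(T(a) > t) = E[ h(t,W,a,X) ]. (Proximal outcome-regression identification.) -/
open MeasureTheory ProbabilityTheory

lemma bdd_integrable {Ω : Type*} [MeasurableSpace Ω] (P : Measure Ω) [IsProbabilityMeasure P]
    {f : Ω → ℝ} (hf : AEStronglyMeasurable f P) (hb : ∃ C, ∀ ω, |f ω| ≤ C) :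
    Integrable f P := by
  obtain ⟨C, hC⟩ := hb
  exact Integrable.mono' (integrable_const C) hf (Filter.Eventually.of_forall fun ω => hC ω)

lemma abs_mul_le {x y c d : ℝ} (hx : |x| ≤ c) (hy : |y| ≤ d) : |x * y| ≤ c * d := by
  rw [abs_mul]
  exact mul_le_mul hx hy (abs_nonneg _) ((abs_nonneg x).trans hx)

lemma integral_mul_condexp {Ω : Type*} {m mΩ : MeasurableSpace Ω} (hm : m ≤ mΩ)
    (P : Measure Ω) [IsProbabilityMeasure P] {k g : Ω → ℝ}
    (hk : StronglyMeasurable[m] k)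
    (hg : Integrable g P) (hkg : Integrable (fun ω => k ω * g ω) P) :
    ∫ ω, k ω * g ω ∂P = ∫ ω, k ω * (P[g|m]) ω ∂P := by
  have h1 := condExp_mul_of_stronglyMeasurable_left (μ := P) hk hkg hg
  calc ∫ ω, k ω * g ω ∂P = ∫ ω, (P[fun ω => k ω * g ω|m]) ω ∂P := (integral_condExp hm).symm
    _ = ∫ ω, k ω * (P[g|m]) ω ∂P := integral_congr_ae h1
open scoped ENNReal NNReal

lemma factor_integral {Ω 𝓦 𝓥 : Type*} [MeasurableSpace Ω] [MeasurableSpace 𝓦]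
    [MeasurableSpace 𝓥] (P : Measure Ω) [IsProbabilityMeasure P]
    {W : Ω → 𝓦} {V : Ω → 𝓥} (hW : Measurable W) (hV : Measurable V)
    {ι ρ : Ω → ℝ} (hι : Measurable ι) (hι01 : ∀ ω, 0 ≤ ι ω ∧ ι ω ≤ 1)
    (hρ : Measurable ρ) (hρ0 : 0 ≤ᵐ[P] ρ) (hρ1 : ρ ≤ᵐ[P] fun _ => (1:ℝ))
    (hrect : ∀ s : Set 𝓦, ∀ v : Set 𝓥, MeasurableSet s → MeasurableSet v →
      ∫ ω in W ⁻¹' s ∩ V ⁻¹' v, ι ω ∂P = ∫ ω in W ⁻¹' s ∩ V ⁻¹' v, ρ ω ∂P)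
    (φ : 𝓦 × 𝓥 → ℝ) (hφ : Measurable φ) (hφb : ∃ C, ∀ x, |φ x| ≤ C) :
    ∫ ω, ι ω * φ (W ω, V ω) ∂P = ∫ ω, ρ ω * φ (W ω, V ω) ∂P := by
  have hιb : ∀ ω, |ι ω| ≤ 1 := fun ω => abs_le.mpr ⟨by linarith [(hι01 ω).1], (hι01 ω).2⟩
  have hιint : Integrable ι P := bdd_integrable P hι.aestronglyMeasurable ⟨1, hιb⟩
  have hρb : ∀ᵐ ω ∂P, |ρ ω| ≤ 1 := by
    filter_upwards [hρ0, hρ1] with ω h0 h1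
    have h0' : 0 ≤ ρ ω := by simpa using h0
    exact abs_le.mpr ⟨by linarith, h1⟩
  have hρint : Integrable ρ P := Integrable.mono' (integrable_const 1)
    hρ.aestronglyMeasurable hρb
  set Y : Ω → 𝓦 × 𝓥 := fun ω => (W ω, V ω) with hYdef
  have hY : Measurable Y := hW.prodMk hV
  set μ₁ : Measure (𝓦 × 𝓥) := (P.withDensity fun ω => ENNReal.ofReal (ι ω)).map Y with hμ₁
  set μ₂ : Measure (𝓦 × 𝓥) := (P.withDensity fun ω => ENNReal.ofReal (ρ ω)).map Y with hμ₂
  haveI f1 : IsFiniteMeasure (P.withDensity fun ω => ENNReal.ofReal (ι ω)) :=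
    isFiniteMeasure_withDensity_ofReal hιint.hasFiniteIntegral
  haveI f2 : IsFiniteMeasure (P.withDensity fun ω => ENNReal.ofReal (ρ ω)) :=
    isFiniteMeasure_withDensity_ofReal hρint.hasFiniteIntegral
  haveI : IsFiniteMeasure μ₁ := by rw [hμ₁]; infer_instance
  haveI : IsFiniteMeasure μ₂ := by rw [hμ₂]; infer_instance
  have key : ∀ s : Set 𝓦, ∀ v : Set 𝓥, MeasurableSet s → MeasurableSet v →
      μ₁ (s ×ˢ v) = μ₂ (s ×ˢ v) := by
    intro s v hs hv
    have hsv : MeasurableSet (s ×ˢ v) := hs.prod hv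
    have hpre : Y ⁻¹' (s ×ˢ v) = W ⁻¹' s ∩ V ⁻¹' v := rfl
    rw [hμ₁, hμ₂, Measure.map_apply hY hsv, Measure.map_apply hY hsv,
      withDensity_apply _ (hY hsv), withDensity_apply _ (hY hsv), hpre,
      ← ofReal_integral_eq_lintegral_ofReal hιint.integrableOn
        (ae_restrict_of_ae (Filter.Eventually.of_forall fun ω => (hι01 ω).1)),
      ← ofReal_integral_eq_lintegral_ofReal hρint.integrableOn (ae_restrict_of_ae hρ0),
      hrect s v hs hv]
  have hμeq : μ₁ = μ₂ := by
    refine ext_of_generate_finite _ generateFrom_prod.symm isPiSystem_prod ?_ ?_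
    · rintro _ ⟨s, hs, v, hv, rfl⟩
      exact key s v hs hv
    · have := key Set.univ Set.univ MeasurableSet.univ MeasurableSet.univ
      rwa [Set.univ_prod_univ] at this
  have conv : ∀ (d : Ω → ℝ), Measurable d → (0 ≤ᵐ[P] d) →
      ∫ y, φ y ∂((P.withDensity fun ω => ENNReal.ofReal (d ω)).map Y)
        = ∫ ω, d ω * φ (Y ω) ∂P := by
    intro d hd hd0
    rw [integral_map hY.aemeasurable hφ.aestronglyMeasurable]
    have hden : (fun ω => ENNReal.ofReal (d ω))
        = fun ω => (((d ω).toNNReal : ℝ≥0) : ℝ≥0∞) := rfl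
    rw [hden, integral_withDensity_eq_integral_smul hd.real_toNNReal]
    refine integral_congr_ae ?_
    filter_upwards [hd0] with ω h0
    simp [NNReal.smul_def, Real.coe_toNNReal _ h0]
  calc ∫ ω, ι ω * φ (W ω, V ω) ∂P = ∫ y, φ y ∂μ₁ :=
        (conv ι hι (Filter.Eventually.of_forall fun ω => (hι01 ω).1)).symm
    _ = ∫ y, φ y ∂μ₂ := by rw [hμeq]
    _ = ∫ ω, ρ ω * φ (W ω, V ω) ∂P := conv ρ hρ hρ0

lemma key_identity {Ω 𝓤 𝓧 𝓩 𝓦 : Type*}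
    [MeasurableSpace 𝓤] [MeasurableSpace 𝓧] [MeasurableSpace 𝓩] [MeasurableSpace 𝓦]
    {m mbig : MeasurableSpace Ω} [instΩ : MeasurableSpace Ω]
    (P : Measure Ω) [IsProbabilityMeasure P]
    (A Ta T : Ω → ℝ) (U : Ω → 𝓤) (X : Ω → 𝓧) (Z : Ω → 𝓩) (W : Ω → 𝓦)
    (hA : Measurable A) (hTa : Measurable Ta) (hTmeas : Measurable T)
    (hU : Measurable U) (hX : Measurable X) (hW : Measurable W)
    (a t : ℝ)
    (hcons : ∀ ω, A ω = a → T ω = Ta ω)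
    (hmdef : m = MeasurableSpace.comap (fun ω => (U ω, X ω)) inferInstance)
    (hmbigdef : mbig = MeasurableSpace.comap (fun ω => (A ω, U ω, X ω)) inferInstance)
    (h : ℝ → 𝓦 × ℝ × 𝓧 → ℝ) (hht : Measurable (h t)) (hhbddt : ∃ C, ∀ x, |h t x| ≤ C)
    (hbridge : (P[(fun ω => h t (W ω, A ω, X ω))|mbig]) =ᵐ[P]
      (P[(fun ω => if t < T ω then (1 : ℝ) else 0)|mbig]))
    (hproxy : CondIndepGiven P m (fun ω => (Z ω, A ω)) (fun ω => (W ω, Ta ω)))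
    (hρpos : ∀ᵐ ω ∂P, 0 < (P[fun ω => if A ω = a then (1:ℝ) else 0|m]) ω) :
    (P {ω | t < Ta ω}).toReal = ∫ ω, h t (W ω, a, X ω) ∂P := by
  obtain ⟨C₀, hC₀⟩ := hhbddt
  set C : ℝ := max C₀ 0 with hCdef
  have hC : ∀ x, |h t x| ≤ C := fun x => (hC₀ x).trans (le_max_left _ _)
  have hC0 : 0 ≤ C := le_max_right _ _
  have hVmeas : Measurable (fun ω => (U ω, X ω)) := hU.prodMk hX
  have hm : m ≤ instΩ := by rw [hmdef]; exact hVmeas.comap_le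
  have hmbig : mbig ≤ instΩ := by
    rw [hmbigdef]; exact (hA.prodMk (hU.prodMk hX)).comap_le
  have hmm : m ≤ mbig := by
    have hco : (fun ω => (U ω, X ω))
        = (fun p : ℝ × 𝓤 × 𝓧 => p.2) ∘ (fun ω => (A ω, U ω, X ω)) := rfl
    rw [hmdef, hmbigdef, hco, ← MeasurableSpace.comap_comp]
    exact MeasurableSpace.comap_mono measurable_snd.comap_le
  -- the main functions
  set ι : Ω → ℝ := fun ω => if A ω = a then (1:ℝ) else 0 with hιdef
  set H : Ω → ℝ := fun ω => h t (W ω, A ω, X ω) with hHdef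
  set G : Ω → ℝ := fun ω => h t (W ω, a, X ω) with hGdef
  set St : Ω → ℝ := fun ω => if t < T ω then (1:ℝ) else 0 with hStdef
  set Sa : Ω → ℝ := fun ω => if t < Ta ω then (1:ℝ) else 0 with hSadef
  have hιmeas : Measurable ι := by
    rw [hιdef]
    exact Measurable.ite (hA (measurableSet_singleton a)) measurable_const measurable_const
  have hι01 : ∀ ω, 0 ≤ ι ω ∧ ι ω ≤ 1 := by
    intro ω; rw [hιdef]; dsimp only; constructor <;> (split_ifs <;> norm_num)
  have hιabs : ∀ ω, |ι ω| ≤ 1 := fun ω => abs_le.mpr ⟨by linarith [(hι01 ω).1], (hι01 ω).2⟩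
  have hHmeas : Measurable H := by
    rw [hHdef]; exact hht.comp (hW.prodMk (hA.prodMk hX))
  have hGmeas : Measurable G := by
    rw [hGdef]; exact hht.comp (hW.prodMk (measurable_const.prodMk hX))
  have hStmeas : Measurable St := by
    rw [hStdef]
    exact Measurable.ite (measurableSet_lt measurable_const hTmeas)
      measurable_const measurable_const
  have hSameas : Measurable Sa := by
    rw [hSadef]
    exact Measurable.ite (measurableSet_lt measurable_const hTa)
      measurable_const measurable_const
  have hHabs : ∀ ω, |H ω| ≤ C := fun ω => by rw [hHdef]; exact hC _
  have hGabs : ∀ ω, |G ω| ≤ C := fun ω => by rw [hGdef]; exact hC _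
  have hStabs : ∀ ω, |St ω| ≤ 1 := by
    intro ω; rw [hStdef]; dsimp only; split_ifs <;> norm_num
  have hSaabs : ∀ ω, |Sa ω| ≤ 1 := by
    intro ω; rw [hSadef]; dsimp only; split_ifs <;> norm_num
  -- integrability
  have hHint : Integrable H P := bdd_integrable P hHmeas.aestronglyMeasurable ⟨C, hHabs⟩
  have hGint : Integrable G P := bdd_integrable P hGmeas.aestronglyMeasurable ⟨C, hGabs⟩
  have hStint : Integrable St P := bdd_integrable P hStmeas.aestronglyMeasurable ⟨1, hStabs⟩
  have hSaint : Integrable Sa P := bdd_integrable P hSameas.aestronglyMeasurable ⟨1, hSaabs⟩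
  have hιint : Integrable ι P := bdd_integrable P hιmeas.aestronglyMeasurable ⟨1, hιabs⟩
  have hιHint : Integrable (fun ω => ι ω * H ω) P :=
    bdd_integrable P (hιmeas.mul hHmeas).aestronglyMeasurable
      ⟨1 * C, fun ω => abs_mul_le (hιabs ω) (hHabs ω)⟩
  have hιGint : Integrable (fun ω => ι ω * G ω) P :=
    bdd_integrable P (hιmeas.mul hGmeas).aestronglyMeasurable
      ⟨1 * C, fun ω => abs_mul_le (hιabs ω) (hGabs ω)⟩
  have hιStint : Integrable (fun ω => ι ω * St ω) P :=
    bdd_integrable P (hιmeas.mul hStmeas).aestronglyMeasurable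
      ⟨1 * 1, fun ω => abs_mul_le (hιabs ω) (hStabs ω)⟩
  -- mbig-measurability of ι
  have hbigmeas : Measurable[mbig] (fun ω => (A ω, U ω, X ω)) :=
    Measurable.of_comap_le (le_of_eq hmbigdef.symm)
  have hAbig : Measurable[mbig] A := measurable_fst.comp hbigmeas
  have hιbig : Measurable[mbig] ι := by
    rw [hιdef]
    exact Measurable.ite (hAbig (measurableSet_singleton a)) measurable_const measurable_const
  -- Step 1: bridge equation, multiplied by the treatment indicator, projected to m
  have e1 : P[fun ω => ι ω * H ω|mbig] =ᵐ[P] P[fun ω => ι ω * St ω|mbig] := by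
    have h1 := condExp_mul_of_stronglyMeasurable_left (μ := P) (m := mbig)
      hιbig.stronglyMeasurable (by exact hιHint) hHint
    have h2 := condExp_mul_of_stronglyMeasurable_left (μ := P) (m := mbig)
      hιbig.stronglyMeasurable (by exact hιStint) hStint
    refine (h1.trans ?_).trans h2.symm
    filter_upwards [hbridge] with ω hω
    simp only [Pi.mul_apply]
    rw [hω]
  have e2 : P[fun ω => ι ω * H ω|m] =ᵐ[P] P[fun ω => ι ω * St ω|m] :=
    ((condExp_condExp_of_le hmm hmbig).symm.trans (condExp_congr_ae e1)).trans
      (condExp_condExp_of_le hmm hmbig)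
  -- rewrite both sides using A = a on {A = a}
  have hGpt : (fun ω => ι ω * H ω) = fun ω => ι ω * G ω := by
    funext ω; rw [hιdef, hHdef, hGdef]; dsimp only
    by_cases hω : A ω = a <;> simp [hω]
  have hSpt : (fun ω => ι ω * St ω) = fun ω => ι ω * Sa ω := by
    funext ω; rw [hιdef, hStdef, hSadef]; dsimp only
    by_cases hω : A ω = a <;> simp [hω, hcons ω]
  have e3 : P[fun ω => ι ω * G ω|m] =ᵐ[P] P[fun ω => ι ω * Sa ω|m] := by
    rw [← hGpt, ← hSpt]; exact e2
  -- the conditional treatment probability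
  set ρ : Ω → ℝ := P[ι|m] with hρdef
  have hρm : StronglyMeasurable[m] ρ := stronglyMeasurable_condExp
  have hρmeas : Measurable ρ := (hρm.mono hm).measurable
  have hρ0 : 0 ≤ᵐ[P] ρ :=
    condExp_nonneg (Filter.Eventually.of_forall fun ω => (hι01 ω).1)
  have hρ1 : ρ ≤ᵐ[P] fun _ => (1 : ℝ) := by
    have hmono := condExp_mono (m := m) (μ := P) hιint (integrable_const 1)
      (Filter.Eventually.of_forall fun ω => (hι01 ω).2)
    rw [condExp_const hm] at hmono
    exact hmono
  -- Step 2 (easy side): proxy independence factorizes the Sa side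
  have e4 : P[fun ω => ι ω * Sa ω|m] =ᵐ[P] fun ω => ρ ω * (P[Sa|m]) ω := by
    have hps := hproxy (fun p => if p.2 = a then 1 else 0) (fun p => if t < p.2 then 1 else 0)
      (Measurable.ite (measurable_snd (measurableSet_singleton a))
        measurable_const measurable_const)
      (Measurable.ite (measurableSet_lt measurable_const measurable_snd)
        measurable_const measurable_const)
      ⟨1, fun x => by split_ifs <;> norm_num⟩
      ⟨1, fun x => by split_ifs <;> norm_num⟩
    exact hps
  -- Step 3 (hard side): rectangle identity from proxy independence
  have hrect : ∀ s : Set 𝓦, ∀ v : Set (𝓤 × 𝓧), MeasurableSet s → MeasurableSet v →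
      ∫ ω in W ⁻¹' s ∩ (fun ω => (U ω, X ω)) ⁻¹' v, ι ω ∂P
        = ∫ ω in W ⁻¹' s ∩ (fun ω => (U ω, X ω)) ⁻¹' v, ρ ω ∂P := by
    intro s v hs hv
    set u : Set Ω := (fun ω => (U ω, X ω)) ⁻¹' v with hudef
    have hum : MeasurableSet[m] u := by rw [hmdef]; exact ⟨v, hv, rfl⟩
    have huΩ : MeasurableSet u := hm _ hum
    set Is : Ω → ℝ := fun ω => s.indicator (fun _ => (1:ℝ)) (W ω) with hIsdef
    have hIsmeas : Measurable Is := by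
      rw [hIsdef]; exact (measurable_const.indicator hs).comp hW
    have hIsabs : ∀ ω, |Is ω| ≤ 1 := by
      intro ω; rw [hIsdef]; dsimp only
      by_cases hω : W ω ∈ s
      · rw [Set.indicator_of_mem hω]; norm_num
      · rw [Set.indicator_of_notMem hω]; norm_num
    have hIsint : Integrable Is P := bdd_integrable P hIsmeas.aestronglyMeasurable ⟨1, hIsabs⟩
    have hιIsint : Integrable (fun ω => ι ω * Is ω) P :=
      bdd_integrable P (hιmeas.mul hIsmeas).aestronglyMeasurable
        ⟨1 * 1, fun ω => abs_mul_le (hιabs ω) (hIsabs ω)⟩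
    have hβ : P[fun ω => ι ω * Is ω|m] =ᵐ[P] fun ω => ρ ω * (P[Is|m]) ω := by
      have hps := hproxy (fun p => if p.2 = a then 1 else 0)
        (fun p => s.indicator (fun _ => (1:ℝ)) p.1)
        (Measurable.ite (measurable_snd (measurableSet_singleton a))
          measurable_const measurable_const)
        ((measurable_const.indicator hs).comp measurable_fst)
        ⟨1, fun x => by split_ifs <;> norm_num⟩
        ⟨1, fun x => by
          by_cases hx : x.1 ∈ s
          · rw [Set.indicator_of_mem hx]; norm_num
          · rw [Set.indicator_of_notMem hx]; norm_num⟩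
      exact hps
    have hprod : ∀ (d : Ω → ℝ), (fun ω => d ω * Is ω) = (W ⁻¹' s).indicator d := by
      intro d; funext ω
      rw [hIsdef]
      by_cases hω : W ω ∈ s
      · simp [Set.indicator_of_mem, hω]
      · simp [Set.indicator_of_notMem, hω]
    have l1 : ∫ ω in W ⁻¹' s ∩ u, ι ω ∂P = ∫ ω in u, ι ω * Is ω ∂P := by
      rw [hprod ι, setIntegral_indicator (hW hs), Set.inter_comm]
    have l4 : ∫ ω in u, ρ ω * Is ω ∂P = ∫ ω in W ⁻¹' s ∩ u, ρ ω ∂P := by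
      rw [hprod ρ, setIntegral_indicator (hW hs), Set.inter_comm]
    have l2 : ∫ ω in u, ι ω * Is ω ∂P = ∫ ω in u, ρ ω * (P[Is|m]) ω ∂P := by
      rw [← setIntegral_condExp hm hιIsint hum]
      exact integral_congr_ae (ae_restrict_of_ae hβ)
    have l3 : ∫ ω in u, ρ ω * (P[Is|m]) ω ∂P = ∫ ω in u, ρ ω * Is ω ∂P := by
      have hind : ∀ (g : Ω → ℝ),
          (fun ω => u.indicator ρ ω * g ω) = u.indicator (fun ω => ρ ω * g ω) := by
        intro g; funext ω
        by_cases hω : ω ∈ u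
        · simp [Set.indicator_of_mem, hω]
        · simp [Set.indicator_of_notMem, hω]
      have hkabs : ∀ᵐ ω ∂P, |u.indicator ρ ω| ≤ 1 := by
        filter_upwards [hρ0, hρ1] with ω h0 h1
        have h0' : 0 ≤ ρ ω := by simpa using h0
        by_cases hω : ω ∈ u
        · simp only [Set.indicator_of_mem hω]
          exact abs_le.mpr ⟨by linarith, h1⟩
        · simp [Set.indicator_of_notMem hω]
      have hkint : Integrable (fun ω => u.indicator ρ ω * Is ω) P := by
        refine Integrable.mono' (integrable_const (1 * 1))
          ((hρmeas.indicator huΩ).mul hIsmeas).aestronglyMeasurable ?_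
        filter_upwards [hkabs] with ω hk
        exact abs_mul_le hk (hIsabs ω)
      rw [← integral_indicator huΩ, ← integral_indicator huΩ]
      simp only [← hind]
      exact (integral_mul_condexp hm P (hρm.indicator hum) hIsint hkint).symm
    rw [l1, l2, l3, l4]
  -- the factorization for arbitrary bounded measurable functions of (W, (U, X))
  have hfac : ∀ (φ : 𝓦 × (𝓤 × 𝓧) → ℝ), Measurable φ → (∃ Cφ, ∀ x, |φ x| ≤ Cφ) →
      ∫ ω, ι ω * φ (W ω, (U ω, X ω)) ∂P = ∫ ω, ρ ω * φ (W ω, (U ω, X ω)) ∂P :=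
    fun φ hφ hφb =>
      factor_integral P hW hVmeas hιmeas hι01 hρmeas hρ0 hρ1 hrect φ hφ hφb
  -- conditional-expectation form of the factorization, on the G side
  have hEGbdd : ∀ᵐ ω ∂P, |(P[G|m]) ω| ≤ (C.toNNReal : ℝ) := by
    refine ae_bdd_condExp_of_ae_bdd (Filter.Eventually.of_forall fun ω => ?_)
    rw [Real.coe_toNNReal _ hC0]
    exact hGabs ω
  have e5 : (fun ω => ρ ω * (P[G|m]) ω) =ᵐ[P] P[fun ω => ι ω * G ω|m] := by
    refine ae_eq_condExp_of_forall_setIntegral_eq hm (by exact hιGint) ?_ ?_ ?_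
    · intro s hs hfin
      refine (Integrable.mono' (integrable_const (1 * C))
        (hρmeas.mul (stronglyMeasurable_condExp.mono hm).measurable).aestronglyMeasurable
        ?_).integrableOn
      filter_upwards [hρ0, hρ1, hEGbdd] with ω h0 h1 h2
      have h0' : 0 ≤ ρ ω := by simpa using h0
      rw [Real.coe_toNNReal _ hC0] at h2
      exact abs_mul_le (abs_le.mpr ⟨by linarith, h1⟩) h2
    · intro s hs hfin
      rw [hmdef] at hs
      obtain ⟨v, hv, rfl⟩ := hs
      set u : Set Ω := (fun ω => (U ω, X ω)) ⁻¹' v with hudef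
      have hum : MeasurableSet[m] u := by rw [hmdef]; exact ⟨v, hv, rfl⟩
      have huΩ : MeasurableSet u := hm _ hum
      have hind : ∀ (g : Ω → ℝ),
          (fun ω => u.indicator ρ ω * g ω) = u.indicator (fun ω => ρ ω * g ω) := by
        intro g; funext ω
        by_cases hω : ω ∈ u
        · simp [Set.indicator_of_mem, hω]
        · simp [Set.indicator_of_notMem, hω]
      have hkabs : ∀ᵐ ω ∂P, |u.indicator ρ ω| ≤ 1 := by
        filter_upwards [hρ0, hρ1] with ω h0 h1
        have h0' : 0 ≤ ρ ω := by simpa using h0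
        by_cases hω : ω ∈ u
        · simp only [Set.indicator_of_mem hω]
          exact abs_le.mpr ⟨by linarith, h1⟩
        · simp [Set.indicator_of_notMem hω]
      have hkGint : Integrable (fun ω => u.indicator ρ ω * G ω) P := by
        refine Integrable.mono' (integrable_const (1 * C))
          ((hρmeas.indicator huΩ).mul hGmeas).aestronglyMeasurable ?_
        filter_upwards [hkabs] with ω hk
        exact abs_mul_le hk (hGabs ω)
      have stepA : ∫ ω in u, ρ ω * (P[G|m]) ω ∂P = ∫ ω in u, ρ ω * G ω ∂P := by
        rw [← integral_indicator huΩ, ← integral_indicator huΩ]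
        simp only [← hind]
        exact (integral_mul_condexp hm P (hρm.indicator hum) hGint hkGint).symm
      have stepB : ∫ ω in u, ρ ω * G ω ∂P = ∫ ω in u, ι ω * G ω ∂P := by
        set φ' : 𝓦 × (𝓤 × 𝓧) → ℝ :=
          fun p => v.indicator (fun _ => (1:ℝ)) p.2 * h t (p.1, a, p.2.2) with hφ'def
        have hφ'meas : Measurable φ' := by
          rw [hφ'def]
          exact ((measurable_const.indicator hv).comp measurable_snd).mul
            (hht.comp ((measurable_fst).prodMk
              (measurable_const.prodMk (measurable_snd.comp measurable_snd))))
        have hφ'b : ∀ x, |φ' x| ≤ 1 * C := by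
          intro x; rw [hφ'def]; dsimp only
          refine abs_mul_le ?_ (hC _)
          by_cases hx : x.2 ∈ v
          · rw [Set.indicator_of_mem hx]; norm_num
          · rw [Set.indicator_of_notMem hx]; norm_num
        have hindφ : ∀ (d : Ω → ℝ),
            (fun ω => d ω * φ' (W ω, (U ω, X ω))) = u.indicator (fun ω => d ω * G ω) := by
          intro d; funext ω
          rw [hφ'def, hGdef]
          by_cases hω : ω ∈ u
          · have hv' : (U ω, X ω) ∈ v := hω
            simp [Set.indicator_of_mem, hω, hv']
          · have hv' : (U ω, X ω) ∉ v := hω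
            simp [Set.indicator_of_notMem, hω, hv']
        have hface := hfac φ' hφ'meas ⟨1 * C, hφ'b⟩
        rw [hindφ ι, hindφ ρ] at hface
        rw [← integral_indicator huΩ, ← integral_indicator huΩ]
        exact hface.symm
      rw [stepA, stepB]
    · exact (hρm.mul stronglyMeasurable_condExp).aestronglyMeasurable
  -- combine everything
  have e6 : (fun ω => ρ ω * (P[G|m]) ω) =ᵐ[P] fun ω => ρ ω * (P[Sa|m]) ω :=
    (e5.trans e3).trans e4
  have e7 : P[G|m] =ᵐ[P] P[Sa|m] := by
    filter_upwards [e6, hρpos] with ω h1 h2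
    exact mul_left_cancel₀ (ne_of_gt h2) h1
  have hfinal : ∫ ω, G ω ∂P = ∫ ω, Sa ω ∂P := by
    rw [← integral_condExp hm (f := G), ← integral_condExp hm (f := Sa)]
    exact integral_congr_ae e7
  have hSaInt : ∫ ω, Sa ω ∂P = (P {ω | t < Ta ω}).toReal := by
    have hSaind : Sa = Set.indicator {ω | t < Ta ω} (fun _ => (1:ℝ)) := by
      funext ω; rw [hSadef]
      by_cases hω : t < Ta ω
      · simp [Set.indicator_of_mem, hω, Set.mem_setOf_eq]
      · simp [Set.indicator_of_notMem, hω, Set.mem_setOf_eq]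
    have hmeasset : MeasurableSet {ω | t < Ta ω} := measurableSet_lt measurable_const hTa
    rw [hSaind]
    exact integral_indicator_one hmeasset
  show (P {ω | t < Ta ω}).toReal = ∫ ω, G ω ∂P
  rw [hfinal, hSaInt]

/-- **Proximal outcome-regression identification.** If `h` solves the latent-level outcome
bridge equation (for every `t`, `E[h(t,W,A,X) | σ(A,U,X)] = E[1{T > t} | σ(A,U,X)]` a.s.)
and proxy independence holds, then for every `a ∈ {0,1}` and `t ∈ ℝ`,
`P(T(a) > t) = E[ h(t, W, a, X) ]`. -/
theorem proximal_outcome_regression_identification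
    {Ω 𝓤 𝓧 𝓩 𝓦 : Type*} [MeasurableSpace Ω]
    [MeasurableSpace 𝓤] [StandardBorelSpace 𝓤] [MeasurableSpace 𝓧] [StandardBorelSpace 𝓧]
    [MeasurableSpace 𝓩] [StandardBorelSpace 𝓩] [MeasurableSpace 𝓦] [StandardBorelSpace 𝓦]
    (P : Measure Ω) [IsProbabilityMeasure P]
    -- the random variables
    (A : Ω → ℝ) (T1 T0 : Ω → ℝ) (U : Ω → 𝓤) (X : Ω → 𝓧) (Z : Ω → 𝓩) (W : Ω → 𝓦)
    (hA : Measurable A) (hT1 : Measurable T1) (hT0 : Measurable T0)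
    (hU : Measurable U) (hX : Measurable X) (hZ : Measurable Z) (hW : Measurable W)
    (hA01 : ∀ ω, A ω = 0 ∨ A ω = 1)
    -- observed outcome (consistency)
    (T : Ω → ℝ) (hT : ∀ ω, T ω = A ω * T1 ω + (1 - A ω) * T0 ω)
    -- positivity for a version `π` of `P(A = 1 | σ(U, X))`
    (π : Ω → ℝ)
    (hπver : π =ᵐ[P] P[A|MeasurableSpace.comap (fun ω => (U ω, X ω)) inferInstance])
    (hπpos : ∀ᵐ ω ∂P, 0 < π ω ∧ π ω < 1)
    -- `h t` is, for each `t`, a bounded measurable function of `(W, A, X)`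
    (h : ℝ → 𝓦 × ℝ × 𝓧 → ℝ) (hh : ∀ t, Measurable (h t))
    (hhbdd : ∀ t, ∃ C, ∀ x, |h t x| ≤ C)
    -- latent-level outcome bridge equation
    (hbridge : ∀ t : ℝ,
      (P[(fun ω => h t (W ω, A ω, X ω))|
          MeasurableSpace.comap (fun ω => (A ω, U ω, X ω)) inferInstance])
        =ᵐ[P]
      (P[(fun ω => if t < T ω then (1 : ℝ) else 0)|
          MeasurableSpace.comap (fun ω => (A ω, U ω, X ω)) inferInstance]))
    -- proxy independence: `(Z, A) ⟂ (W, T(a)) | σ(U, X)` for `a = 1, 0`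
    (hproxy1 : CondIndepGiven P (MeasurableSpace.comap (fun ω => (U ω, X ω)) inferInstance)
      (fun ω => (Z ω, A ω)) (fun ω => (W ω, T1 ω)))
    (hproxy0 : CondIndepGiven P (MeasurableSpace.comap (fun ω => (U ω, X ω)) inferInstance)
      (fun ω => (Z ω, A ω)) (fun ω => (W ω, T0 ω))) :
    ∀ a : ℝ, (a = 0 ∨ a = 1) → ∀ t : ℝ,
      (P {ω | t < (if a = 1 then T1 ω else T0 ω)}).toReal
        = ∫ ω, h t (W ω, a, X ω) ∂P := by
  intro a ha t
  have hAint : Integrable A P := by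
    refine bdd_integrable P hA.aestronglyMeasurable ⟨1, fun ω => ?_⟩
    rcases hA01 ω with hω | hω <;> rw [hω] <;> norm_num
  have hm : MeasurableSpace.comap (fun ω => (U ω, X ω)) inferInstance
      ≤ (inferInstance : MeasurableSpace Ω) := (hU.prodMk hX).comap_le
  have hTmeas : Measurable T := by
    have hTfun : T = fun ω => A ω * T1 ω + (1 - A ω) * T0 ω := funext hT
    rw [hTfun]
    exact (hA.mul hT1).add ((measurable_const.sub hA).mul hT0)
  rcases ha with rfl | rfl
  · -- a = 0
    have hι_eq : (fun ω => if A ω = (0:ℝ) then (1:ℝ) else 0) = fun ω => 1 - A ω := by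
      funext ω; rcases hA01 ω with hω | hω <;> simp [hω]
    have hρpos : ∀ᵐ ω ∂P, 0 <
        (P[fun ω => if A ω = (0:ℝ) then (1:ℝ) else 0|
          MeasurableSpace.comap (fun ω => (U ω, X ω)) inferInstance]) ω := by
      have hsub := condExp_sub (μ := P)
        (m := MeasurableSpace.comap (fun ω => (U ω, X ω)) inferInstance)
        (integrable_const (1:ℝ)) hAint
      have hρπ : (P[fun ω => if A ω = (0:ℝ) then (1:ℝ) else 0|
          MeasurableSpace.comap (fun ω => (U ω, X ω)) inferInstance])
          =ᵐ[P] fun ω => 1 - π ω := by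
        rw [hι_eq]
        have : (fun ω => (1:ℝ) - A ω) = fun ω => (fun _ => (1:ℝ)) ω - A ω := rfl
        rw [this]
        refine hsub.trans ?_
        filter_upwards [hπver] with ω hω
        simp only [Pi.sub_apply]
        rw [condExp_const hm, hω]
      filter_upwards [hρπ, hπpos] with ω h1 h2
      rw [h1]
      linarith [h2.2]
    have hgoal := key_identity P A T0 T U X Z W hA hT0 hTmeas hU hX hW 0 t
      (fun ω hω => by rw [hT ω, hω]; ring) rfl rfl h (hh t) (hhbdd t)
      (hbridge t) hproxy0 hρpos
    simpa using hgoal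
  · -- a = 1
    have hι_eq : (fun ω => if A ω = (1:ℝ) then (1:ℝ) else 0) = A := by
      funext ω; rcases hA01 ω with hω | hω <;> simp [hω]
    have hρpos : ∀ᵐ ω ∂P, 0 <
        (P[fun ω => if A ω = (1:ℝ) then (1:ℝ) else 0|
          MeasurableSpace.comap (fun ω => (U ω, X ω)) inferInstance]) ω := by
      rw [hι_eq]
      filter_upwards [hπver, hπpos] with ω h1 h2
      rw [← h1]; exact h2.1
    have hgoal := key_identity P A T1 T U X Z W hA hT1 hTmeas hU hX hW 1 t
      (fun ω hω => by rw [hT ω, hω]; ring) rfl rfl h (hh t) (hhbdd t)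
      (hbridge t) hproxy1 hρpos
    simpa using hgoal
end

section
/- Suppose h satisfies the latent-level outcome bridge equation (for every t ∈ ℝ, E[h(t,W,A,X) | σ(A,U,X)] = E[1{T>t} | σ(A,U,X)] a.s.) and proxy independence holds. Then for every a ∈ {0,1}, every t ∈ ℝ, and every bounded measurable function q̃ of (Z,A,X), P(T(a) > t) = E[ 1{A=a}·q̃(Z,A,X)·(1{T>t} − h(t,W,A,X)) + h(t,W,a,X) ]. In particular, the doubly robust identifying functional recovers the counterfactual survival probability even when the treatment bridge function is arbitrarily misspecified. (Double robustness under model ℳ_h.) -/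
open MeasureTheory ProbabilityTheory

open Filter

private lemma bddInt {Ω : Type*} [MeasurableSpace Ω] {P : Measure Ω} [IsFiniteMeasure P]
    {f : Ω → ℝ} (hf : AEStronglyMeasurable f P) {C : ℝ} (hC : ∀ x, |f x| ≤ C) :
    Integrable f P :=
  memLp_one_iff_integrable.mp (MemLp.of_bound hf C
    (Eventually.of_forall (by simpa [Real.norm_eq_abs] using hC)))

private lemma ind_sum_tendsto {E : Type*} (S : ℕ → Set E)
    (hd : Pairwise (Function.onFun Disjoint S)) (x : E) :
    Tendsto (fun n => ∑ i ∈ Finset.range n, Set.indicator (S i) (fun _ => (1:ℝ)) x) atTop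
      (nhds (Set.indicator (⋃ i, S i) (fun _ => (1:ℝ)) x)) ∧
    ∀ n, |∑ i ∈ Finset.range n, Set.indicator (S i) (fun _ => (1:ℝ)) x| ≤ 1 := by
  by_cases hx : x ∈ ⋃ i, S i
  · obtain ⟨_, ⟨i₀, rfl⟩, hi₀⟩ := hx
    have hterm : ∀ i, Set.indicator (S i) (fun _ => (1:ℝ)) x = if i = i₀ then 1 else 0 := by
      intro i
      by_cases hii : i = i₀
      · simp [hii, Set.indicator_of_mem hi₀]
      · have : x ∉ S i := fun hxi => (hd hii).le_bot ⟨hxi, hi₀⟩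
        simp [Set.indicator_of_notMem this, hii]
    have hsum : ∀ n, ∑ i ∈ Finset.range n, Set.indicator (S i) (fun _ => (1:ℝ)) x
        = if i₀ ∈ Finset.range n then 1 else 0 := by
      intro n
      simp_rw [hterm]
      exact Finset.sum_ite_eq' _ _ _
    constructor
    · have hval : Set.indicator (⋃ i, S i) (fun _ => (1:ℝ)) x = 1 :=
        Set.indicator_of_mem (Set.mem_iUnion.mpr ⟨i₀, hi₀⟩) _
      rw [hval]
      refine tendsto_atTop_of_eventually_const (i₀ := i₀ + 1) fun n hn => ?_
      rw [hsum n, if_pos (Finset.mem_range.mpr (by omega))]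
    · intro n; rw [hsum n]; split <;> norm_num
  · have hterm : ∀ i, Set.indicator (S i) (fun _ => (1:ℝ)) x = 0 := by
      intro i
      exact Set.indicator_of_notMem (fun hxi => hx (Set.mem_iUnion.mpr ⟨i, hxi⟩)) _
    constructor
    · simp [hterm, Set.indicator_of_notMem hx]
    · intro n; simp [hterm]

private lemma condexp_mul_congr {Ω E : Type*} [mΩ : MeasurableSpace Ω] [mE : MeasurableSpace E]
    (P : Measure Ω) [IsProbabilityMeasure P] (m : MeasurableSpace Ω)
    (hm : m ≤ mΩ)
    (V : Ω → E) (hV : Measurable[mΩ] V)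
    (g' G : Ω → ℝ) (hg' : Integrable g' P) (hG : Integrable G P)
    (huniv : P[g'|m] =ᵐ[P] P[G|m])
    (𝒞 : Set (Set E)) (hgen : mE = MeasurableSpace.generateFrom 𝒞) (hpi : IsPiSystem 𝒞)
    (base : ∀ S ∈ 𝒞, P[fun ω => Set.indicator S (fun _ => (1:ℝ)) (V ω) * g' ω|m]
        =ᵐ[P] P[fun ω => Set.indicator S (fun _ => (1:ℝ)) (V ω) * G ω|m]) :
    ∀ f : E → ℝ, Measurable f → ∀ C : ℝ, (∀ x, |f x| ≤ C) →
      P[fun ω => f (V ω) * g' ω|m] =ᵐ[P] P[fun ω => f (V ω) * G ω|m] := by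
  -- integrability of bounded-times-integrable
  have hint : ∀ (q : Ω → ℝ), Integrable q P → ∀ (f : E → ℝ), Measurable f → ∀ C : ℝ,
      (∀ x, |f x| ≤ C) → Integrable (fun ω => f (V ω) * q ω) P := by
    intro q hq f hf C hC
    have hmv : Measurable[mΩ] fun ω => f (V ω) := hf.comp hV
    exact hq.bdd_mul (hmv.aestronglyMeasurable (μ := P))
      (Eventually.of_forall fun ω => by simpa [Real.norm_eq_abs] using hC (V ω))
  have hind : ∀ (S : Set E), MeasurableSet S → Measurable (Set.indicator S (fun _ => (1:ℝ))) :=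
    fun S hS => measurable_const.indicator hS
  have hindb : ∀ (S : Set E) (x : E), |Set.indicator S (fun _ => (1:ℝ)) x| ≤ 1 := by
    intro S x; by_cases h : x ∈ S <;> simp [Set.indicator, h]
  -- Step 1 : indicators of measurable sets
  have hset : ∀ S : Set E, MeasurableSet S →
      P[fun ω => Set.indicator S (fun _ => (1:ℝ)) (V ω) * g' ω|m]
        =ᵐ[P] P[fun ω => Set.indicator S (fun _ => (1:ℝ)) (V ω) * G ω|m] := by
    have h_empty : P[fun ω => Set.indicator (∅ : Set E) (fun _ => (1:ℝ)) (V ω) * g' ω|m]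
        =ᵐ[P] P[fun ω => Set.indicator (∅ : Set E) (fun _ => (1:ℝ)) (V ω) * G ω|m] := by
      simp [Set.indicator_empty]
    have h_compl : ∀ S : Set E, MeasurableSet S →
        (P[fun ω => Set.indicator S (fun _ => (1:ℝ)) (V ω) * g' ω|m]
          =ᵐ[P] P[fun ω => Set.indicator S (fun _ => (1:ℝ)) (V ω) * G ω|m]) →
        P[fun ω => Set.indicator Sᶜ (fun _ => (1:ℝ)) (V ω) * g' ω|m]
          =ᵐ[P] P[fun ω => Set.indicator Sᶜ (fun _ => (1:ℝ)) (V ω) * G ω|m] := by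
      intro S hS hrec
      have e : ∀ q : Ω → ℝ, (fun ω => Set.indicator Sᶜ (fun _ => (1:ℝ)) (V ω) * q ω)
          = fun ω => q ω - Set.indicator S (fun _ => (1:ℝ)) (V ω) * q ω := by
        intro q; funext ω; by_cases h : V ω ∈ S <;>
          simp [Set.indicator_of_mem, Set.indicator_of_notMem, h]
      rw [e g', e G]
      refine (condExp_sub hg' (hint g' hg' _ (hind S hS) 1 (hindb S)) m).trans ?_
      refine ((huniv.sub hrec).trans ?_)
      exact (condExp_sub hG (hint G hG _ (hind S hS) 1 (hindb S)) m).symm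
    have h_union : ∀ S : ℕ → Set E, Pairwise (Function.onFun Disjoint S) →
        (∀ i, MeasurableSet (S i)) →
        (∀ i, P[fun ω => Set.indicator (S i) (fun _ => (1:ℝ)) (V ω) * g' ω|m]
          =ᵐ[P] P[fun ω => Set.indicator (S i) (fun _ => (1:ℝ)) (V ω) * G ω|m]) →
        P[fun ω => Set.indicator (⋃ i, S i) (fun _ => (1:ℝ)) (V ω) * g' ω|m]
          =ᵐ[P] P[fun ω => Set.indicator (⋃ i, S i) (fun _ => (1:ℝ)) (V ω) * G ω|m] := by
      intro S hd hSm hrec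
      have hsummeas : ∀ n, Measurable (fun x : E =>
          ∑ i ∈ Finset.range n, Set.indicator (S i) (fun _ => (1:ℝ)) x) :=
        fun n => Finset.measurable_sum _ fun i _ => hind (S i) (hSm i)
      have hsumbdd : ∀ n (x : E),
          |∑ i ∈ Finset.range n, Set.indicator (S i) (fun _ => (1:ℝ)) x| ≤ 1 :=
        fun n x => (ind_sum_tendsto S hd x).2 n
      refine tendsto_condExp_unique
        (fs := fun n ω => (∑ i ∈ Finset.range n, Set.indicator (S i) (fun _ => (1:ℝ)) (V ω)) * g' ω)
        (gs := fun n ω => (∑ i ∈ Finset.range n, Set.indicator (S i) (fun _ => (1:ℝ)) (V ω)) * G ω)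
        _ _ (fun n => hint g' hg' _ (hsummeas n) 1 (hsumbdd n))
        (fun n => hint G hG _ (hsummeas n) 1 (hsumbdd n))
        ?_ ?_ (fun ω => ‖g' ω‖) hg'.norm (fun ω => ‖G ω‖) hG.norm ?_ ?_ ?_
      · exact Eventually.of_forall fun ω => ((ind_sum_tendsto S hd (V ω)).1).mul tendsto_const_nhds
      · exact Eventually.of_forall fun ω => ((ind_sum_tendsto S hd (V ω)).1).mul tendsto_const_nhds
      · intro n
        refine Eventually.of_forall fun ω => ?_
        simp only [Real.norm_eq_abs, abs_mul]
        exact mul_le_of_le_one_left (abs_nonneg _) (hsumbdd n (V ω))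
      · intro n
        refine Eventually.of_forall fun ω => ?_
        simp only [Real.norm_eq_abs, abs_mul]
        exact mul_le_of_le_one_left (abs_nonneg _) (hsumbdd n (V ω))
      · intro n
        show P[fun ω => (∑ i ∈ Finset.range n, Set.indicator (S i) (fun _ => (1:ℝ)) (V ω)) * g' ω|m]
          =ᵐ[P] P[fun ω => (∑ i ∈ Finset.range n, Set.indicator (S i) (fun _ => (1:ℝ)) (V ω)) * G ω|m]
        have eq1 : (fun ω => (∑ i ∈ Finset.range n, Set.indicator (S i) (fun _ => (1:ℝ)) (V ω)) * g' ω)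
            = ∑ i ∈ Finset.range n, fun ω => Set.indicator (S i) (fun _ => (1:ℝ)) (V ω) * g' ω := by
          funext ω; simp [Finset.sum_apply, Finset.sum_mul]
        have eq2 : (fun ω => (∑ i ∈ Finset.range n, Set.indicator (S i) (fun _ => (1:ℝ)) (V ω)) * G ω)
            = ∑ i ∈ Finset.range n, fun ω => Set.indicator (S i) (fun _ => (1:ℝ)) (V ω) * G ω := by
          funext ω; simp [Finset.sum_apply, Finset.sum_mul]
        rw [eq1, eq2]
        refine (condExp_finsetSum
            (fun i _ => hint g' hg' _ (hind (S i) (hSm i)) 1 (hindb (S i))) m).trans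
          (EventuallyEq.trans ?_ (condExp_finsetSum
            (fun i _ => hint G hG _ (hind (S i) (hSm i)) 1 (hindb (S i))) m).symm)
        have hall : ∀ᵐ ω ∂P, ∀ i : ℕ,
            (P[fun ω' => Set.indicator (S i) (fun _ => (1:ℝ)) (V ω') * g' ω'|m]) ω
              = (P[fun ω' => Set.indicator (S i) (fun _ => (1:ℝ)) (V ω') * G ω'|m]) ω :=
          ae_all_iff.mpr fun i => hrec i
        filter_upwards [hall] with ω h3
        simp only [Finset.sum_apply]
        exact Finset.sum_congr rfl fun i _ => h3 i
    exact fun S hS => MeasurableSpace.induction_on_inter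
      (C := fun S _ => P[fun ω => Set.indicator S (fun _ => (1:ℝ)) (V ω) * g' ω|m]
          =ᵐ[P] P[fun ω => Set.indicator S (fun _ => (1:ℝ)) (V ω) * G ω|m])
      hgen hpi h_empty base h_compl h_union S hS
  -- Step 2 : simple functions
  have hsimple : ∀ φ : SimpleFunc E ℝ,
      P[fun ω => φ (V ω) * g' ω|m] =ᵐ[P] P[fun ω => φ (V ω) * G ω|m] := by
    intro φ
    induction φ using SimpleFunc.induction with
    | @const c s hs =>
      have e : ∀ q : Ω → ℝ, (fun ω =>
          (SimpleFunc.piecewise s hs (SimpleFunc.const E c) (SimpleFunc.const E 0) : SimpleFunc E ℝ)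
            (V ω) * q ω)
          = fun ω => c • (Set.indicator s (fun _ => (1:ℝ)) (V ω) * q ω) := by
        intro q; funext ω
        by_cases h : V ω ∈ s <;>
          simp [SimpleFunc.piecewise_apply, h, Set.indicator_of_mem, Set.indicator_of_notMem,
            mul_assoc]
      rw [e g', e G]
      calc P[fun ω => c • (Set.indicator s (fun _ => (1:ℝ)) (V ω) * g' ω)|m]
          =ᵐ[P] c • P[fun ω => Set.indicator s (fun _ => (1:ℝ)) (V ω) * g' ω|m] :=
            condExp_smul c _ m
        _ =ᵐ[P] c • P[fun ω => Set.indicator s (fun _ => (1:ℝ)) (V ω) * G ω|m] :=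
            (hset s hs).const_smul c
        _ =ᵐ[P] P[fun ω => c • (Set.indicator s (fun _ => (1:ℝ)) (V ω) * G ω)|m] :=
            (condExp_smul c _ m).symm
    | @add φ ψ hdisj hφ hψ =>
      obtain ⟨Cφ, hCφ⟩ := φ.exists_forall_norm_le
      obtain ⟨Cψ, hCψ⟩ := ψ.exists_forall_norm_le
      have hCφ' : ∀ x, |φ x| ≤ Cφ := by simpa [Real.norm_eq_abs] using hCφ
      have hCψ' : ∀ x, |ψ x| ≤ Cψ := by simpa [Real.norm_eq_abs] using hCψ
      have e : ∀ q : Ω → ℝ, (fun ω => (φ + ψ) (V ω) * q ω)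
          = fun ω => φ (V ω) * q ω + ψ (V ω) * q ω := by
        intro q; funext ω; simp [add_mul]
      rw [e g', e G]
      calc P[fun ω => φ (V ω) * g' ω + ψ (V ω) * g' ω|m]
          =ᵐ[P] P[fun ω => φ (V ω) * g' ω|m] + P[fun ω => ψ (V ω) * g' ω|m] :=
            condExp_add (hint g' hg' _ φ.measurable Cφ hCφ') (hint g' hg' _ ψ.measurable Cψ hCψ') m
        _ =ᵐ[P] P[fun ω => φ (V ω) * G ω|m] + P[fun ω => ψ (V ω) * G ω|m] := hφ.add hψ
        _ =ᵐ[P] P[fun ω => φ (V ω) * G ω + ψ (V ω) * G ω|m] :=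
            (condExp_add (hint G hG _ φ.measurable Cφ hCφ') (hint G hG _ ψ.measurable Cψ hCψ') m).symm
  -- Step 3 : bounded measurable functions
  intro f hf C hC
  rcases le_or_gt 0 C with hC0 | hC0
  · have hfs := hf.stronglyMeasurable
    set sf := hfs.approxBounded C with hsf
    have hsfb : ∀ n x, ‖sf n x‖ ≤ C := hfs.norm_approxBounded_le hC0
    have hsfb' : ∀ n x, |sf n x| ≤ C := by simpa [Real.norm_eq_abs] using hsfb
    have hsftend : ∀ x : E, Tendsto (fun n => sf n x) atTop (nhds (f x)) :=
      fun x => hfs.tendsto_approxBounded_of_norm_le (by simpa [Real.norm_eq_abs] using hC x)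
    refine tendsto_condExp_unique
      (fs := fun n ω => sf n (V ω) * g' ω) (gs := fun n ω => sf n (V ω) * G ω)
      _ _ (fun n => hint g' hg' _ (sf n).measurable C (hsfb' n))
      (fun n => hint G hG _ (sf n).measurable C (hsfb' n))
      ?_ ?_ (fun ω => C * ‖g' ω‖) (hg'.norm.const_mul C) (fun ω => C * ‖G ω‖)
      (hG.norm.const_mul C) ?_ ?_ (fun n => hsimple (sf n))
    · exact Eventually.of_forall fun ω => (hsftend (V ω)).mul tendsto_const_nhds
    · exact Eventually.of_forall fun ω => (hsftend (V ω)).mul tendsto_const_nhds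
    · intro n
      refine Eventually.of_forall fun ω => ?_
      simp only [Real.norm_eq_abs, abs_mul]
      exact mul_le_mul_of_nonneg_right (hsfb' n (V ω)) (abs_nonneg _)
    · intro n
      refine Eventually.of_forall fun ω => ?_
      simp only [Real.norm_eq_abs, abs_mul]
      exact mul_le_mul_of_nonneg_right (hsfb' n (V ω)) (abs_nonneg _)
  · -- C < 0 forces E to be empty
    have hE : IsEmpty E := ⟨fun x => absurd ((abs_nonneg (f x)).trans (hC x)) (not_le.mpr hC0)⟩
    have hΩ : IsEmpty Ω := ⟨fun ω => hE.false (V ω)⟩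
    exact Eventually.of_forall fun ω => (hΩ.false ω).elim

private lemma indb {E : Type*} (S : Set E) (x : E) :
    |Set.indicator S (fun _ => (1:ℝ)) x| ≤ 1 := by
  by_cases h : x ∈ S <;> simp [Set.indicator, h]

private lemma aug_condindep {Ω α β 𝓧 : Type*} [mΩ : MeasurableSpace Ω] [MeasurableSpace α]
    [MeasurableSpace β] [MeasurableSpace 𝓧]
    (P : Measure Ω) [IsProbabilityMeasure P]
    (F : Ω → α) (G : Ω → β) (X : Ω → 𝓧)
    (hF : Measurable[mΩ] F) (hG : Measurable[mΩ] G) (hX : Measurable[mΩ] X)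
    (m : MeasurableSpace Ω) (hm : m ≤ mΩ) (hXm : Measurable[m] X)
    (hci : @CondIndepGiven Ω α β mΩ inferInstance inferInstance P m F G) :
    ∀ (f : α × 𝓧 → ℝ) (g : β × 𝓧 → ℝ), Measurable f → Measurable g →
      ∀ Cf : ℝ, (∀ x, |f x| ≤ Cf) → ∀ Cg : ℝ, (∀ x, |g x| ≤ Cg) →
      (P[fun ω => f (F ω, X ω) * g (G ω, X ω)|m]) =ᵐ[P]
        fun ω => (P[fun ω' => f (F ω', X ω')|m]) ω * (P[fun ω' => g (G ω', X ω')|m]) ω := by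
  -- integrability of bounded measurable functions
  have hbint : ∀ q : Ω → ℝ, Measurable[mΩ] q → ∀ C : ℝ, (∀ ω, |q ω| ≤ C) → Integrable q P :=
    fun q hq C hC => @bddInt Ω mΩ P inferInstance q (hq.aestronglyMeasurable (μ := P)) C hC
  -- pulling an indicator of `X` out of a conditional expectation
  have pull_ind : ∀ t : Set 𝓧, MeasurableSet t → ∀ q : Ω → ℝ, Integrable q P →
      P[fun ω => Set.indicator t (fun _ => (1:ℝ)) (X ω) * q ω|m]
        =ᵐ[P] fun ω => Set.indicator t (fun _ => (1:ℝ)) (X ω) * (P[q|m]) ω := by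
    intro t ht q hq
    refine condExp_stronglyMeasurable_mul_of_bound hm
      (((measurable_const.indicator ht).comp hXm).stronglyMeasurable) hq 1 ?_
    exact Eventually.of_forall fun ω => by
      simpa [Real.norm_eq_abs] using indb t (X ω)
  -- pulling a bounded `m`-measurable factor out
  have pull_bdd : ∀ (r : Ω → ℝ), AEStronglyMeasurable[m] r P → ∀ c : ℝ, (∀ᵐ ω ∂P, |r ω| ≤ c) →
      ∀ p : Ω → ℝ, Integrable p P →
      P[fun ω => r ω * p ω|m] =ᵐ[P] fun ω => r ω * (P[p|m]) ω := by
    intro r hr c hrc p hp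
    exact condExp_stronglyMeasurable_mul_of_bound₀ hm hr hp c
      (by simpa [Real.norm_eq_abs] using hrc)
  -- a.e. bound on a conditional expectation
  have bdd_ce : ∀ (q : Ω → ℝ) (Cq : ℝ), (∀ ω, |q ω| ≤ Cq) →
      ∀ᵐ ω ∂P, |(P[q|m]) ω| ≤ max Cq 0 := by
    intro q Cq hCq
    have h1 : ∀ᵐ ω ∂P, |q ω| ≤ ((max Cq 0).toNNReal : ℝ) :=
      Eventually.of_forall fun ω => by
        rw [Real.coe_toNNReal _ (le_max_right Cq 0)]
        exact (hCq ω).trans (le_max_left _ _)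
    have h2 := ae_bdd_condExp_of_ae_bdd (m := m) h1
    simpa [Real.coe_toNNReal _ (le_max_right Cq 0)] using h2
  -- step 1 : functions of `F` alone against functions of `(G, X)`
  have H1 : ∀ f0 : α → ℝ, Measurable f0 → ∀ Cf : ℝ, (∀ x, |f0 x| ≤ Cf) →
      ∀ g : β × 𝓧 → ℝ, Measurable g → ∀ Cg : ℝ, (∀ x, |g x| ≤ Cg) →
      P[fun ω => f0 (F ω) * g (G ω, X ω)|m]
        =ᵐ[P] fun ω => (P[fun ω' => f0 (F ω')|m]) ω * (P[fun ω' => g (G ω', X ω')|m]) ω := by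
    intro f0 hf0 Cf hCf g hg Cg hCg
    have hq_int : Integrable (fun ω => f0 (F ω)) P := hbint _ (hf0.comp hF) Cf fun ω => hCf (F ω)
    have hGc_int : Integrable (P[fun ω => f0 (F ω)|m]) P := integrable_condExp
    have hGc_sm : AEStronglyMeasurable[m] (P[fun ω => f0 (F ω)|m]) P :=
      stronglyMeasurable_condExp.aestronglyMeasurable
    have hkey := @condexp_mul_congr Ω (β × 𝓧) mΩ inferInstance P inferInstance m hm
      (fun ω => (G ω, X ω)) (hG.prodMk hX)
      (fun ω => f0 (F ω)) (P[fun ω => f0 (F ω)|m]) hq_int hGc_int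
      (condExp_condExp_of_le le_rfl hm).symm
      _ generateFrom_prod.symm isPiSystem_prod ?base
    case base =>
      rintro _ ⟨s, hs, t, ht, rfl⟩
      -- both sides equal `ind_t(X) · P[f0(F)|m] · P[ind_s(G)|m]` a.e.
      have hip_int : Integrable (fun ω => Set.indicator s (fun _ => (1:ℝ)) (G ω) * f0 (F ω)) P := by
        refine hbint _ (((measurable_const.indicator hs).comp hG).mul (hf0.comp hF)) (max Cf 0)
          fun ω => ?_
        rw [abs_mul]
        refine (mul_le_of_le_one_left (abs_nonneg _) (indb s (G ω))).trans
          ((hCf (F ω)).trans (le_max_left _ _))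
      have hs_int : Integrable (fun ω => Set.indicator s (fun _ => (1:ℝ)) (G ω)) P :=
        hbint _ ((measurable_const.indicator hs).comp hG) 1 fun ω => indb s (G ω)
      have e1 : (fun ω => Set.indicator (s ×ˢ t) (fun _ => (1:ℝ)) (G ω, X ω) * f0 (F ω))
          = fun ω => Set.indicator t (fun _ => (1:ℝ)) (X ω) *
              (Set.indicator s (fun _ => (1:ℝ)) (G ω) * f0 (F ω)) := by
        funext ω
        by_cases h1 : G ω ∈ s <;> by_cases h2 : X ω ∈ t <;>
          simp [Set.indicator, Set.mem_prod, h1, h2]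
      have e2 : (fun ω => Set.indicator (s ×ˢ t) (fun _ => (1:ℝ)) (G ω, X ω) *
            (P[fun ω' => f0 (F ω')|m]) ω)
          = fun ω => (Set.indicator t (fun _ => (1:ℝ)) (X ω) * (P[fun ω' => f0 (F ω')|m]) ω) *
              Set.indicator s (fun _ => (1:ℝ)) (G ω) := by
        funext ω
        by_cases h1 : G ω ∈ s <;> by_cases h2 : X ω ∈ t <;>
          simp [Set.indicator, Set.mem_prod, h1, h2] <;> ring
      rw [e1, e2]
      have l1 := pull_ind t ht _ hip_int
      have l2 : P[fun ω => Set.indicator s (fun _ => (1:ℝ)) (G ω) * f0 (F ω)|m]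
          =ᵐ[P] fun ω => (P[fun ω' => f0 (F ω')|m]) ω *
            (P[fun ω' => Set.indicator s (fun _ => (1:ℝ)) (G ω')|m]) ω := by
        refine (condExp_congr_ae (Eventually.of_forall fun ω => mul_comm _ _)).trans ?_
        exact hci f0 _ hf0 (measurable_const.indicator hs) ⟨Cf, hCf⟩ ⟨1, fun x => indb s x⟩
      have r1 : P[fun ω => (Set.indicator t (fun _ => (1:ℝ)) (X ω) *
            (P[fun ω' => f0 (F ω')|m]) ω) * Set.indicator s (fun _ => (1:ℝ)) (G ω)|m]
          =ᵐ[P] fun ω => (Set.indicator t (fun _ => (1:ℝ)) (X ω) * (P[fun ω' => f0 (F ω')|m]) ω) *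
            (P[fun ω' => Set.indicator s (fun _ => (1:ℝ)) (G ω')|m]) ω := by
        refine pull_bdd _ ?_ (max Cf 0) ?_ _ hs_int
        · exact (((measurable_const.indicator ht).comp hXm).stronglyMeasurable.mul
            stronglyMeasurable_condExp).aestronglyMeasurable
        · filter_upwards [bdd_ce _ Cf (fun ω => hCf (F ω))] with ω hω
          rw [abs_mul]
          exact (mul_le_of_le_one_left (abs_nonneg _) (indb t (X ω))).trans hω
      refine l1.trans ?_
      refine EventuallyEq.trans ?_ r1.symm
      filter_upwards [l2] with ω hω
      simp only [hω]
      ring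
    -- now conclude H1 from hkey
    have step := hkey g hg Cg hCg
    have fin : P[fun ω => g (G ω, X ω) * (P[fun ω' => f0 (F ω')|m]) ω|m]
        =ᵐ[P] fun ω => (P[fun ω' => f0 (F ω')|m]) ω * (P[fun ω' => g (G ω', X ω')|m]) ω := by
      refine (condExp_congr_ae (Eventually.of_forall fun ω => mul_comm _ _)).trans ?_
      exact pull_bdd _ hGc_sm (max Cf 0) (bdd_ce _ Cf (fun ω => hCf (F ω))) _
        (hbint _ ((hg.comp (hG.prodMk hX))) Cg fun ω => hCg _)
    refine EventuallyEq.trans ?_ (step.trans fin)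
    exact condExp_congr_ae (Eventually.of_forall fun ω => mul_comm _ _)
  -- step 2 : full statement
  intro f g hf hg Cf hCf Cg hCg
  have hq_int : Integrable (fun ω => g (G ω, X ω)) P :=
    hbint _ (hg.comp (hG.prodMk hX)) Cg fun ω => hCg _
  have hGc_sm : AEStronglyMeasurable[m] (P[fun ω => g (G ω, X ω)|m]) P :=
    stronglyMeasurable_condExp.aestronglyMeasurable
  have hkey := @condexp_mul_congr Ω (α × 𝓧) mΩ inferInstance P inferInstance m hm
    (fun ω => (F ω, X ω)) (hF.prodMk hX)
    (fun ω => g (G ω, X ω)) (P[fun ω => g (G ω, X ω)|m]) hq_int integrable_condExp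
    (condExp_condExp_of_le le_rfl hm).symm
    _ generateFrom_prod.symm isPiSystem_prod ?base2
  case base2 =>
    rintro _ ⟨s, hs, t, ht, rfl⟩
    have hip_int : Integrable (fun ω => Set.indicator s (fun _ => (1:ℝ)) (F ω) * g (G ω, X ω)) P := by
      refine hbint _ (((measurable_const.indicator hs).comp hF).mul (hg.comp (hG.prodMk hX)))
        (max Cg 0) fun ω => ?_
      rw [abs_mul]
      exact (mul_le_of_le_one_left (abs_nonneg _) (indb s (F ω))).trans
        ((hCg _).trans (le_max_left _ _))
    have hs_int : Integrable (fun ω => Set.indicator s (fun _ => (1:ℝ)) (F ω)) P :=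
      hbint _ ((measurable_const.indicator hs).comp hF) 1 fun ω => indb s (F ω)
    have e1 : (fun ω => Set.indicator (s ×ˢ t) (fun _ => (1:ℝ)) (F ω, X ω) * g (G ω, X ω))
        = fun ω => Set.indicator t (fun _ => (1:ℝ)) (X ω) *
            (Set.indicator s (fun _ => (1:ℝ)) (F ω) * g (G ω, X ω)) := by
      funext ω
      by_cases h1 : F ω ∈ s <;> by_cases h2 : X ω ∈ t <;>
        simp [Set.indicator, Set.mem_prod, h1, h2]
    have e2 : (fun ω => Set.indicator (s ×ˢ t) (fun _ => (1:ℝ)) (F ω, X ω) *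
          (P[fun ω' => g (G ω', X ω')|m]) ω)
        = fun ω => (Set.indicator t (fun _ => (1:ℝ)) (X ω) *
            (P[fun ω' => g (G ω', X ω')|m]) ω) * Set.indicator s (fun _ => (1:ℝ)) (F ω) := by
      funext ω
      by_cases h1 : F ω ∈ s <;> by_cases h2 : X ω ∈ t <;>
        simp [Set.indicator, Set.mem_prod, h1, h2] <;> ring
    rw [e1, e2]
    have l1 := pull_ind t ht _ hip_int
    have l2 := H1 (Set.indicator s (fun _ => (1:ℝ))) (measurable_const.indicator hs) 1
      (fun x => indb s x) g hg Cg hCg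
    have r1 : P[fun ω => (Set.indicator t (fun _ => (1:ℝ)) (X ω) *
          (P[fun ω' => g (G ω', X ω')|m]) ω) * Set.indicator s (fun _ => (1:ℝ)) (F ω)|m]
        =ᵐ[P] fun ω => (Set.indicator t (fun _ => (1:ℝ)) (X ω) *
          (P[fun ω' => g (G ω', X ω')|m]) ω) *
            (P[fun ω' => Set.indicator s (fun _ => (1:ℝ)) (F ω')|m]) ω := by
      refine pull_bdd _ ?_ (max Cg 0) ?_ _ hs_int
      · exact (((measurable_const.indicator ht).comp hXm).stronglyMeasurable.mul
          stronglyMeasurable_condExp).aestronglyMeasurable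
      · filter_upwards [bdd_ce _ Cg (fun ω => hCg (G ω, X ω))] with ω hω
        rw [abs_mul]
        exact (mul_le_of_le_one_left (abs_nonneg _) (indb t (X ω))).trans hω
    refine l1.trans ?_
    refine EventuallyEq.trans ?_ r1.symm
    filter_upwards [l2] with ω hω
    simp only [hω]
    ring
  have step := hkey f hf Cf hCf
  have fin : P[fun ω => f (F ω, X ω) * (P[fun ω' => g (G ω', X ω')|m]) ω|m]
      =ᵐ[P] fun ω => (P[fun ω' => f (F ω', X ω')|m]) ω * (P[fun ω' => g (G ω', X ω')|m]) ω := by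
    refine (condExp_congr_ae (Eventually.of_forall fun ω => mul_comm _ _)).trans ?_
    refine (pull_bdd _ hGc_sm (max Cg 0) (bdd_ce _ Cg (fun ω => hCg (G ω, X ω))) _
      (hbint _ (hf.comp (hF.prodMk hX)) Cf fun ω => hCf _)).trans ?_
    exact Eventually.of_forall fun ω => mul_comm _ _
  exact step.trans fin

private lemma integral_ind_eq {Ω : Type*} [mΩ : MeasurableSpace Ω] (P : Measure Ω)
    [IsProbabilityMeasure P] (Ta : Ω → ℝ) (hTa : Measurable Ta) (t : ℝ) :
    ∫ ω, (if t < Ta ω then (1:ℝ) else 0) ∂P = (P {ω | t < Ta ω}).toReal := by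
  have e2 : (fun ω => if t < Ta ω then (1:ℝ) else 0)
      = Set.indicator {ω | t < Ta ω} (fun _ => (1:ℝ)) := by
    funext ω
    by_cases hc : t < Ta ω
    · rw [if_pos hc, Set.indicator_of_mem (by exact hc)]
    · rw [if_neg hc, Set.indicator_of_notMem (by exact hc)]
  rw [e2, integral_indicator (measurableSet_lt measurable_const hTa), setIntegral_const,
    smul_eq_mul, mul_one]
  rfl

private lemma main_aux {Ω 𝓧 𝓩 𝓦 : Type*} [mΩ : MeasurableSpace Ω] [MeasurableSpace 𝓧]
    [MeasurableSpace 𝓩] [MeasurableSpace 𝓦]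
    (P : Measure Ω) [IsProbabilityMeasure P]
    (A Ta T : Ω → ℝ) (X : Ω → 𝓧) (Z : Ω → 𝓩) (W : Ω → 𝓦)
    (hA : Measurable[mΩ] A) (hTa : Measurable[mΩ] Ta) (hT : Measurable[mΩ] T)
    (hX : Measurable[mΩ] X) (hZ : Measurable[mΩ] Z) (hW : Measurable[mΩ] W)
    (a t : ℝ) (hcons : ∀ ω, A ω = a → T ω = Ta ω)
    (h : ℝ → 𝓦 × ℝ × 𝓧 → ℝ) (hh : Measurable (h t)) (Ch : ℝ) (hCh : ∀ x, |h t x| ≤ Ch)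
    (qtil : 𝓩 × ℝ × 𝓧 → ℝ) (hq : Measurable qtil) (Cq : ℝ) (hCq : ∀ x, |qtil x| ≤ Cq)
    (m n : MeasurableSpace Ω) (hm : m ≤ mΩ) (hn : n ≤ mΩ) (hmn : m ≤ n)
    (hXm : Measurable[m] X) (hAn : Measurable[n] A)
    (hbridge : (P[(fun ω => h t (W ω, A ω, X ω))|n]) =ᵐ[P]
      (P[(fun ω => if t < T ω then (1 : ℝ) else 0)|n]))
    (hproxy : @CondIndepGiven Ω (𝓩 × ℝ) (𝓦 × ℝ) mΩ inferInstance inferInstance P m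
      (fun ω => (Z ω, A ω)) (fun ω => (W ω, Ta ω)))
    (hpos : ∀ᵐ ω ∂P, (P[(fun ω' => if A ω' = a then (1:ℝ) else 0)|m]) ω ≠ 0) :
    (P {ω | t < Ta ω}).toReal
      = ∫ ω, (if A ω = a then (1 : ℝ) else 0) * qtil (Z ω, A ω, X ω) *
            ((if t < T ω then (1 : ℝ) else 0) - h t (W ω, A ω, X ω))
          + h t (W ω, a, X ω) ∂P := by
  -- basic measurability facts (w.r.t. the ambient σ-algebra)
  have hφ : Measurable (fun x : ℝ => if x = a then (1:ℝ) else 0) :=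
    Measurable.ite (measurableSet_eq) measurable_const measurable_const
  have hIa_meas : Measurable[mΩ] (fun ω => if A ω = a then (1:ℝ) else 0) := hφ.comp hA
  have hindT_meas : Measurable[mΩ] (fun ω => if t < T ω then (1:ℝ) else 0) :=
    Measurable.ite (measurableSet_lt measurable_const hT) measurable_const measurable_const
  have hindTa_meas : Measurable[mΩ] (fun ω => if t < Ta ω then (1:ℝ) else 0) :=
    Measurable.ite (measurableSet_lt measurable_const hTa) measurable_const measurable_const
  have hhA_meas : Measurable[mΩ] (fun ω => h t (W ω, A ω, X ω)) :=
    hh.comp (hW.prodMk (hA.prodMk hX))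
  have hha_meas : Measurable[mΩ] (fun ω => h t (W ω, a, X ω)) :=
    hh.comp (hW.prodMk (measurable_const.prodMk hX))
  have hqc_meas : Measurable[mΩ] (fun ω => qtil (Z ω, A ω, X ω)) :=
    hq.comp (hZ.prodMk (hA.prodMk hX))
  have hDfull_meas : Measurable[mΩ]
      (fun ω => (if t < T ω then (1:ℝ) else 0) - h t (W ω, A ω, X ω)) :=
    hindT_meas.sub hhA_meas
  have hDa_meas : Measurable[mΩ]
      (fun ω => (if t < Ta ω then (1:ℝ) else 0) - h t (W ω, a, X ω)) :=
    hindTa_meas.sub hha_meas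
  have hSet : MeasurableSet[mΩ] {ω | t < Ta ω} := measurableSet_lt measurable_const hTa
  -- integrability of bounded measurable functions
  have intB : ∀ f : Ω → ℝ, Measurable[mΩ] f → ∀ C : ℝ, (∀ ω, |f ω| ≤ C) → Integrable f P :=
    fun f hf C hC => @bddInt Ω mΩ P inferInstance f (hf.aestronglyMeasurable (μ := P)) C hC
  have hIa_b : ∀ ω, |(if A ω = a then (1:ℝ) else 0)| ≤ 1 := fun ω => by split <;> norm_num
  have hindT_b : ∀ ω, |(if t < T ω then (1:ℝ) else 0)| ≤ 1 := fun ω => by split <;> norm_num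
  have hindTa_b : ∀ ω, |(if t < Ta ω then (1:ℝ) else 0)| ≤ 1 := fun ω => by split <;> norm_num
  have hDfull_b : ∀ ω, |(if t < T ω then (1:ℝ) else 0) - h t (W ω, A ω, X ω)| ≤ 1 + Ch :=
    fun ω => (abs_sub _ _).trans (add_le_add (hindT_b ω) (hCh _))
  have hDa_b : ∀ ω, |(if t < Ta ω then (1:ℝ) else 0) - h t (W ω, a, X ω)| ≤ 1 + Ch :=
    fun ω => (abs_sub _ _).trans (add_le_add (hindTa_b ω) (hCh _))
  have intDfull : Integrable (fun ω => (if t < T ω then (1:ℝ) else 0) - h t (W ω, A ω, X ω)) P :=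
    intB _ hDfull_meas _ hDfull_b
  have intDa : Integrable (fun ω => (if t < Ta ω then (1:ℝ) else 0) - h t (W ω, a, X ω)) P :=
    intB _ hDa_meas _ hDa_b
  have intIndT : Integrable (fun ω => if t < T ω then (1:ℝ) else 0) P := intB _ hindT_meas 1 hindT_b
  have intIndTa : Integrable (fun ω => if t < Ta ω then (1:ℝ) else 0) P :=
    intB _ hindTa_meas 1 hindTa_b
  have inthA : Integrable (fun ω => h t (W ω, A ω, X ω)) P := intB _ hhA_meas Ch fun ω => hCh _
  have intha : Integrable (fun ω => h t (W ω, a, X ω)) P := intB _ hha_meas Ch fun ω => hCh _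
  -- Step A : the bridge equation gives `E[1{A=a}·Da | n] = 0` a.e.
  have hDn : P[fun ω => (if t < T ω then (1:ℝ) else 0) - h t (W ω, A ω, X ω)|n] =ᵐ[P] 0 := by
    have h1 : P[fun ω => (if t < T ω then (1:ℝ) else 0) - h t (W ω, A ω, X ω)|n]
        =ᵐ[P] P[fun ω => if t < T ω then (1:ℝ) else 0|n] - P[fun ω => h t (W ω, A ω, X ω)|n] :=
      condExp_sub (m := n) (μ := P) intIndT inthA
    filter_upwards [h1, hbridge] with ω e1 e2
    simp only [Pi.sub_apply] at e1
    simp only [Pi.zero_apply]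
    rw [e1, e2, sub_self]
  have hIa_smn : StronglyMeasurable[n] (fun ω => if A ω = a then (1:ℝ) else 0) := by
    have : Measurable[n] (fun ω => if A ω = a then (1:ℝ) else 0) := hφ.comp hAn
    exact this.stronglyMeasurable
  have hIaD : P[fun ω => (if A ω = a then (1:ℝ) else 0) *
      ((if t < T ω then (1:ℝ) else 0) - h t (W ω, A ω, X ω))|n] =ᵐ[P] 0 := by
    have h1 : P[fun ω => (if A ω = a then (1:ℝ) else 0) *
          ((if t < T ω then (1:ℝ) else 0) - h t (W ω, A ω, X ω))|n]
        =ᵐ[P] fun ω => (if A ω = a then (1:ℝ) else 0) *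
          (P[fun ω' => (if t < T ω' then (1:ℝ) else 0) - h t (W ω', A ω', X ω')|n]) ω :=
      condExp_stronglyMeasurable_mul_of_bound hn hIa_smn intDfull 1
        (Eventually.of_forall fun ω => by simpa [Real.norm_eq_abs] using hIa_b ω)
    filter_upwards [h1, hDn] with ω e1 e2
    simp only [Pi.zero_apply] at e2 ⊢
    rw [e1, e2, mul_zero]
  have hswap : (fun ω => (if A ω = a then (1:ℝ) else 0) *
        ((if t < T ω then (1:ℝ) else 0) - h t (W ω, A ω, X ω)))
      = fun ω => (if A ω = a then (1:ℝ) else 0) *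
        ((if t < Ta ω then (1:ℝ) else 0) - h t (W ω, a, X ω)) := by
    funext ω
    by_cases hc : A ω = a
    · rw [hcons ω hc, hc]
    · simp [hc]
  have hIaDa : P[fun ω => (if A ω = a then (1:ℝ) else 0) *
      ((if t < Ta ω then (1:ℝ) else 0) - h t (W ω, a, X ω))|n] =ᵐ[P] 0 := hswap ▸ hIaD
  have hIaDam : P[fun ω => (if A ω = a then (1:ℝ) else 0) *
      ((if t < Ta ω then (1:ℝ) else 0) - h t (W ω, a, X ω))|m] =ᵐ[P] 0 := by
    refine ((condExp_condExp_of_le hmn hn).symm.trans ?_)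
    refine (condExp_congr_ae hIaDa).trans ?_
    rw [condExp_zero]
  -- the augmented conditional-independence machine
  have full := @aug_condindep Ω (𝓩 × ℝ) (𝓦 × ℝ) 𝓧 mΩ inferInstance inferInstance inferInstance
    P inferInstance (fun ω => (Z ω, A ω)) (fun ω => (W ω, Ta ω)) X
    (hZ.prodMk hA) (hW.prodMk hTa) hX m hm hXm hproxy
  -- bounded measurable functions on the product spaces
  have hf1 : Measurable (fun p : (𝓩 × ℝ) × 𝓧 => if p.1.2 = a then (1:ℝ) else 0) :=
    hφ.comp (measurable_snd.comp measurable_fst)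
  have hg1 : Measurable (fun p : (𝓦 × ℝ) × 𝓧 =>
      (if t < p.1.2 then (1:ℝ) else 0) - h t (p.1.1, a, p.2)) := by
    refine Measurable.sub ?_ ?_
    · exact Measurable.ite (measurableSet_lt measurable_const (measurable_snd.comp measurable_fst))
        measurable_const measurable_const
    · exact hh.comp (((measurable_fst.comp measurable_fst)).prodMk
        (measurable_const.prodMk measurable_snd))
  have hg1_b : ∀ p : (𝓦 × ℝ) × 𝓧, |(if t < p.1.2 then (1:ℝ) else 0) - h t (p.1.1, a, p.2)| ≤ 1 + Ch :=
    fun p => (abs_sub _ _).trans (add_le_add (by split <;> norm_num) (hCh _))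
  have hf2 : Measurable (fun p : (𝓩 × ℝ) × 𝓧 =>
      (if p.1.2 = a then (1:ℝ) else 0) * qtil (p.1.1, p.1.2, p.2)) := by
    refine Measurable.mul hf1 ?_
    exact hq.comp ((measurable_fst.comp measurable_fst).prodMk
      ((measurable_snd.comp measurable_fst).prodMk measurable_snd))
  have hf2_b : ∀ p : (𝓩 × ℝ) × 𝓧,
      |(if p.1.2 = a then (1:ℝ) else 0) * qtil (p.1.1, p.1.2, p.2)| ≤ max Cq 0 := by
    intro p
    rw [abs_mul]
    refine (mul_le_of_le_one_left (abs_nonneg _) (by split <;> norm_num)).trans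
      ((hCq _).trans (le_max_left _ _))
  -- use 1 : `E[Ia·Da|m] = E[Ia|m]·E[Da|m]`
  have u1 : P[fun ω => (if A ω = a then (1:ℝ) else 0) *
        ((if t < Ta ω then (1:ℝ) else 0) - h t (W ω, a, X ω))|m]
      =ᵐ[P] fun ω => (P[fun ω' => if A ω' = a then (1:ℝ) else 0|m]) ω *
        (P[fun ω' => (if t < Ta ω' then (1:ℝ) else 0) - h t (W ω', a, X ω')|m]) ω :=
    full (fun p => if p.1.2 = a then (1:ℝ) else 0)
      (fun p => (if t < p.1.2 then (1:ℝ) else 0) - h t (p.1.1, a, p.2)) hf1 hg1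
      1 (fun p => by by_cases hc : p.1.2 = a <;> simp [hc]) (1 + Ch) hg1_b
  -- hence `E[Da|m] = 0` a.e. by positivity
  have hDam : P[fun ω => (if t < Ta ω then (1:ℝ) else 0) - h t (W ω, a, X ω)|m] =ᵐ[P] 0 := by
    filter_upwards [u1, hIaDam, hpos] with ω e1 e2 e3
    have : (P[fun ω' => if A ω' = a then (1:ℝ) else 0|m]) ω *
        (P[fun ω' => (if t < Ta ω' then (1:ℝ) else 0) - h t (W ω', a, X ω')|m]) ω = 0 := by
      rw [← e1]; simpa using e2
    simpa using (mul_eq_zero.mp this).resolve_left e3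
  -- identification of the survival probability
  have hPeq : (P {ω | t < Ta ω}).toReal = ∫ ω, h t (W ω, a, X ω) ∂P := by
    have e0 : ∫ ω, ((if t < Ta ω then (1:ℝ) else 0) - h t (W ω, a, X ω)) ∂P = 0 := by
      rw [← integral_condExp hm]
      exact integral_eq_zero_of_ae hDam
    have e1 : ∫ ω, (if t < Ta ω then (1:ℝ) else 0) ∂P = (P {ω | t < Ta ω}).toReal :=
      @integral_ind_eq Ω mΩ P inferInstance Ta hTa t
    rw [integral_sub intIndTa intha, sub_eq_zero] at e0
    rw [← e1, e0]
  -- use 2 : the augmentation term has zero mean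
  have u2 : P[fun ω => ((if A ω = a then (1:ℝ) else 0) * qtil (Z ω, A ω, X ω)) *
        ((if t < Ta ω then (1:ℝ) else 0) - h t (W ω, a, X ω))|m]
      =ᵐ[P] fun ω => (P[fun ω' => (if A ω' = a then (1:ℝ) else 0) * qtil (Z ω', A ω', X ω')|m]) ω *
        (P[fun ω' => (if t < Ta ω' then (1:ℝ) else 0) - h t (W ω', a, X ω')|m]) ω :=
    full (fun p => (if p.1.2 = a then (1:ℝ) else 0) * qtil (p.1.1, p.1.2, p.2))
      (fun p => (if t < p.1.2 then (1:ℝ) else 0) - h t (p.1.1, a, p.2)) hf2 hg1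
      (max Cq 0) hf2_b (1 + Ch) hg1_b
  have hQ0 : P[fun ω => ((if A ω = a then (1:ℝ) else 0) * qtil (Z ω, A ω, X ω)) *
      ((if t < Ta ω then (1:ℝ) else 0) - h t (W ω, a, X ω))|m] =ᵐ[P] 0 := by
    filter_upwards [u2, hDam] with ω e1 e2
    simp only [Pi.zero_apply] at e2 ⊢
    rw [e1, e2, mul_zero]
  have intQDa : Integrable (fun ω => ((if A ω = a then (1:ℝ) else 0) * qtil (Z ω, A ω, X ω)) *
      ((if t < Ta ω then (1:ℝ) else 0) - h t (W ω, a, X ω))) P := by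
    refine intB _ ((hIa_meas.mul hqc_meas).mul hDa_meas) (max Cq 0 * (1 + Ch)) fun ω => ?_
    rw [abs_mul]
    refine mul_le_mul ?_ (hDa_b ω) (abs_nonneg _) (le_max_right Cq 0)
    rw [abs_mul]
    exact (mul_le_of_le_one_left (abs_nonneg _) (hIa_b ω)).trans
      ((hCq _).trans (le_max_left _ _))
  have EQ0 : ∫ ω, ((if A ω = a then (1:ℝ) else 0) * qtil (Z ω, A ω, X ω)) *
      ((if t < Ta ω then (1:ℝ) else 0) - h t (W ω, a, X ω)) ∂P = 0 := by
    rw [← integral_condExp hm]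
    exact integral_eq_zero_of_ae hQ0
  -- final computation
  have integrand_eq : (fun ω => (if A ω = a then (1 : ℝ) else 0) * qtil (Z ω, A ω, X ω) *
        ((if t < T ω then (1 : ℝ) else 0) - h t (W ω, A ω, X ω)) + h t (W ω, a, X ω))
      = fun ω => ((if A ω = a then (1:ℝ) else 0) * qtil (Z ω, A ω, X ω)) *
        ((if t < Ta ω then (1:ℝ) else 0) - h t (W ω, a, X ω)) + h t (W ω, a, X ω) := by
    funext ω
    by_cases hc : A ω = a
    · rw [hcons ω hc, hc]
    · simp [hc]
  rw [integrand_eq, integral_add intQDa intha, EQ0, zero_add]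
  exact hPeq

/-- **Double robustness under model ℳ_h.** If `h` solves the latent-level outcome bridge
equation and proxy independence holds, then for every `a ∈ {0,1}`, `t ∈ ℝ`, and every
bounded measurable function `q̃` of `(Z,A,X)`,
`P(T(a) > t) = E[ 1{A = a} ⬝ q̃(Z,A,X) ⬝ (1{T > t} − h(t,W,A,X)) + h(t,W,a,X) ]`. -/
theorem doubly_robust_under_outcome_bridge
    {Ω 𝓤 𝓧 𝓩 𝓦 : Type*} [MeasurableSpace Ω]
    [MeasurableSpace 𝓤] [StandardBorelSpace 𝓤] [MeasurableSpace 𝓧] [StandardBorelSpace 𝓧]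
    [MeasurableSpace 𝓩] [StandardBorelSpace 𝓩] [MeasurableSpace 𝓦] [StandardBorelSpace 𝓦]
    (P : Measure Ω) [IsProbabilityMeasure P]
    -- the random variables
    (A : Ω → ℝ) (T1 T0 : Ω → ℝ) (U : Ω → 𝓤) (X : Ω → 𝓧) (Z : Ω → 𝓩) (W : Ω → 𝓦)
    (hA : Measurable A) (hT1 : Measurable T1) (hT0 : Measurable T0)
    (hU : Measurable U) (hX : Measurable X) (hZ : Measurable Z) (hW : Measurable W)
    (hA01 : ∀ ω, A ω = 0 ∨ A ω = 1)
    -- observed outcome (consistency)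
    (T : Ω → ℝ) (hT : ∀ ω, T ω = A ω * T1 ω + (1 - A ω) * T0 ω)
    -- positivity for a version `π` of `P(A = 1 | σ(U, X))`
    (π : Ω → ℝ)
    (hπver : π =ᵐ[P] P[A|MeasurableSpace.comap (fun ω => (U ω, X ω)) inferInstance])
    (hπpos : ∀ᵐ ω ∂P, 0 < π ω ∧ π ω < 1)
    -- `h t` is, for each `t`, a bounded measurable function of `(W, A, X)`
    (h : ℝ → 𝓦 × ℝ × 𝓧 → ℝ) (hh : ∀ t, Measurable (h t))
    (hhbdd : ∀ t, ∃ C, ∀ x, |h t x| ≤ C)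
    -- latent-level outcome bridge equation
    (hbridge : ∀ t : ℝ,
      (P[(fun ω => h t (W ω, A ω, X ω))|
          MeasurableSpace.comap (fun ω => (A ω, U ω, X ω)) inferInstance])
        =ᵐ[P]
      (P[(fun ω => if t < T ω then (1 : ℝ) else 0)|
          MeasurableSpace.comap (fun ω => (A ω, U ω, X ω)) inferInstance]))
    -- proxy independence: `(Z, A) ⟂ (W, T(a)) | σ(U, X)` for `a = 1, 0`
    (hproxy1 : CondIndepGiven P (MeasurableSpace.comap (fun ω => (U ω, X ω)) inferInstance)
      (fun ω => (Z ω, A ω)) (fun ω => (W ω, T1 ω)))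
    (hproxy0 : CondIndepGiven P (MeasurableSpace.comap (fun ω => (U ω, X ω)) inferInstance)
      (fun ω => (Z ω, A ω)) (fun ω => (W ω, T0 ω))) :
    ∀ a : ℝ, (a = 0 ∨ a = 1) → ∀ t : ℝ,
      ∀ qtil : 𝓩 × ℝ × 𝓧 → ℝ, Measurable qtil → (∃ C, ∀ x, |qtil x| ≤ C) →
        (P {ω | t < (if a = 1 then T1 ω else T0 ω)}).toReal
          = ∫ ω, (if A ω = a then (1 : ℝ) else 0) * qtil (Z ω, A ω, X ω) *
                ((if t < T ω then (1 : ℝ) else 0) - h t (W ω, A ω, X ω))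
              + h t (W ω, a, X ω) ∂P := by
  intro a ha t qtil hqtil hqbdd
  obtain ⟨Cq, hCq⟩ := hqbdd
  obtain ⟨Ch, hCh⟩ := hhbdd t
  -- ambient measurability facts
  have hT_meas : Measurable T := by
    have e : T = fun ω => A ω * T1 ω + (1 - A ω) * T0 ω := funext hT
    rw [e]
    exact (hA.mul hT1).add ((measurable_const.sub hA).mul hT0)
  have hTa_meas : Measurable (fun ω => if a = 1 then T1 ω else T0 ω) := by
    by_cases hc : a = 1
    · simpa [hc] using hT1
    · simpa [hc] using hT0
  have intA : Integrable A P := by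
    refine bddInt hA.aestronglyMeasurable (C := 1) fun ω => ?_
    rcases hA01 ω with h0 | h0 <;> simp [h0]
  -- consistency at level `a`
  have hcons : ∀ ω, A ω = a → T ω = (fun ω' => if a = 1 then T1 ω' else T0 ω') ω := by
    intro ω hAa
    rcases ha with rfl | rfl
    · rw [hT ω, hAa]; norm_num
    · rw [hT ω, hAa]; norm_num
  -- proxy independence at level `a`
  have hproxya : @CondIndepGiven Ω (𝓩 × ℝ) (𝓦 × ℝ) _ inferInstance inferInstance P
      (MeasurableSpace.comap (fun ω => (U ω, X ω)) inferInstance)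
      (fun ω => (Z ω, A ω)) (fun ω => (W ω, (fun ω' => if a = 1 then T1 ω' else T0 ω') ω)) := by
    by_cases hc : a = 1
    · simpa [hc] using hproxy1
    · simpa [hc] using hproxy0
  -- σ-algebra facts
  have hm_le : MeasurableSpace.comap (fun ω => (U ω, X ω)) inferInstance ≤ _ :=
    (hU.prodMk hX).comap_le
  have hn_le : MeasurableSpace.comap (fun ω => (A ω, U ω, X ω)) inferInstance ≤ _ :=
    (hA.prodMk (hU.prodMk hX)).comap_le
  have hmn : MeasurableSpace.comap (fun ω => (U ω, X ω)) inferInstance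
      ≤ MeasurableSpace.comap (fun ω => (A ω, U ω, X ω)) inferInstance := by
    have e : (fun ω => (U ω, X ω)) = (Prod.snd ∘ fun ω => (A ω, U ω, X ω)) := rfl
    rw [e, ← MeasurableSpace.comap_comp]
    exact MeasurableSpace.comap_mono measurable_snd.comap_le
  have hpairm : Measurable[MeasurableSpace.comap (fun ω => (U ω, X ω)) inferInstance]
      (fun ω => (U ω, X ω)) := Measurable.of_comap_le le_rfl
  have hXm : Measurable[MeasurableSpace.comap (fun ω => (U ω, X ω)) inferInstance] X :=
    measurable_snd.comp hpairm
  have htriplen : Measurable[MeasurableSpace.comap (fun ω => (A ω, U ω, X ω)) inferInstance]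
      (fun ω => (A ω, U ω, X ω)) := Measurable.of_comap_le le_rfl
  have hAn : Measurable[MeasurableSpace.comap (fun ω => (A ω, U ω, X ω)) inferInstance] A :=
    measurable_fst.comp htriplen
  -- positivity
  have hpos : ∀ᵐ ω ∂P, (P[(fun ω' => if A ω' = a then (1:ℝ) else 0)|
      MeasurableSpace.comap (fun ω => (U ω, X ω)) inferInstance]) ω ≠ 0 := by
    rcases ha with rfl | rfl
    · have e : (fun ω' => if A ω' = (0:ℝ) then (1:ℝ) else 0) = fun ω' => 1 - A ω' := by
        funext ω'; rcases hA01 ω' with h0 | h0 <;> simp [h0]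
      rw [e]
      have hsub : P[(fun ω' => 1 - A ω')|
            MeasurableSpace.comap (fun ω => (U ω, X ω)) inferInstance]
          =ᵐ[P] P[(fun _ : Ω => (1:ℝ))|
            MeasurableSpace.comap (fun ω => (U ω, X ω)) inferInstance]
            - P[A|MeasurableSpace.comap (fun ω => (U ω, X ω)) inferInstance] :=
        condExp_sub (integrable_const 1) intA _
      have hone : P[(fun _ : Ω => (1:ℝ))|
          MeasurableSpace.comap (fun ω => (U ω, X ω)) inferInstance] = fun _ => 1 :=
        condExp_const hm_le 1
      filter_upwards [hsub, hπver, hπpos] with ω e1 e2 e3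
      rw [e1]
      simp only [Pi.sub_apply, hone, ← e2]
      exact sub_ne_zero.mpr (ne_of_gt e3.2).symm.symm
    · have e : (fun ω' => if A ω' = (1:ℝ) then (1:ℝ) else 0) = A := by
        funext ω'; rcases hA01 ω' with h0 | h0 <;> simp [h0]
      rw [e]
      filter_upwards [hπver, hπpos] with ω e2 e3
      rw [← e2]
      exact ne_of_gt e3.1
  exact main_aux P A (fun ω => if a = 1 then T1 ω else T0 ω) T X Z W hA hTa_meas hT_meas
    hX hZ hW a t hcons h (hh t) Ch hCh qtil hqtil Cq hCq
    (MeasurableSpace.comap (fun ω => (U ω, X ω)) inferInstance)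
    (MeasurableSpace.comap (fun ω => (A ω, U ω, X ω)) inferInstance)
    hm_le hn_le hmn hXm hAn (hbridge t) hproxya hpos
end

section
/- Suppose q satisfies the observed-level treatment bridge equation E[q(Z,A,X) | σ(A,W,X)] = 1/P(A|σ(W,X)) a.s. Then for every bounded measurable function n of (W,A,X), E[ q(Z,A,X)·n(W,A,X) ] = E[ n(W,1,X) + n(W,0,X) ]. (Population moment restriction underlying the estimating equation for the treatment confounding bridge function.) -/
open MeasureTheory ProbabilityTheory

/-- **Population moment restriction underlying the estimating equation for the treatment
confounding bridge function.** If `q` solves the observed-level treatment bridge equation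
`E[q(Z,A,X) | σ(A,W,X)] = 1/P(A|σ(W,X))` a.s., then for every bounded measurable function
`n` of `(W,A,X)`, `E[ q(Z,A,X) ⬝ n(W,A,X) ] = E[ n(W,1,X) + n(W,0,X) ]`. -/
theorem treatment_bridge_moment_restriction
    {Ω 𝓧 𝓩 𝓦 : Type*} [MeasurableSpace Ω]
    [MeasurableSpace 𝓧] [StandardBorelSpace 𝓧]
    [MeasurableSpace 𝓩] [StandardBorelSpace 𝓩] [MeasurableSpace 𝓦] [StandardBorelSpace 𝓦]
    (P : Measure Ω) [IsProbabilityMeasure P]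
    -- the random variables
    (A : Ω → ℝ) (X : Ω → 𝓧) (Z : Ω → 𝓩) (W : Ω → 𝓦)
    (hA : Measurable A) (hX : Measurable X) (hZ : Measurable Z) (hW : Measurable W)
    (hA01 : ∀ ω, A ω = 0 ∨ A ω = 1)
    -- positivity for a version `πW` of `P(A = 1 | σ(W, X))`
    (πW : Ω → ℝ)
    (hπWver : πW =ᵐ[P] P[A|MeasurableSpace.comap (fun ω => (W ω, X ω)) inferInstance])
    (hπWpos : ∀ᵐ ω ∂P, 0 < πW ω ∧ πW ω < 1)
    -- `q` is a bounded measurable function of `(Z, A, X)`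
    (q : 𝓩 × ℝ × 𝓧 → ℝ) (hq : Measurable q) (hqbdd : ∃ C, ∀ x, |q x| ≤ C)
    -- observed-level treatment bridge equation
    (hbridge : (P[(fun ω => q (Z ω, A ω, X ω))|
        MeasurableSpace.comap (fun ω => (A ω, W ω, X ω)) inferInstance])
      =ᵐ[P] fun ω => (A ω * πW ω + (1 - A ω) * (1 - πW ω))⁻¹) :
    ∀ n : 𝓦 × ℝ × 𝓧 → ℝ, Measurable n → (∃ C, ∀ x, |n x| ≤ C) →
      ∫ ω, q (Z ω, A ω, X ω) * n (W ω, A ω, X ω) ∂P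
        = ∫ ω, n (W ω, 1, X ω) + n (W ω, 0, X ω) ∂P := by
  intro n hn hnbdd
  letI mΩ : MeasurableSpace Ω := ‹_›
  obtain ⟨Cq, hCq⟩ := hqbdd
  obtain ⟨Cn, hCn⟩ := hnbdd
  set m' : MeasurableSpace Ω :=
    MeasurableSpace.comap (fun ω => (W ω, X ω)) inferInstance with hm'def
  set 𝒢 : MeasurableSpace Ω :=
    MeasurableSpace.comap (fun ω => (A ω, W ω, X ω)) inferInstance with h𝒢def
  have hm'le : m' ≤ mΩ := (hW.prodMk hX).comap_le
  have h𝒢le : 𝒢 ≤ mΩ := (hA.prodMk (hW.prodMk hX)).comap_le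
  have hWXmeas : Measurable[m'] (fun ω => (W ω, X ω)) := Measurable.of_comap_le le_rfl
  have hAWXmeas : Measurable[𝒢] (fun ω => (A ω, W ω, X ω)) := Measurable.of_comap_le le_rfl
  set qv : Ω → ℝ := fun ω => q (Z ω, A ω, X ω) with hqvdef
  set nv : Ω → ℝ := fun ω => n (W ω, A ω, X ω) with hnvdef
  set n1 : Ω → ℝ := fun ω => n (W ω, 1, X ω) with hn1def
  set n0 : Ω → ℝ := fun ω => n (W ω, 0, X ω) with hn0def
  set g : Ω → ℝ := P[A|m'] with hgdef
  set den : Ω → ℝ := fun ω => A ω * πW ω + (1 - A ω) * (1 - πW ω) with hdendef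
  have hAbd : ∀ ω, |A ω| ≤ 1 := by
    intro ω; rcases hA01 ω with h | h <;> simp [h]
  -- measurability facts
  have hqvm : Measurable[mΩ] qv := hq.comp (hZ.prodMk (hA.prodMk hX))
  have hnvm : Measurable[mΩ] nv := hn.comp (hW.prodMk (hA.prodMk hX))
  have hn1m : Measurable[mΩ] n1 := hn.comp (hW.prodMk (measurable_const.prodMk hX))
  have hn0m : Measurable[mΩ] n0 := hn.comp (hW.prodMk (measurable_const.prodMk hX))
  have hnv𝒢 : Measurable[𝒢] nv := by
    have hswap : Measurable (fun p : ℝ × 𝓦 × 𝓧 => (p.2.1, p.1, p.2.2)) :=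
      (measurable_snd.fst).prodMk ((measurable_fst).prodMk measurable_snd.snd)
    exact (hn.comp hswap).comp hAWXmeas
  have hn1m' : Measurable[m'] n1 :=
    (hn.comp ((measurable_fst).prodMk (measurable_const.prodMk measurable_snd))).comp hWXmeas
  have hn0m' : Measurable[m'] n0 :=
    (hn.comp ((measurable_fst).prodMk (measurable_const.prodMk measurable_snd))).comp hWXmeas
  -- integrability of bounded measurable functions
  have intOfBdd : ∀ (f : Ω → ℝ), Measurable[mΩ] f → (∀ ω, |f ω| ≤ max Cq (max Cn 1)) →
      Integrable f P := by
    intro f hf hb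
    refine ⟨hf.aestronglyMeasurable, HasFiniteIntegral.of_bounded (C := max Cq (max Cn 1)) ?_⟩
    exact ae_of_all _ fun ω => by simpa using hb ω
  have hCq' : ∀ ω, |qv ω| ≤ max Cq (max Cn 1) := fun ω =>
    (hCq _).trans (le_max_left _ _)
  have hCn' : ∀ x, |n x| ≤ max Cq (max Cn 1) := fun x =>
    (hCn x).trans ((le_max_left _ _).trans (le_max_right _ _))
  have hqvint : Integrable qv P := intOfBdd qv hqvm hCq'
  have hnvint : Integrable nv P := intOfBdd nv hnvm fun ω => hCn' _
  have hn1int : Integrable n1 P := intOfBdd n1 hn1m fun ω => hCn' _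
  have hn0int : Integrable n0 P := intOfBdd n0 hn0m fun ω => hCn' _
  have hAint : Integrable A P := intOfBdd A hA fun ω => (hAbd ω).trans (le_max_of_le_right (le_max_right _ _))
  have hnvqvint : Integrable (fun ω => nv ω * qv ω) P :=
    hqvint.bdd_mul (c := Cn) hnvm.aestronglyMeasurable (ae_of_all _ fun ω => by simpa using hCn _)
  -- Step A : ∫ qv * nv = ∫ nv * den⁻¹
  set F : Ω → ℝ := fun ω => nv ω * (den ω)⁻¹ with hFdef
  have hFcond : F =ᵐ[P] fun ω => nv ω * (P[qv|𝒢]) ω := by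
    filter_upwards [hbridge] with ω hω
    simp only [hFdef, hω, hdendef]
  have hFint : Integrable F P :=
    ((integrable_condExp (m := 𝒢)).bdd_mul hnvm.aestronglyMeasurable
      (c := Cn) (ae_of_all _ fun ω => by simpa using hCn _)).congr hFcond.symm
  have stepA : ∫ ω, qv ω * nv ω ∂P = ∫ ω, F ω ∂P := by
    have h1 : ∫ ω, qv ω * nv ω ∂P = ∫ ω, nv ω * qv ω ∂P := by
      simp_rw [mul_comm]
    have h2 : ∫ ω, nv ω * qv ω ∂P = ∫ ω, (P[fun ω => nv ω * qv ω|𝒢]) ω ∂P :=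
      (integral_condExp h𝒢le).symm
    have h3 : (P[fun ω => nv ω * qv ω|𝒢]) =ᵐ[P] fun ω => nv ω * (P[qv|𝒢]) ω := by
      have := condExp_mul_of_stronglyMeasurable_left (μ := P) (m := 𝒢)
        hnv𝒢.stronglyMeasurable hnvqvint hqvint
      exact this
    rw [h1, h2, integral_congr_ae (h3.trans hFcond.symm)]
  -- Step B : decompose F a.e.
  set G1 : Ω → ℝ := fun ω => (n1 ω * (g ω)⁻¹) * A ω with hG1def
  set G0 : Ω → ℝ := fun ω => (n0 ω * (1 - g ω)⁻¹) * (1 - A ω) with hG0def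
  have hdecomp : F =ᵐ[P] fun ω => G1 ω + G0 ω := by
    filter_upwards [hπWver, hπWpos] with ω hgω hpos
    rcases hA01 ω with h | h <;>
      simp only [hFdef, hG1def, hG0def, hdendef, hnvdef, hn1def, hn0def, h, ← hgω] <;>
      ring_nf <;> simp [h]
  have hG1F : G1 =ᵐ[P] fun ω => A ω * F ω := by
    filter_upwards [hπWver, hπWpos] with ω hgω hpos
    rcases hA01 ω with h | h <;>
      simp only [hG1def, hFdef, hdendef, hnvdef, hn1def, h, ← hgω] <;> ring_nf <;> simp [h]
  have hG0F : G0 =ᵐ[P] fun ω => (1 - A ω) * F ω := by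
    filter_upwards [hπWver, hπWpos] with ω hgω hpos
    rcases hA01 ω with h | h <;>
      simp only [hG0def, hFdef, hdendef, hnvdef, hn0def, h, ← hgω] <;> ring_nf <;> simp [h]
  have hG1int : Integrable G1 P :=
    (hFint.bdd_mul hA.aestronglyMeasurable (c := 1) (ae_of_all _ fun ω => by simpa using hAbd ω)).congr hG1F.symm
  have hG0int : Integrable G0 P :=
    (hFint.bdd_mul (measurable_const.sub hA).aestronglyMeasurable
      (c := 2) (ae_of_all _ fun ω => by
        rcases hA01 ω with h | h <;> simp [h] <;> norm_num)).congr hG0F.symm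
  -- Step C : ∫ G1 = ∫ n1, ∫ G0 = ∫ n0
  have hgposae : ∀ᵐ ω ∂P, 0 < g ω ∧ g ω < 1 := by
    filter_upwards [hπWver, hπWpos] with ω hgω hpos
    rw [← hgω]; exact hpos
  have hgm' : StronglyMeasurable[m'] g := stronglyMeasurable_condExp
  have hfac1 : StronglyMeasurable[m'] (fun ω => n1 ω * (g ω)⁻¹) :=
    (hn1m'.mul hgm'.measurable.inv).stronglyMeasurable
  have hfac0 : StronglyMeasurable[m'] (fun ω => n0 ω * (1 - g ω)⁻¹) :=
    (hn0m'.mul ((measurable_const.sub hgm'.measurable).inv)).stronglyMeasurable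
  have hintG1 : ∫ ω, G1 ω ∂P = ∫ ω, n1 ω ∂P := by
    have hpull : P[G1|m'] =ᵐ[P] fun ω => (n1 ω * (g ω)⁻¹) * g ω := by
      have := condExp_mul_of_stronglyMeasurable_left (μ := P) (m := m') hfac1 hG1int hAint
      exact this
    have heq : (fun ω => (n1 ω * (g ω)⁻¹) * g ω) =ᵐ[P] n1 := by
      filter_upwards [hgposae] with ω hpos
      exact inv_mul_cancel_right₀ (ne_of_gt hpos.1) _
    rw [← integral_condExp hm'le (f := G1), integral_congr_ae (hpull.trans heq)]
  have hintG0 : ∫ ω, G0 ω ∂P = ∫ ω, n0 ω ∂P := by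
    have h1Aint : Integrable (fun ω => (1 : ℝ) - A ω) P := (integrable_const 1).sub hAint
    have hc : P[fun ω => (1 : ℝ) - A ω|m'] =ᵐ[P] fun ω => 1 - g ω := by
      have h := condExp_sub (μ := P) (m := m') (integrable_const (1:ℝ)) hAint
      have h2 : P[fun _ => (1:ℝ)|m'] = fun _ => (1:ℝ) := condExp_const hm'le 1
      filter_upwards [h] with ω hω
      rw [show ((fun _ => (1:ℝ)) - A) = fun ω => 1 - A ω from rfl] at hω
      simpa [h2, hgdef] using hω
    have hpull : P[G0|m'] =ᵐ[P] fun ω => (n0 ω * (1 - g ω)⁻¹) * (1 - g ω) := by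
      have h := condExp_mul_of_stronglyMeasurable_left (μ := P) (m := m') hfac0 hG0int h1Aint
      refine h.trans ?_
      filter_upwards [hc] with ω h2
      simp only [Pi.mul_apply]
      rw [h2]
    have heq : (fun ω => (n0 ω * (1 - g ω)⁻¹) * (1 - g ω)) =ᵐ[P] n0 := by
      filter_upwards [hgposae] with ω hpos
      have hne : 1 - g ω ≠ 0 := by linarith [hpos.2]
      exact inv_mul_cancel_right₀ hne _
    rw [← integral_condExp hm'le (f := G0), integral_congr_ae (hpull.trans heq)]
  -- conclude
  calc ∫ ω, qv ω * nv ω ∂P = ∫ ω, F ω ∂P := stepA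
    _ = ∫ ω, G1 ω + G0 ω ∂P := integral_congr_ae hdecomp
    _ = ∫ ω, G1 ω ∂P + ∫ ω, G0 ω ∂P := integral_add hG1int hG0int
    _ = ∫ ω, n1 ω ∂P + ∫ ω, n0 ω ∂P := by rw [hintG1, hintG0]
    _ = ∫ ω, n1 ω + n0 ω ∂P := (integral_add hn1int hn0int).symm
end
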